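/- arXiv:2508.21780 — 5 statements merged into one kernel-verified Lean document; each statement's English description precedes it below -/
import Mathlib

section
/- Let f : [0,∞) → [0,∞) be nondecreasing, right-continuous, and regularly varying at ∞ of index α > 0. Then for every integer j ≥ 1, the j-fold Lebesgue–Stieltjes convolution f^{*(j)} is regularly varying at ∞ of index αj. -/
open MeasureTheory Set Filter Topology

/-- Convolution of two (Borel) measures on `ℝ`. -/
noncomputable def mconv (μ ν : MeasureTheory.Measure ℝ) : MeasureTheory.Measure ℝ :=
  MeasureTheory.Measure.map (fun p : ℝ × ℝ => p.1 + p.2) (μ.prod ν)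

/-- `j`-fold convolution power of a measure on `ℝ`. -/
noncomputable def mconvPow (μ : MeasureTheory.Measure ℝ) : ℕ → MeasureTheory.Measure ℝ
  | 0 => MeasureTheory.Measure.dirac 0
  | 1 => μ
  | n + 2 => mconv μ (mconvPow μ (n + 1))

/-- The `j`-fold Lebesgue–Stieltjes convolution of the nondecreasing right-continuous
function `f` (vanishing at `0⁻`) represented by the measure `μ`, i.e. `f t = μ (Iic t)`. -/
noncomputable def convFun (μ : MeasureTheory.Measure ℝ) (j : ℕ) (t : ℝ) : ℝ :=
  ((mconvPow μ j) (Set.Iic t)).toReal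

/-! ### Auxiliary lemmas -/

set_option linter.unusedSectionVars false

lemma sigmaFinite_of_fin (μ : Measure ℝ) (hfin : ∀ t : ℝ, μ (Set.Iic t) < ⊤) :
    SigmaFinite μ := by
  refine ⟨⟨⟨fun n => Iic (n : ℝ), fun _ => trivial, fun n => hfin n, ?_⟩⟩⟩
  refine eq_univ_of_forall fun x => ?_
  exact mem_iUnion.2 ⟨⌈x⌉₊, Nat.le_ceil x⟩

section MeasureBounds
variable (μ ν : Measure ℝ) [SigmaFinite μ] [SigmaFinite ν]

lemma mconv_apply (t : ℝ) :
    mconv μ ν (Iic t) = (μ.prod ν) {p : ℝ × ℝ | p.1 + p.2 ≤ t} := by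
  rw [mconv, Measure.map_apply (f := fun p : ℝ × ℝ => p.1 + p.2) (measurable_fst.add measurable_snd) measurableSet_Iic]
  rfl

lemma prod_bad (hμ0 : μ (Iio 0) = 0) (hν0 : ν (Iio 0) = 0) :
    (μ.prod ν) ((Iio 0 ×ˢ (univ : Set ℝ)) ∪ ((univ : Set ℝ) ×ˢ Iio 0)) = 0 := by
  refine le_antisymm ?_ zero_le
  refine le_trans (measure_union_le _ _) ?_
  rw [Measure.prod_prod, Measure.prod_prod, hμ0, hν0, zero_mul, mul_zero, add_zero]

lemma mconv_fin (hμ0 : μ (Iio 0) = 0) (hν0 : ν (Iio 0) = 0) (t : ℝ) :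
    mconv μ ν (Iic t) ≤ μ (Iic (max t 0)) * ν (Iic (max t 0)) := by
  rw [mconv_apply]
  have hsub : {p : ℝ × ℝ | p.1 + p.2 ≤ t} ⊆
      ((Iio 0 ×ˢ (univ : Set ℝ)) ∪ ((univ : Set ℝ) ×ˢ Iio 0)) ∪
        (Iic (max t 0) ×ˢ Iic (max t 0)) := by
    rintro ⟨x, y⟩ h
    simp only [mem_setOf_eq] at h
    by_cases hx : x < 0
    · exact Or.inl (Or.inl ⟨hx, trivial⟩)
    by_cases hy : y < 0
    · exact Or.inl (Or.inr ⟨trivial, hy⟩)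
    push_neg at hx hy
    refine Or.inr ⟨?_, ?_⟩ <;> simp only [mem_Iic, le_max_iff] <;> exact Or.inl (by linarith)
  calc (μ.prod ν) {p : ℝ × ℝ | p.1 + p.2 ≤ t} ≤ _ := measure_mono hsub
    _ ≤ _ + _ := measure_union_le _ _
    _ = μ (Iic (max t 0)) * ν (Iic (max t 0)) := by
        rw [prod_bad μ ν hμ0 hν0, zero_add, Measure.prod_prod]

lemma mconv_supp (hμ0 : μ (Iio 0) = 0) (hν0 : ν (Iio 0) = 0) :
    mconv μ ν (Iio 0) = 0 := by
  rw [mconv, Measure.map_apply (f := fun p : ℝ × ℝ => p.1 + p.2) (measurable_fst.add measurable_snd) measurableSet_Iio]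
  refine le_antisymm (le_trans (measure_mono ?_) (le_of_eq (prod_bad μ ν hμ0 hν0))) zero_le
  rintro ⟨x, y⟩ h
  simp only [mem_preimage, mem_Iio] at h
  by_cases hx : x < 0
  · exact Or.inl ⟨hx, trivial⟩
  · exact Or.inr ⟨trivial, by push_neg at hx; simp only [mem_Iio]; linarith⟩

lemma key_lower (t : ℝ) (ht : 0 < t) (n : ℕ) (hn : 0 < n) :
    ∑ i ∈ Finset.range n,
        μ (Iic (t * (1 - ((i:ℝ) + 1) / n))) * ν (Ioc (t * ((i:ℝ) / n)) (t * (((i:ℝ) + 1) / n)))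
      ≤ (μ.prod ν) {p : ℝ × ℝ | p.1 + p.2 ≤ t} := by
  set S : ℕ → Set (ℝ × ℝ) := fun i =>
    Iic (t * (1 - ((i:ℝ) + 1) / n)) ×ˢ Ioc (t * ((i:ℝ) / n)) (t * (((i:ℝ) + 1) / n)) with hS
  have hmeas : ∀ i ∈ Finset.range n, MeasurableSet (S i) :=
    fun i _ => measurableSet_Iic.prod measurableSet_Ioc
  have hdisj : (↑(Finset.range n) : Set ℕ).PairwiseDisjoint S := by
    intro i hi j hj hij
    wlog hlt : i < j generalizing i j
    · exact (this hj hi hij.symm (by omega)).symm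
    refine Set.disjoint_left.2 ?_
    rintro ⟨x, y⟩ ⟨-, hy1⟩ ⟨-, hy2⟩
    have h1 : y ≤ t * (((i:ℝ) + 1) / n) := hy1.2
    have h2 : t * ((j:ℝ) / n) < y := hy2.1
    have hij' : ((i:ℝ) + 1) ≤ (j:ℝ) := by exact_mod_cast hlt
    have hn' : (0:ℝ) < n := by exact_mod_cast hn
    have : t * (((i:ℝ) + 1) / n) ≤ t * ((j:ℝ) / n) :=
      mul_le_mul_of_nonneg_left ((div_le_div_iff_of_pos_right hn').mpr (by linarith)) ht.le
    linarith
  have hsub : (⋃ i ∈ Finset.range n, S i) ⊆ {p : ℝ × ℝ | p.1 + p.2 ≤ t} := by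
    intro p hp
    simp only [mem_iUnion, Finset.mem_range] at hp
    obtain ⟨i, hi, hx, hy⟩ := hp
    simp only [mem_Iic] at hx
    have hy2 : p.2 ≤ t * (((i:ℝ) + 1) / n) := hy.2
    simp only [mem_setOf_eq]
    have : t * (1 - ((i:ℝ) + 1) / n) + t * (((i:ℝ) + 1) / n) = t := by ring
    linarith
  calc ∑ i ∈ Finset.range n,
        μ (Iic (t * (1 - ((i:ℝ) + 1) / n))) * ν (Ioc (t * ((i:ℝ) / n)) (t * (((i:ℝ) + 1) / n)))
      = ∑ i ∈ Finset.range n, (μ.prod ν) (S i) := by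
        refine Finset.sum_congr rfl fun i _ => ?_
        rw [hS, Measure.prod_prod]
    _ = (μ.prod ν) (⋃ i ∈ Finset.range n, S i) :=
        (measure_biUnion_finset hdisj hmeas).symm
    _ ≤ _ := measure_mono hsub

lemma key_upper (hμ0 : μ (Iio 0) = 0) (hν0 : ν (Iio 0) = 0)
    (t : ℝ) (ht : 0 < t) (n : ℕ) (hn : 0 < n) :
    (μ.prod ν) {p : ℝ × ℝ | p.1 + p.2 ≤ t} ≤
      μ (Iic t) * ν (Iic 0) + ∑ i ∈ Finset.range n,
        μ (Iic (t * (1 - (i:ℝ) / n))) * ν (Ioc (t * ((i:ℝ) / n)) (t * (((i:ℝ) + 1) / n))) := by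
  have hn' : (0:ℝ) < n := by exact_mod_cast hn
  set S : ℕ → Set (ℝ × ℝ) := fun i =>
    Iic (t * (1 - (i:ℝ) / n)) ×ˢ Ioc (t * ((i:ℝ) / n)) (t * (((i:ℝ) + 1) / n)) with hS
  have hsub : {p : ℝ × ℝ | p.1 + p.2 ≤ t} ⊆
      ((Iio 0 ×ˢ (univ : Set ℝ)) ∪ ((univ : Set ℝ) ×ˢ Iio 0)) ∪
        ((Iic t ×ˢ Iic 0) ∪ ⋃ i ∈ Finset.range n, S i) := by
    rintro ⟨x, y⟩ h
    simp only [mem_setOf_eq] at h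
    by_cases hx : x < 0
    · exact Or.inl (Or.inl ⟨hx, trivial⟩)
    by_cases hy' : y < 0
    · exact Or.inl (Or.inr ⟨trivial, hy'⟩)
    push_neg at hx hy'
    by_cases hy0 : y ≤ 0
    · exact Or.inr (Or.inl ⟨by simpa using (by linarith : x ≤ t), by simpa using hy0⟩)
    push_neg at hy0
    set m : ℕ := ⌈y * n / t⌉₊ with hm
    have hxpos : 0 < y * n / t := by positivity
    have hm1 : 1 ≤ m := by
      rw [hm]
      exact Nat.one_le_ceil_iff.2 hxpos
    have hyle : y * n / t ≤ m := Nat.le_ceil _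
    have hmlt : ((m : ℝ) - 1) < y * n / t := by
      have h1 : (m - 1 : ℕ) < m := by omega
      have h2 := (Nat.lt_ceil.1 (by rw [← hm]; exact h1))
      calc ((m:ℝ) - 1) = ((m - 1 : ℕ) : ℝ) := by
            push_cast [Nat.cast_sub hm1]; ring
        _ < y * n / t := h2
    have hmn : m ≤ n := by
      rw [hm]
      refine Nat.ceil_le.2 ?_
      rw [div_le_iff₀ ht]
      have : y ≤ t := by linarith
      calc y * n ≤ t * n := by nlinarith
        _ = (n:ℝ) * t := by ring
    refine Or.inr (Or.inr ?_)
    refine mem_iUnion.2 ⟨m - 1, mem_iUnion.2 ⟨Finset.mem_range.2 (by omega), ?_⟩⟩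
    have hcast : ((m - 1 : ℕ) : ℝ) = (m : ℝ) - 1 := by push_cast [Nat.cast_sub hm1]; ring
    have h1 : ((m:ℝ) - 1) * t < y * n := (lt_div_iff₀ ht).1 hmlt
    have h2 : y * n ≤ (m:ℝ) * t := (div_le_iff₀ ht).1 hyle
    have hylb : t * (((m - 1 : ℕ) : ℝ) / n) < y := by
      rw [hcast, mul_div_assoc', div_lt_iff₀ hn']
      nlinarith
    have hyub : y ≤ t * ((((m - 1 : ℕ) : ℝ) + 1) / n) := by
      rw [hcast, show ((m:ℝ) - 1 + 1) = (m:ℝ) by ring, mul_div_assoc', le_div_iff₀ hn']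
      nlinarith
    constructor
    · simp only [mem_Iic]
      have hxt : t * (((m - 1 : ℕ) : ℝ) / n) + x < t := by
        have : x ≤ t - y := by linarith
        linarith
      nlinarith [hxt]
    · exact ⟨hylb, hyub⟩
  calc (μ.prod ν) {p : ℝ × ℝ | p.1 + p.2 ≤ t} ≤ _ := measure_mono hsub
    _ ≤ (μ.prod ν) ((Iio 0 ×ˢ (univ : Set ℝ)) ∪ ((univ : Set ℝ) ×ˢ Iio 0)) +
        (μ.prod ν) ((Iic t ×ˢ Iic 0) ∪ ⋃ i ∈ Finset.range n, S i) := measure_union_le _ _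
    _ ≤ 0 + ((μ.prod ν) (Iic t ×ˢ Iic 0) + (μ.prod ν) (⋃ i ∈ Finset.range n, S i)) := by
        gcongr
        · exact le_of_eq (prod_bad μ ν hμ0 hν0)
        · exact measure_union_le _ _
    _ ≤ _ := by
        rw [zero_add, Measure.prod_prod]
        gcongr
        refine le_trans (measure_biUnion_finset_le _ _) ?_
        refine Finset.sum_le_sum fun i _ => ?_
        rw [hS, Measure.prod_prod]

end MeasureBounds

lemma rv_atTop {F : ℝ → ℝ} {α : ℝ} (hmono : Monotone F) (hnn : ∀ t, 0 ≤ F t) (hα : 0 < α)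
    (hreg : ∀ lam : ℝ, 0 < lam → Tendsto (fun t => F (lam * t) / F t) atTop (𝓝 (lam ^ α))) :
    Tendsto F atTop atTop := by
  have hne : ∃ t, 0 < F t := by
    by_contra hz
    push_neg at hz
    have hz' : ∀ t, F t = 0 := fun t => le_antisymm (hz t) (hnn t)
    have h1 : Tendsto (fun t : ℝ => F (1 * t) / F t) atTop (𝓝 ((1:ℝ) ^ α)) := hreg 1 one_pos
    have h2 : (fun t : ℝ => F (1 * t) / F t) = fun _ => (0:ℝ) := by
      funext t; simp [hz']
    rw [h2, Real.one_rpow] at h1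
    exact zero_ne_one (tendsto_nhds_unique tendsto_const_nhds h1)
  obtain ⟨t0, ht0⟩ := hne
  have h2α : (1:ℝ) < 2 ^ α := by
    have h : (2:ℝ) ^ (0:ℝ) < 2 ^ α := (Real.rpow_lt_rpow_left_iff one_lt_two).2 hα
    simpa [Real.rpow_zero] using h
  set q : ℝ := (1 + 2 ^ α) / 2 with hqdef
  have hq1 : 1 < q := by rw [hqdef]; linarith
  have hq2 : q < 2 ^ α := by rw [hqdef]; linarith
  have hev : ∀ᶠ t : ℝ in atTop, q < F (2 * t) / F t :=
    (hreg 2 two_pos).eventually (eventually_gt_nhds hq2)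
  obtain ⟨T, hT⟩ := eventually_atTop.1 hev
  set t1 : ℝ := max t0 (max T 1) with ht1def
  have ht1pos : (0:ℝ) < t1 := lt_of_lt_of_le one_pos (le_max_of_le_right (le_max_right _ _))
  have hFt1 : 0 < F t1 := lt_of_lt_of_le ht0 (hmono (le_max_left _ _))
  have ht1T : T ≤ t1 := le_max_of_le_right (le_max_left _ _)
  have key : ∀ k : ℕ, q ^ k * F t1 ≤ F (2 ^ k * t1) := by
    intro k
    induction k with
    | zero => simp
    | succ k ih =>
      have hs : t1 ≤ 2 ^ k * t1 := by
        nlinarith [(one_le_pow₀ (one_le_two) : (1:ℝ) ≤ 2 ^ k), ht1pos.le]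
      have hFs : 0 < F (2 ^ k * t1) := lt_of_lt_of_le hFt1 (hmono hs)
      have hq := hT (2 ^ k * t1) (le_trans ht1T hs)
      have hlt : q * F (2 ^ k * t1) < F (2 * (2 ^ k * t1)) := by
        rw [lt_div_iff₀ hFs] at hq; linarith
      have h2 : (2:ℝ) * (2 ^ k * t1) = 2 ^ (k + 1) * t1 := by ring
      rw [h2] at hlt
      calc q ^ (k + 1) * F t1 = q * (q ^ k * F t1) := by ring
        _ ≤ q * F (2 ^ k * t1) := by nlinarith [hq1]
        _ ≤ F (2 ^ (k + 1) * t1) := hlt.le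
  apply tendsto_atTop_atTop_of_monotone hmono
  intro b
  have hqinf : Tendsto (fun k : ℕ => q ^ k * F t1) atTop atTop :=
    (tendsto_pow_atTop_atTop_of_one_lt hq1).atTop_mul_const hFt1
  obtain ⟨k, hk⟩ := (hqinf.eventually_ge_atTop b).exists
  exact ⟨2 ^ k * t1, le_trans hk (key k)⟩

lemma rv_scale {F : ℝ → ℝ} {α : ℝ} (htop : Tendsto F atTop atTop) (hα : 0 < α)
    (hreg : ∀ lam : ℝ, 0 < lam → Tendsto (fun t => F (lam * t) / F t) atTop (𝓝 (lam ^ α))) :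
    ∀ s : ℝ, 0 ≤ s → Tendsto (fun t => F (t * s) / F t) atTop (𝓝 (s ^ α)) := by
  intro s hs
  rcases hs.lt_or_eq with h | h
  · exact (hreg s h).congr fun t => by rw [mul_comm]
  · subst h
    rw [Real.zero_rpow hα.ne']
    have := Tendsto.div_atTop (tendsto_const_nhds (x := F 0)) htop
    refine this.congr fun t => by rw [mul_zero]

lemma conv_ratio (α β : ℝ) (hα : 0 < α) (hβ : 0 < β) (F G H : ℝ → ℝ)
    (hHnn : ∀ t, 0 ≤ H t)
    (hFtop : Tendsto F atTop atTop) (hGtop : Tendsto G atTop atTop)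
    (hFs : ∀ s : ℝ, 0 ≤ s → Tendsto (fun t => F (t * s) / F t) atTop (𝓝 (s ^ α)))
    (hGs : ∀ s : ℝ, 0 ≤ s → Tendsto (fun t => G (t * s) / G t) atTop (𝓝 (s ^ β)))
    (hup : ∀ t : ℝ, 0 < t → ∀ n : ℕ, 0 < n → H t ≤ F t * G 0 +
      ∑ i ∈ Finset.range n, F (t * (1 - (i:ℝ)/n)) * (G (t * (((i:ℝ)+1)/n)) - G (t * ((i:ℝ)/n))))
    (hlo : ∀ t : ℝ, 0 < t → ∀ n : ℕ, 0 < n →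
      ∑ i ∈ Finset.range n, F (t * (1 - ((i:ℝ)+1)/n)) * (G (t * (((i:ℝ)+1)/n)) - G (t * ((i:ℝ)/n)))
        ≤ H t) :
    ∃ c : ℝ, 0 < c ∧ Tendsto (fun t => H t / (F t * G t)) atTop (𝓝 c) := by
  set r : ℝ → ℝ := fun t => H t / (F t * G t) with hr
  set cL : ℕ → ℝ := fun n => ∑ i ∈ Finset.range n,
    (1 - ((i:ℝ)+1)/n) ^ α * ((((i:ℝ)+1)/n) ^ β - ((i:ℝ)/n) ^ β) with hcL
  set cU : ℕ → ℝ := fun n => ∑ i ∈ Finset.range n,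
    (1 - (i:ℝ)/n) ^ α * ((((i:ℝ)+1)/n) ^ β - ((i:ℝ)/n) ^ β) with hcU
  have hFpos : ∀ᶠ t : ℝ in atTop, 0 < F t := hFtop.eventually_gt_atTop 0
  have hGpos : ∀ᶠ t : ℝ in atTop, 0 < G t := hGtop.eventually_gt_atTop 0
  have hAux : ∀ n : ℕ, 0 < n → ∀ i, i ∈ Finset.range n →
      (0:ℝ) ≤ (i:ℝ)/n ∧ (0:ℝ) ≤ ((i:ℝ)+1)/n ∧ (0:ℝ) ≤ 1 - (i:ℝ)/n ∧ (0:ℝ) ≤ 1 - ((i:ℝ)+1)/n := by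
    intro n hn i hi
    have hi' : (i:ℝ) + 1 ≤ n := by exact_mod_cast Finset.mem_range.1 hi
    have hn' : (0:ℝ) < n := by exact_mod_cast hn
    have h1 : ((i:ℝ)+1)/n ≤ 1 := by rw [div_le_one hn']; linarith
    have h2 : (i:ℝ)/n ≤ 1 := by rw [div_le_one hn']; linarith
    exact ⟨by positivity, by positivity, by linarith, by linarith⟩
  -- Tendsto of the upper ratio sum
  have hU : ∀ n : ℕ, 0 < n → Tendsto (fun t => (F t * G 0 +
      ∑ i ∈ Finset.range n, F (t * (1 - (i:ℝ)/n)) * (G (t * (((i:ℝ)+1)/n)) - G (t * ((i:ℝ)/n))))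
        / (F t * G t)) atTop (𝓝 (cU n)) := by
    intro n hn
    have heq : (fun t : ℝ => G 0 / G t + ∑ i ∈ Finset.range n,
          (F (t * (1 - (i:ℝ)/n)) / F t) * ((G (t * (((i:ℝ)+1)/n)) / G t) - (G (t * ((i:ℝ)/n)) / G t)))
        =ᶠ[atTop] (fun t => (F t * G 0 +
          ∑ i ∈ Finset.range n, F (t * (1 - (i:ℝ)/n)) * (G (t * (((i:ℝ)+1)/n)) - G (t * ((i:ℝ)/n))))
            / (F t * G t)) := by
      filter_upwards [hFpos, hGpos] with t hF hG
      rw [add_div, Finset.sum_div]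
      congr 1
      · rw [mul_div_mul_left _ _ hF.ne']
      · refine Finset.sum_congr rfl fun i _ => ?_
        rw [div_sub_div_same, div_mul_div_comm]
    have hlim : Tendsto (fun t : ℝ => G 0 / G t + ∑ i ∈ Finset.range n,
          (F (t * (1 - (i:ℝ)/n)) / F t) * ((G (t * (((i:ℝ)+1)/n)) / G t) - (G (t * ((i:ℝ)/n)) / G t)))
        atTop (𝓝 (0 + cU n)) := by
      refine Tendsto.add (Tendsto.div_atTop tendsto_const_nhds hGtop) ?_
      rw [hcU]
      refine tendsto_finset_sum _ fun i hi => ?_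
      obtain ⟨h1, h2, h3, h4⟩ := hAux n hn i hi
      exact (hFs _ h3).mul ((hGs _ h2).sub (hGs _ h1))
    rw [zero_add] at hlim
    exact hlim.congr' heq
  -- Tendsto of the lower ratio sum
  have hL : ∀ n : ℕ, 0 < n → Tendsto (fun t => (∑ i ∈ Finset.range n,
      F (t * (1 - ((i:ℝ)+1)/n)) * (G (t * (((i:ℝ)+1)/n)) - G (t * ((i:ℝ)/n))))
        / (F t * G t)) atTop (𝓝 (cL n)) := by
    intro n hn
    have heq : (fun t : ℝ => ∑ i ∈ Finset.range n,
          (F (t * (1 - ((i:ℝ)+1)/n)) / F t) * ((G (t * (((i:ℝ)+1)/n)) / G t) - (G (t * ((i:ℝ)/n)) / G t)))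
        =ᶠ[atTop] (fun t => (∑ i ∈ Finset.range n,
          F (t * (1 - ((i:ℝ)+1)/n)) * (G (t * (((i:ℝ)+1)/n)) - G (t * ((i:ℝ)/n))))
            / (F t * G t)) := by
      filter_upwards [hFpos, hGpos] with t hF hG
      rw [Finset.sum_div]
      refine Finset.sum_congr rfl fun i _ => ?_
      rw [div_sub_div_same, div_mul_div_comm]
    have hlim : Tendsto (fun t : ℝ => ∑ i ∈ Finset.range n,
          (F (t * (1 - ((i:ℝ)+1)/n)) / F t) * ((G (t * (((i:ℝ)+1)/n)) / G t) - (G (t * ((i:ℝ)/n)) / G t)))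
        atTop (𝓝 (cL n)) := by
      rw [hcL]
      refine tendsto_finset_sum _ fun i hi => ?_
      obtain ⟨h1, h2, h3, h4⟩ := hAux n hn i hi
      exact (hFs _ h4).mul ((hGs _ h2).sub (hGs _ h1))
    exact hlim.congr' heq
  -- eventual comparisons
  have hrle : ∀ n : ℕ, 0 < n → r ≤ᶠ[atTop] (fun t => (F t * G 0 +
      ∑ i ∈ Finset.range n, F (t * (1 - (i:ℝ)/n)) * (G (t * (((i:ℝ)+1)/n)) - G (t * ((i:ℝ)/n))))
        / (F t * G t)) := by
    intro n hn
    filter_upwards [hFpos, hGpos, eventually_gt_atTop (0:ℝ)] with t hF hG ht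
    exact div_le_div_of_nonneg_right (hup t ht n hn) (by positivity) |>.trans_eq rfl
  have hrge : ∀ n : ℕ, 0 < n → (fun t => (∑ i ∈ Finset.range n,
      F (t * (1 - ((i:ℝ)+1)/n)) * (G (t * (((i:ℝ)+1)/n)) - G (t * ((i:ℝ)/n))))
        / (F t * G t)) ≤ᶠ[atTop] r := by
    intro n hn
    filter_upwards [hFpos, hGpos, eventually_gt_atTop (0:ℝ)] with t hF hG ht
    exact div_le_div_of_nonneg_right (hlo t ht n hn) (by positivity) |>.trans_eq rfl
  have hrnn : ∀ᶠ t : ℝ in atTop, (0:ℝ) ≤ r t := by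
    filter_upwards [hFpos, hGpos] with t hF hG
    exact div_nonneg (hHnn t) (by positivity)
  -- boundedness facts
  have hbdd : IsBoundedUnder (· ≤ ·) atTop r :=
    ((hU 1 one_pos).isBoundedUnder_le).mono_le (hrle 1 one_pos)
  have hbdd' : IsBoundedUnder (· ≥ ·) atTop r :=
    isBoundedUnder_of_eventually_ge hrnn
  have hcob : IsCoboundedUnder (· ≤ ·) atTop r := hbdd'.isCoboundedUnder_le
  have hcob' : IsCoboundedUnder (· ≥ ·) atTop r := hbdd.isCoboundedUnder_ge
  -- limsup/liminf comparisons
  have hlimsup : ∀ n : ℕ, 0 < n → limsup r atTop ≤ cU n := by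
    intro n hn
    calc limsup r atTop ≤ _ := limsup_le_limsup (hrle n hn) hcob (hU n hn).isBoundedUnder_le
      _ = cU n := (hU n hn).limsup_eq
  have hliminf : ∀ n : ℕ, 0 < n → cL n ≤ liminf r atTop := by
    intro n hn
    calc cL n = _ := ((hL n hn).liminf_eq).symm
      _ ≤ liminf r atTop := liminf_le_liminf (hrge n hn) (hL n hn).isBoundedUnder_ge hcob'
  -- the gap between cU and cL vanishes
  have hgap : ∀ ε : ℝ, 0 < ε → ∃ n : ℕ, 0 < n ∧ cU n ≤ cL n + ε := by
    intro ε hε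
    have hg : Continuous (fun u : ℝ => (1 - u) ^ α) := by
      refine continuous_iff_continuousAt.2 fun u => ?_
      exact (Real.continuousAt_rpow_const _ _ (Or.inr hα.le)).comp
        ((continuous_const.sub continuous_id).continuousAt)
    have huc := (isCompact_Icc (a := (0:ℝ)) (b := 1)).uniformContinuousOn_of_continuous
      (hg.continuousOn)
    rw [Metric.uniformContinuousOn_iff] at huc
    obtain ⟨δ, hδ, hucd⟩ := huc ε hε
    obtain ⟨n, hnδ⟩ := exists_nat_gt (1/δ)
    have hn : 0 < n := by
      by_contra h
      push_neg at h
      interval_cases n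
      simp only [Nat.cast_zero] at hnδ
      have : (0:ℝ) < 1/δ := by positivity
      linarith
    have hn' : (0:ℝ) < n := by exact_mod_cast hn
    refine ⟨n, hn, ?_⟩
    have key : cU n - cL n ≤ ε * 1 := by
      have hsum : cU n - cL n = ∑ i ∈ Finset.range n,
          ((1 - (i:ℝ)/n) ^ α - (1 - ((i:ℝ)+1)/n) ^ α) * ((((i:ℝ)+1)/n) ^ β - ((i:ℝ)/n) ^ β) := by
        rw [hcU, hcL, ← Finset.sum_sub_distrib]
        refine Finset.sum_congr rfl fun i _ => ?_
        ring
      rw [hsum]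
      have hbound : ∀ i ∈ Finset.range n,
          ((1 - (i:ℝ)/n) ^ α - (1 - ((i:ℝ)+1)/n) ^ α) * ((((i:ℝ)+1)/n) ^ β - ((i:ℝ)/n) ^ β)
            ≤ ε * ((((i:ℝ)+1)/n) ^ β - ((i:ℝ)/n) ^ β) := by
        intro i hi
        obtain ⟨h1, h2, h3, h4⟩ := hAux n hn i hi
        have hi' : (i:ℝ) + 1 ≤ n := by exact_mod_cast Finset.mem_range.1 hi
        have hmem1 : (i:ℝ)/n ∈ Icc (0:ℝ) 1 := ⟨h1, by rw [div_le_one hn']; linarith⟩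
        have hmem2 : ((i:ℝ)+1)/n ∈ Icc (0:ℝ) 1 := ⟨h2, by rw [div_le_one hn']; linarith⟩
        have hdist : dist ((i:ℝ)/n) (((i:ℝ)+1)/n) < δ := by
          rw [Real.dist_eq, div_sub_div_same]
          have : |(i:ℝ) - ((i:ℝ)+1)| = 1 := by rw [abs_sub_comm]; norm_num
          rw [abs_div, this, abs_of_pos hn', div_lt_iff₀ hn']
          rw [one_div] at hnδ
          calc (1:ℝ) = δ * δ⁻¹ := by field_simp
            _ < δ * n := mul_lt_mul_of_pos_left hnδ hδ
        have hgd := hucd _ hmem1 _ hmem2 hdist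
        rw [Real.dist_eq] at hgd
        have hdiv : (i:ℝ)/n ≤ ((i:ℝ)+1)/n := (div_le_div_iff_of_pos_right hn').mpr (by linarith)
        have hge : (1 - ((i:ℝ)+1)/n) ^ α ≤ (1 - (i:ℝ)/n) ^ α :=
          Real.rpow_le_rpow h4 (by linarith) hα.le
        have hgd' : |(1 - (i:ℝ)/n) ^ α - (1 - ((i:ℝ)+1)/n) ^ α| < ε := hgd
        have habs : (1 - (i:ℝ)/n) ^ α - (1 - ((i:ℝ)+1)/n) ^ α ≤ ε :=
          ((le_abs_self _).trans_lt hgd').le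
        have hΔ : (0:ℝ) ≤ (((i:ℝ)+1)/n) ^ β - ((i:ℝ)/n) ^ β := by
          have := Real.rpow_le_rpow h1 hdiv hβ.le
          linarith
        nlinarith
      calc ∑ i ∈ Finset.range n, _ ≤ ∑ i ∈ Finset.range n,
            ε * ((((i:ℝ)+1)/n) ^ β - ((i:ℝ)/n) ^ β) := Finset.sum_le_sum hbound
        _ = ε * ∑ i ∈ Finset.range n, ((((i:ℝ)+1)/n) ^ β - ((i:ℝ)/n) ^ β) := by
            rw [Finset.mul_sum]
        _ = ε * (((n:ℝ)/n) ^ β - ((0:ℝ)/n) ^ β) := by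
            congr 1
            have := Finset.sum_range_sub (f := fun i : ℕ => (((i:ℝ))/n) ^ β) n
            simpa [Nat.cast_add, Nat.cast_one] using this
        _ ≤ ε * 1 := by
            rw [div_self hn'.ne', zero_div, Real.one_rpow, Real.zero_rpow hβ.ne', sub_zero,
              mul_one]
    linarith
  -- conclusion
  have hLU : limsup r atTop ≤ liminf r atTop := by
    refine le_of_forall_pos_le_add fun ε hε => ?_
    obtain ⟨n, hn, hgapn⟩ := hgap ε hε
    calc limsup r atTop ≤ cU n := hlimsup n hn
      _ ≤ cL n + ε := hgapn
      _ ≤ liminf r atTop + ε := by linarith [hliminf n hn]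
  have hUL : liminf r atTop ≤ limsup r atTop := liminf_le_limsup hbdd hbdd'
  have heq2 : liminf r atTop = limsup r atTop := le_antisymm hUL hLU
  refine ⟨liminf r atTop, ?_, ?_⟩
  · have h2 := hliminf 2 two_pos
    have hcL2 : (0:ℝ) < cL 2 := by
      have hval : cL 2 = (1 - (0+1)/2 : ℝ) ^ α * (((0+1)/2 : ℝ) ^ β - ((0:ℝ)/2) ^ β) +
          (1 - (1+1)/2 : ℝ) ^ α * (((1+1)/2 : ℝ) ^ β - ((1:ℝ)/2) ^ β) := by
        simp only [hcL]
        rw [Finset.sum_range_succ, Finset.sum_range_one]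
        norm_num
      rw [hval]
      have e1 : (1 - (0+1)/2 : ℝ) = 1/2 := by norm_num
      have e2 : ((0+1)/2 : ℝ) = 1/2 := by norm_num
      have e3 : ((0:ℝ)/2) = 0 := by norm_num
      have e4 : (1 - (1+1)/2 : ℝ) = 0 := by norm_num
      rw [e1, e2, e3, e4, Real.zero_rpow hα.ne', Real.zero_rpow hβ.ne', zero_mul, add_zero,
        sub_zero]
      have := Real.rpow_pos_of_pos (by norm_num : (0:ℝ) < 1/2) α
      have := Real.rpow_pos_of_pos (by norm_num : (0:ℝ) < 1/2) β
      positivity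
    linarith
  · exact tendsto_of_le_liminf_of_limsup_le le_rfl hLU hbdd hbdd'
lemma toReal_Ioc (ν : Measure ℝ) (hνf : ∀ t : ℝ, ν (Iic t) < ⊤) {a b : ℝ} (hab : a ≤ b) :
    (ν (Ioc a b)).toReal = (ν (Iic b)).toReal - (ν (Iic a)).toReal := by
  have hu : ν (Iic b) = ν (Iic a) + ν (Ioc a b) := by
    rw [← measure_union (Iic_disjoint_Ioc le_rfl) measurableSet_Ioc, Iic_union_Ioc_eq_Iic hab]
  have hIoc : ν (Ioc a b) < ⊤ := lt_of_le_of_lt (measure_mono Ioc_subset_Iic_self) (hνf b)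
  rw [hu, ENNReal.toReal_add (hνf a).ne hIoc.ne]
  ring

lemma conv_rv (α β : ℝ) (hα : 0 < α) (hβ : 0 < β) (μ ν : Measure ℝ)
    (hμ0 : μ (Iio 0) = 0) (hν0 : ν (Iio 0) = 0)
    (hμf : ∀ t : ℝ, μ (Iic t) < ⊤) (hνf : ∀ t : ℝ, ν (Iic t) < ⊤)
    (hF : ∀ lam : ℝ, 0 < lam →
      Tendsto (fun t => (μ (Iic (lam * t))).toReal / (μ (Iic t)).toReal) atTop (𝓝 (lam ^ α)))
    (hG : ∀ lam : ℝ, 0 < lam →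
      Tendsto (fun t => (ν (Iic (lam * t))).toReal / (ν (Iic t)).toReal) atTop (𝓝 (lam ^ β))) :
    ∀ lam : ℝ, 0 < lam →
      Tendsto (fun t => ((mconv μ ν) (Iic (lam * t))).toReal / ((mconv μ ν) (Iic t)).toReal)
        atTop (𝓝 (lam ^ (α + β))) := by
  haveI := sigmaFinite_of_fin μ hμf
  haveI := sigmaFinite_of_fin ν hνf
  set F : ℝ → ℝ := fun t => (μ (Iic t)).toReal with hFdef
  set G : ℝ → ℝ := fun t => (ν (Iic t)).toReal with hGdef
  set H : ℝ → ℝ := fun t => ((mconv μ ν) (Iic t)).toReal with hHdef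
  have hHfin : ∀ t : ℝ, mconv μ ν (Iic t) < ⊤ := fun t =>
    lt_of_le_of_lt (mconv_fin μ ν hμ0 hν0 t)
      (ENNReal.mul_lt_top (hμf _) (hνf _))
  have hFmono : Monotone F := fun a b hab =>
    ENNReal.toReal_mono (hμf b).ne (measure_mono (Iic_subset_Iic.2 hab))
  have hGmono : Monotone G := fun a b hab =>
    ENNReal.toReal_mono (hνf b).ne (measure_mono (Iic_subset_Iic.2 hab))
  have hHmono : Monotone H := fun a b hab =>
    ENNReal.toReal_mono (hHfin b).ne (measure_mono (Iic_subset_Iic.2 hab))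
  have hFnn : ∀ t, 0 ≤ F t := fun t => ENNReal.toReal_nonneg
  have hGnn : ∀ t, 0 ≤ G t := fun t => ENNReal.toReal_nonneg
  have hHnn : ∀ t, 0 ≤ H t := fun t => ENNReal.toReal_nonneg
  have hFtop : Tendsto F atTop atTop := rv_atTop hFmono hFnn hα hF
  have hGtop : Tendsto G atTop atTop := rv_atTop hGmono hGnn hβ hG
  have hFs := rv_scale hFtop hα hF
  have hGs := rv_scale hGtop hβ hG
  -- real upper bound
  have hup : ∀ t : ℝ, 0 < t → ∀ n : ℕ, 0 < n → H t ≤ F t * G 0 +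
      ∑ i ∈ Finset.range n,
        F (t * (1 - (i:ℝ)/n)) * (G (t * (((i:ℝ)+1)/n)) - G (t * ((i:ℝ)/n))) := by
    intro t ht n hn
    have hn' : (0:ℝ) < n := by exact_mod_cast hn
    have hEN : mconv μ ν (Iic t) ≤
        μ (Iic t) * ν (Iic 0) + ∑ i ∈ Finset.range n,
          μ (Iic (t * (1 - (i:ℝ) / n))) * ν (Ioc (t * ((i:ℝ) / n)) (t * (((i:ℝ) + 1) / n))) := by
      rw [mconv_apply]
      exact key_upper μ ν hμ0 hν0 t ht n hn
    have hfin1 : μ (Iic t) * ν (Iic 0) < ⊤ := ENNReal.mul_lt_top (hμf _) (hνf _)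
    have hfin2 : ∀ i ∈ Finset.range n,
        μ (Iic (t * (1 - (i:ℝ) / n))) * ν (Ioc (t * ((i:ℝ) / n)) (t * (((i:ℝ) + 1) / n))) ≠ ⊤ :=
      fun i _ => (ENNReal.mul_lt_top (hμf _)
        (lt_of_le_of_lt (measure_mono Ioc_subset_Iic_self) (hνf _))).ne
    have hfinrhs : μ (Iic t) * ν (Iic 0) + ∑ i ∈ Finset.range n,
        μ (Iic (t * (1 - (i:ℝ) / n))) * ν (Ioc (t * ((i:ℝ) / n)) (t * (((i:ℝ) + 1) / n))) ≠ ⊤ := by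
      rw [ENNReal.add_ne_top]
      exact ⟨hfin1.ne, (ENNReal.sum_lt_top.mpr fun i hi => (hfin2 i hi).lt_top).ne⟩
    have hle := ENNReal.toReal_mono hfinrhs hEN
    rw [ENNReal.toReal_add hfin1.ne (ENNReal.sum_lt_top.mpr fun i hi => (hfin2 i hi).lt_top).ne,
      ENNReal.toReal_mul, ENNReal.toReal_sum hfin2] at hle
    refine le_trans hle (le_of_eq ?_)
    congr 1
    refine Finset.sum_congr rfl fun i hi => ?_
    rw [ENNReal.toReal_mul]
    congr 1
    have hle2 : t * ((i:ℝ)/n) ≤ t * (((i:ℝ)+1)/n) :=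
      mul_le_mul_of_nonneg_left ((div_le_div_iff_of_pos_right hn').mpr (by linarith)) ht.le
    rw [toReal_Ioc ν hνf hle2]
  -- real lower bound
  have hlo : ∀ t : ℝ, 0 < t → ∀ n : ℕ, 0 < n →
      ∑ i ∈ Finset.range n,
        F (t * (1 - ((i:ℝ)+1)/n)) * (G (t * (((i:ℝ)+1)/n)) - G (t * ((i:ℝ)/n))) ≤ H t := by
    intro t ht n hn
    have hn' : (0:ℝ) < n := by exact_mod_cast hn
    have hEN : ∑ i ∈ Finset.range n,
        μ (Iic (t * (1 - ((i:ℝ) + 1) / n))) * ν (Ioc (t * ((i:ℝ) / n)) (t * (((i:ℝ) + 1) / n)))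
          ≤ mconv μ ν (Iic t) := by
      rw [mconv_apply]
      exact key_lower μ ν t ht n hn
    have hfin2 : ∀ i ∈ Finset.range n,
        μ (Iic (t * (1 - ((i:ℝ)+1) / n))) * ν (Ioc (t * ((i:ℝ) / n)) (t * (((i:ℝ) + 1) / n))) ≠ ⊤ :=
      fun i _ => (ENNReal.mul_lt_top (hμf _)
        (lt_of_le_of_lt (measure_mono Ioc_subset_Iic_self) (hνf _))).ne
    have hle := ENNReal.toReal_mono (hHfin t).ne hEN
    rw [ENNReal.toReal_sum hfin2] at hle
    refine le_trans (le_of_eq ?_) hle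
    refine Finset.sum_congr rfl fun i hi => ?_
    rw [ENNReal.toReal_mul]
    congr 1
    have hle2 : t * ((i:ℝ)/n) ≤ t * (((i:ℝ)+1)/n) :=
      mul_le_mul_of_nonneg_left ((div_le_div_iff_of_pos_right hn').mpr (by linarith)) ht.le
    rw [toReal_Ioc ν hνf hle2]
  obtain ⟨c, hc, hr⟩ := conv_ratio α β hα hβ F G H hHnn hFtop hGtop hFs hGs hup hlo
  -- now deduce the regular variation of H
  intro lam hlam
  have hmul : Tendsto (fun t : ℝ => lam * t) atTop atTop :=
    Tendsto.const_mul_atTop hlam tendsto_id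
  have hrl : Tendsto (fun t => H (lam * t) / (F (lam * t) * G (lam * t))) atTop (𝓝 c) :=
    hr.comp hmul
  have hFl : Tendsto (fun t => F (lam * t) / F t) atTop (𝓝 (lam ^ α)) := hF lam hlam
  have hGl : Tendsto (fun t => G (lam * t) / G t) atTop (𝓝 (lam ^ β)) := hG lam hlam
  have hFpos : ∀ᶠ t : ℝ in atTop, 0 < F t := hFtop.eventually_gt_atTop 0
  have hGpos : ∀ᶠ t : ℝ in atTop, 0 < G t := hGtop.eventually_gt_atTop 0
  have hrpos : ∀ᶠ t : ℝ in atTop, 0 < H t / (F t * G t) :=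
    hr.eventually (eventually_gt_nhds hc)
  have hcomb : Tendsto (fun t =>
      (H (lam * t) / (F (lam * t) * G (lam * t))) / (H t / (F t * G t)) *
        ((F (lam * t) / F t) * (G (lam * t) / G t))) atTop
      (𝓝 ((c / c) * (lam ^ α * lam ^ β))) :=
    ((hrl.div hr hc.ne').mul (hFl.mul hGl))
  rw [div_self hc.ne', one_mul, ← Real.rpow_add hlam] at hcomb
  refine hcomb.congr' ?_
  filter_upwards [hFpos, hGpos, hrpos, hmul.eventually hFpos, hmul.eventually hGpos]
    with t h1 h2 h3 h4 h5
  have hXt : (0:ℝ) < F t * G t := mul_pos h1 h2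
  have h3' : 0 < H t := by
    have hm := mul_pos h3 hXt
    rwa [div_mul_cancel₀ _ hXt.ne'] at hm
  field_simp
  rw [show ((mconv μ ν) (Iic (lam * t))).toReal = H (lam * t) from rfl,
    show ((mconv μ ν) (Iic t)).toReal = H t from rfl,
    mul_div_cancel_left₀ _ h3'.ne']
/-- if `f` is nondecreasing, right-continuous, vanishes at `0⁻`
(equivalently `f t = μ (Iic t)` for a locally finite measure `μ` on `[0,∞)`) and is
regularly varying at `∞` of index `α > 0`, then for every `j ≥ 1` the `j`-fold
Lebesgue–Stieltjes convolution `f^{*(j)}` is regularly varying at `∞` of index `α j`. -/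
theorem stmt1 (α : ℝ) (hα : 0 < α) (f : ℝ → ℝ) (μ : MeasureTheory.Measure ℝ)
    (hsupp : μ (Set.Iio 0) = 0) (hfin : ∀ t : ℝ, μ (Set.Iic t) < ⊤)
    (hrep : ∀ t : ℝ, f t = (μ (Set.Iic t)).toReal)
    (hreg : ∀ lam : ℝ, 0 < lam →
      Tendsto (fun t : ℝ => f (lam * t) / f t) atTop (𝓝 (lam ^ α)))
    (j : ℕ) (hj : 1 ≤ j) :
    ∀ lam : ℝ, 0 < lam →
      Tendsto (fun t : ℝ => convFun μ j (lam * t) / convFun μ j t) atTop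
        (𝓝 (lam ^ (α * j))) := by
  haveI := sigmaFinite_of_fin μ hfin
  have hreg' : ∀ lam : ℝ, 0 < lam →
      Tendsto (fun t : ℝ => (μ (Iic (lam * t))).toReal / (μ (Iic t)).toReal) atTop
        (𝓝 (lam ^ α)) := by
    intro lam hlam
    refine (hreg lam hlam).congr fun t => ?_
    rw [hrep, hrep]
  suffices h : (mconvPow μ j) (Iio 0) = 0 ∧ (∀ t : ℝ, (mconvPow μ j) (Iic t) < ⊤) ∧
      ∀ lam : ℝ, 0 < lam → Tendsto (fun t : ℝ => convFun μ j (lam * t) / convFun μ j t) atTop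
        (𝓝 (lam ^ (α * j))) from h.2.2
  induction j with
  | zero => exact absurd hj (by omega)
  | succ k ih =>
    rcases Nat.lt_or_ge k 1 with hk | hk
    · interval_cases k
      refine ⟨hsupp, hfin, ?_⟩
      intro lam hlam
      have hexp : lam ^ (α * ((0 + 1 : ℕ) : ℝ)) = lam ^ α := by norm_num
      rw [hexp]
      exact hreg' lam hlam
    · obtain ⟨h0, hfinn, hrv⟩ := ih hk
      haveI := sigmaFinite_of_fin (mconvPow μ k) hfinn
      have hpow : mconvPow μ (k + 1) = mconv μ (mconvPow μ k) := by
        obtain ⟨m, rfl⟩ : ∃ m, k = m + 1 := ⟨k - 1, by omega⟩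
        rfl
      have hβ : 0 < α * (k : ℝ) := by
        have : (1:ℝ) ≤ (k:ℝ) := by exact_mod_cast hk
        nlinarith
      have hrv' : ∀ lam : ℝ, 0 < lam →
          Tendsto (fun t : ℝ => ((mconvPow μ k) (Iic (lam * t))).toReal /
            ((mconvPow μ k) (Iic t)).toReal) atTop (𝓝 (lam ^ (α * (k:ℝ)))) := hrv
      have hres := conv_rv α (α * (k:ℝ)) hα hβ μ (mconvPow μ k) hsupp h0 hfin hfinn hreg' hrv'
      refine ⟨?_, ?_, ?_⟩
      · rw [hpow]
        exact mconv_supp _ _ hsupp h0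
      · intro t
        rw [hpow]
        exact lt_of_le_of_lt (mconv_fin _ _ hsupp h0 t)
          (ENNReal.mul_lt_top (hfin _) (hfinn _))
      · intro lam hlam
        have hexp : lam ^ (α * ((k + 1 : ℕ) : ℝ)) = lam ^ (α + α * (k:ℝ)) := by
          push_cast; ring_nf
        rw [hexp]
        have := hres lam hlam
        simp only [convFun, hpow]
        exact this
end

section
/- Let f and g be nondecreasing right-continuous functions on [0,∞) with f regularly varying at ∞ of index α > 0 and g regularly varying at ∞ of index β > 0, and let h(t) = ∫_{[0,t]} f(t−y) dg(y). Then lim_{t→∞} h(t)/(f(t) g(t)) = Γ(1+α)Γ(1+β)/Γ(1+α+β). -/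
open MeasureTheory Set Filter Topology intervalIntegral

private lemma real_beta {α β : ℝ} (hα : 0 < α) (hβ : 0 < β) :
    ∫ s in (0:ℝ)..1, s ^ (β - 1) * (1 - s) ^ α =
      Real.Gamma β * Real.Gamma (α + 1) / Real.Gamma (α + β + 1) := by
  have hβ' : 0 < (β:ℂ).re := by simpa using hβ
  have hα' : 0 < ((α:ℂ) + 1).re := by simp; linarith
  have h1 := Complex.Gamma_mul_Gamma_eq_betaIntegral hβ' hα'
  have h2 : Complex.betaIntegral (β:ℂ) ((α:ℂ) + 1)
      = ((∫ s in (0:ℝ)..1, s ^ (β - 1) * (1 - s) ^ α : ℝ) : ℂ) := by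
    rw [Complex.betaIntegral, ← intervalIntegral.integral_ofReal]
    refine intervalIntegral.integral_congr fun x hx => ?_
    rw [uIcc_of_le (zero_le_one)] at hx
    have h0x : (0:ℝ) ≤ x := hx.1
    have h1x : (0:ℝ) ≤ 1 - x := by linarith [hx.2]
    rw [Complex.ofReal_mul, Complex.ofReal_cpow h0x, Complex.ofReal_cpow h1x]
    push_cast
    norm_num
  rw [h2] at h1
  have hsum : (β:ℂ) + ((α:ℂ) + 1) = ((α + β + 1 : ℝ) : ℂ) := by push_cast; ring
  rw [hsum, show ((α:ℂ) + 1) = (((α + 1 : ℝ)):ℂ) by push_cast; ring] at h1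
  simp only [Complex.Gamma_ofReal] at h1
  have h3 : Real.Gamma β * Real.Gamma (α + 1)
      = Real.Gamma (α + β + 1) * ∫ s in (0:ℝ)..1, s ^ (β - 1) * (1 - s) ^ α := by
    exact_mod_cast h1
  have hne : Real.Gamma (α + β + 1) ≠ 0 := (Real.Gamma_pos_of_pos (by linarith)).ne'
  rw [h3, mul_div_cancel_left₀ _ hne]

private lemma integral_beta_pow {β : ℝ} (hβ : 0 < β) (a b : ℝ) :
    ∫ s in a..b, β * s ^ (β - 1) = b ^ β - a ^ β := by
  rw [intervalIntegral.integral_const_mul, integral_rpow (Or.inl (by linarith)),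
    sub_add_cancel]
  field_simp

private lemma rpow_sub_rpow_le {α : ℝ} (hα : 0 < α) {a b : ℝ} (ha : 0 ≤ a) (hab : a ≤ b)
    (hb : b ≤ 1) : b ^ α - a ^ α ≤ α * (b - a) + (b - a) ^ α := by
  have hba : 0 ≤ b - a := by linarith
  rcases le_total α 1 with h1 | h1
  · have key := NNReal.rpow_add_le_add_rpow (a.toNNReal) ((b - a).toNNReal) hα.le h1
    have hsum : a.toNNReal + (b - a).toNNReal = b.toNNReal := by
      rw [← Real.toNNReal_add ha hba]; norm_num
    rw [hsum] at key
    have key' : (b.toNNReal ^ α : ℝ) ≤ (a.toNNReal ^ α : ℝ) + ((b - a).toNNReal ^ α : ℝ) := by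
      exact_mod_cast key
    rw [Real.coe_toNNReal _ ha, Real.coe_toNNReal _ (ha.trans hab),
      Real.coe_toNNReal _ hba] at key'
    nlinarith [mul_nonneg hα.le hba]
  · have hint1 : IntervalIntegrable (fun s : ℝ => s ^ (α - 1)) volume a b :=
      intervalIntegrable_rpow' (by linarith)
    have hint2 : IntervalIntegrable (fun _ : ℝ => (1:ℝ)) volume a b := intervalIntegrable_const
    have hmono : ∫ s in a..b, s ^ (α - 1) ≤ ∫ _ in a..b, (1:ℝ) := by
      apply intervalIntegral.integral_mono_on hab hint1 hint2
      intro s hs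
      exact Real.rpow_le_one (ha.trans hs.1) (by linarith [hs.2]) (by linarith)
    rw [integral_rpow (Or.inl (by linarith)), sub_add_cancel, intervalIntegral.integral_const,
      smul_eq_mul, mul_one] at hmono
    have hrpow : 0 ≤ (b - a) ^ α := Real.rpow_nonneg hba α
    rw [div_le_iff₀ hα] at hmono
    nlinarith

private lemma biUnion_Ioc (c : ℕ → ℝ) (hc : ∀ i, c i ≤ c (i + 1)) (n : ℕ) :
    (⋃ i ∈ Finset.range n, Ioc (c i) (c (i + 1))) = Ioc (c 0) (c n) := by
  induction n with
  | zero => simp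
  | succ n ih =>
    rw [Finset.range_add_one, Finset.set_biUnion_insert, ih, union_comm,
      Ioc_union_Ioc_eq_Ioc (monotone_nat_of_le_succ hc (Nat.zero_le n)) (hc n)]

private lemma phi_intble {α β : ℝ} (hα : 0 < α) (hβ : 0 < β) (u v : ℝ) :
    IntervalIntegrable (fun s : ℝ => (1 - s) ^ α * (β * s ^ (β - 1))) volume u v := by
  have hψ : IntervalIntegrable (fun s : ℝ => β * s ^ (β - 1)) volume u v :=
    (intervalIntegrable_rpow' (by linarith)).const_mul β
  have hcont : Continuous fun s : ℝ => (1 - s) ^ α :=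
    (continuous_const.sub continuous_id).rpow_const (fun x => Or.inr hα.le)
  exact hψ.continuousOn_mul hcont.continuousOn

private lemma sum_squeeze {α β : ℝ} (hα : 0 < α) (hβ : 0 < β) (n : ℕ) (hn : 1 ≤ n) :
    (∑ i ∈ Finset.range n,
        (1 - ((i:ℝ)+1)/(n:ℝ)) ^ α * ((((i:ℝ)+1)/(n:ℝ)) ^ β - ((i:ℝ)/(n:ℝ)) ^ β))
      ≤ (∫ s in (0:ℝ)..1, (1 - s) ^ α * (β * s ^ (β-1))) ∧
    (∫ s in (0:ℝ)..1, (1 - s) ^ α * (β * s ^ (β-1)))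
      ≤ ∑ i ∈ Finset.range n,
        (1 - (i:ℝ)/(n:ℝ)) ^ α * ((((i:ℝ)+1)/(n:ℝ)) ^ β - ((i:ℝ)/(n:ℝ)) ^ β) := by
  have hn0 : (0:ℝ) < n := by exact_mod_cast hn
  set a : ℕ → ℝ := fun i => (i:ℝ)/(n:ℝ) with ha
  have hadj : ∑ i ∈ Finset.range n, ∫ s in (a i)..(a (i+1)), (1 - s) ^ α * (β * s ^ (β-1))
      = ∫ s in (a 0)..(a n), (1 - s) ^ α * (β * s ^ (β-1)) :=
    intervalIntegral.sum_integral_adjacent_intervals (fun k _ => phi_intble hα hβ _ _)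
  have ha0 : a 0 = 0 := by simp [ha]
  have han : a n = 1 := by simp [ha, hn0.ne']
  have hsplit : ∫ s in (0:ℝ)..1, (1 - s) ^ α * (β * s ^ (β-1))
      = ∑ i ∈ Finset.range n, ∫ s in (a i)..(a (i+1)), (1 - s) ^ α * (β * s ^ (β-1)) := by
    rw [hadj, ha0, han]
  have hcast : ∀ i : ℕ, a (i+1) = ((i:ℝ)+1)/(n:ℝ) := by
    intro i; simp [ha]
  have hle : ∀ i : ℕ, a i ≤ a (i+1) := by
    intro i
    rw [hcast]
    have : a i = (i:ℝ)/(n:ℝ) := rfl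
    rw [this]
    gcongr
    linarith
  have hanonneg : ∀ i : ℕ, 0 ≤ a i := fun i => by positivity
  have haub : ∀ i : ℕ, i ∈ Finset.range n → a (i+1) ≤ 1 := by
    intro i hi
    rw [hcast, div_le_one hn0]
    have : i + 1 ≤ n := Finset.mem_range.1 hi
    exact_mod_cast this
  have upper_i : ∀ i ∈ Finset.range n,
      ∫ s in (a i)..(a (i+1)), (1 - s) ^ α * (β * s ^ (β-1))
        ≤ (1 - a i) ^ α * ((a (i+1)) ^ β - (a i) ^ β) := by
    intro i hi
    rw [← integral_beta_pow hβ (a i) (a (i+1)), ← intervalIntegral.integral_const_mul]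
    apply intervalIntegral.integral_mono_on (hle i) (phi_intble hα hβ _ _)
      (((intervalIntegrable_rpow' (by linarith)).const_mul β).const_mul _)
    intro s hs
    have h0s : 0 ≤ s := le_trans (hanonneg i) hs.1
    have hs1 : s ≤ 1 := hs.2.trans (haub i hi)
    exact mul_le_mul_of_nonneg_right
      (Real.rpow_le_rpow (by linarith) (by linarith [hs.1]) hα.le)
      (mul_nonneg hβ.le (Real.rpow_nonneg h0s _))
  have lower_i : ∀ i ∈ Finset.range n,
      (1 - a (i+1)) ^ α * ((a (i+1)) ^ β - (a i) ^ β)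
        ≤ ∫ s in (a i)..(a (i+1)), (1 - s) ^ α * (β * s ^ (β-1)) := by
    intro i hi
    rw [← integral_beta_pow hβ (a i) (a (i+1)), ← intervalIntegral.integral_const_mul]
    apply intervalIntegral.integral_mono_on (hle i)
      (((intervalIntegrable_rpow' (by linarith)).const_mul β).const_mul _)
      (phi_intble hα hβ _ _)
    intro s hs
    have h0s : 0 ≤ s := le_trans (hanonneg i) hs.1
    have hup : a (i+1) ≤ 1 := haub i hi
    exact mul_le_mul_of_nonneg_right
      (Real.rpow_le_rpow (by linarith [hs.2]) (by linarith [hs.2]) hα.le)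
      (mul_nonneg hβ.le (Real.rpow_nonneg h0s _))
  constructor
  · rw [hsplit]
    refine le_trans (le_of_eq (Finset.sum_congr rfl fun i _ => ?_))
      (Finset.sum_le_sum lower_i)
    rw [hcast i]
  · rw [hsplit]
    refine le_trans (Finset.sum_le_sum upper_i)
      (le_of_eq (Finset.sum_congr rfl fun i _ => ?_))
    rw [hcast i]

private lemma gap_small {α β : ℝ} (hα : 0 < α) (hβ : 0 < β) {ε : ℝ} (hε : 0 < ε) :
    ∃ n : ℕ, 1 ≤ n ∧
      (∑ i ∈ Finset.range n,
          (1 - (i:ℝ)/(n:ℝ)) ^ α * ((((i:ℝ)+1)/(n:ℝ)) ^ β - ((i:ℝ)/(n:ℝ)) ^ β))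
        - (∑ i ∈ Finset.range n,
          (1 - ((i:ℝ)+1)/(n:ℝ)) ^ α * ((((i:ℝ)+1)/(n:ℝ)) ^ β - ((i:ℝ)/(n:ℝ)) ^ β)) ≤ ε := by
  have hlim : Tendsto (fun k : ℕ => α * ((k:ℝ))⁻¹ + (((k:ℝ))⁻¹) ^ α) atTop (𝓝 0) := by
    have h1 : Tendsto (fun k : ℕ => ((k:ℝ))⁻¹) atTop (𝓝 0) :=
      tendsto_inv_atTop_nhds_zero_nat
    have h2 := (h1.const_mul α).add (h1.rpow_const (Or.inr hα.le))
    simpa [Real.zero_rpow hα.ne'] using h2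
  obtain ⟨n, hnε, hn1⟩ := ((hlim.eventually_lt_const hε).and (eventually_ge_atTop 1)).exists
  refine ⟨n, hn1, ?_⟩
  have hn0 : (0:ℝ) < n := by exact_mod_cast hn1
  rw [← Finset.sum_sub_distrib]
  have key : ∀ i ∈ Finset.range n,
      (1 - (i:ℝ)/(n:ℝ)) ^ α * ((((i:ℝ)+1)/(n:ℝ)) ^ β - ((i:ℝ)/(n:ℝ)) ^ β)
        - (1 - ((i:ℝ)+1)/(n:ℝ)) ^ α * ((((i:ℝ)+1)/(n:ℝ)) ^ β - ((i:ℝ)/(n:ℝ)) ^ β)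
      ≤ (α * ((n:ℝ))⁻¹ + (((n:ℝ))⁻¹) ^ α)
          * ((((i:ℝ)+1)/(n:ℝ)) ^ β - ((i:ℝ)/(n:ℝ)) ^ β) := by
    intro i hi
    have hin : (i:ℝ) + 1 ≤ (n:ℝ) := by exact_mod_cast Finset.mem_range.1 hi
    have hΔ : 0 ≤ (((i:ℝ)+1)/(n:ℝ)) ^ β - ((i:ℝ)/(n:ℝ)) ^ β := by
      have : ((i:ℝ)/(n:ℝ)) ^ β ≤ (((i:ℝ)+1)/(n:ℝ)) ^ β := by
        apply Real.rpow_le_rpow (by positivity) ?_ hβ.le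
        gcongr
        linarith
      linarith
    rw [← sub_mul]
    apply mul_le_mul_of_nonneg_right ?_ hΔ
    have hba : (1 - (i:ℝ)/(n:ℝ)) - (1 - ((i:ℝ)+1)/(n:ℝ)) = ((n:ℝ))⁻¹ := by
      field_simp
      ring
    have := rpow_sub_rpow_le hα (a := 1 - ((i:ℝ)+1)/(n:ℝ)) (b := 1 - (i:ℝ)/(n:ℝ))
      (by rw [sub_nonneg, div_le_one hn0]; exact hin)
      (by have h' : (i:ℝ)/(n:ℝ) ≤ ((i:ℝ)+1)/(n:ℝ) := by gcongr; linarith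
          linarith)
      (by have : 0 ≤ (i:ℝ)/(n:ℝ) := by positivity
          linarith)
    rw [hba] at this
    linarith
  refine le_trans (Finset.sum_le_sum key) ?_
  rw [← Finset.mul_sum]
  have htel : ∑ i ∈ Finset.range n, ((((i:ℝ)+1)/(n:ℝ)) ^ β - ((i:ℝ)/(n:ℝ)) ^ β) = 1 := by
    have h := Finset.sum_range_sub (fun j : ℕ => ((j:ℝ)/(n:ℝ)) ^ β) n
    have hcongr : ∑ i ∈ Finset.range n, ((((i:ℝ)+1)/(n:ℝ)) ^ β - ((i:ℝ)/(n:ℝ)) ^ β)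
        = ∑ i ∈ Finset.range n, (((↑(i+1):ℝ)/(n:ℝ)) ^ β - ((i:ℝ)/(n:ℝ)) ^ β) := by
      refine Finset.sum_congr rfl fun i _ => ?_
      push_cast
      ring_nf
    rw [hcongr, h]
    have : ((n:ℝ)/(n:ℝ)) = 1 := by field_simp
    rw [this, Real.one_rpow]
    norm_num
    exact Real.zero_rpow hβ.ne'
  rw [htel, mul_one]
  exact hnε.le

private lemma C_val {α β : ℝ} (hα : 0 < α) (hβ : 0 < β) :
    (∫ s in (0:ℝ)..1, (1 - s) ^ α * (β * s ^ (β-1)))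
      = Real.Gamma (1+α) * Real.Gamma (1+β) / Real.Gamma (1+α+β) := by
  have hfun : (fun s : ℝ => (1 - s) ^ α * (β * s ^ (β-1)))
      = fun s : ℝ => β * (s ^ (β-1) * (1 - s) ^ α) := by
    funext s; ring
  rw [hfun, intervalIntegral.integral_const_mul, real_beta hα hβ,
    show (1:ℝ)+β = β+1 from add_comm 1 β, Real.Gamma_add_one hβ.ne',
    show (1:ℝ)+α = α+1 from add_comm 1 α, show (α:ℝ)+1+β = α+β+1 by ring]
  ring

/-- let `f, g` be nondecreasing right-continuous functions on `[0,∞)`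
(vanishing at `0⁻`, represented by the measures `μ, ν` via `f t = μ (Iic t)`,
`g t = ν (Iic t)`), with `f` regularly varying of index `α > 0` and `g` regularly varying
of index `β > 0`, and let `h(t) = ∫_{[0,t]} f(t-y) dg(y)`.  Then
`h(t)/(f(t)g(t)) → Γ(1+α)Γ(1+β)/Γ(1+α+β)` as `t → ∞`. -/
theorem stmt2 (α β : ℝ) (hα : 0 < α) (hβ : 0 < β)
    (f g : ℝ → ℝ) (μ ν : MeasureTheory.Measure ℝ)
    (hμ0 : μ (Set.Iio 0) = 0) (hν0 : ν (Set.Iio 0) = 0)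
    (hμfin : ∀ t : ℝ, μ (Set.Iic t) < ⊤) (hνfin : ∀ t : ℝ, ν (Set.Iic t) < ⊤)
    (hf : ∀ t : ℝ, f t = (μ (Set.Iic t)).toReal)
    (hg : ∀ t : ℝ, g t = (ν (Set.Iic t)).toReal)
    (hfreg : ∀ lam : ℝ, 0 < lam →
      Tendsto (fun t : ℝ => f (lam * t) / f t) atTop (𝓝 (lam ^ α)))
    (hgreg : ∀ lam : ℝ, 0 < lam →
      Tendsto (fun t : ℝ => g (lam * t) / g t) atTop (𝓝 (lam ^ β)))
    (h : ℝ → ℝ) (hh : ∀ t : ℝ, h t = ∫ y in Set.Icc 0 t, f (t - y) ∂ν) :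
    Tendsto (fun t : ℝ => h t / (f t * g t)) atTop
      (𝓝 (Real.Gamma (1 + α) * Real.Gamma (1 + β) / Real.Gamma (1 + α + β))) := by
  have fnn : ∀ t, 0 ≤ f t := fun t => (hf t) ▸ ENNReal.toReal_nonneg
  have gnn : ∀ t, 0 ≤ g t := fun t => (hg t) ▸ ENNReal.toReal_nonneg
  have fmono : Monotone f := by
    intro s t hst
    rw [hf s, hf t]
    exact ENNReal.toReal_mono (hμfin t).ne (measure_mono (Iic_subset_Iic.2 hst))
  have gmono : Monotone g := by
    intro s t hst
    rw [hg s, hg t]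
    exact ENNReal.toReal_mono (hνfin t).ne (measure_mono (Iic_subset_Iic.2 hst))
  have gneg : ∀ s : ℝ, s < 0 → g s = 0 := by
    intro s hs
    rw [hg s]
    have hsub : Iic s ⊆ Iio 0 := fun x hx => lt_of_le_of_lt hx hs
    rw [measure_mono_null hsub hν0]
    simp
  have hνae : ∀ᵐ y ∂ν, 0 ≤ y := by
    rw [ae_iff]
    convert hν0 using 2
    ext y
    simp [not_le]
  have fpos : ∀ᶠ t in atTop, 0 < f t := by
    have hex : ∃ t, 0 < f t := by
      by_contra hc
      push_neg at hc
      have hzero : ∀ t, f t = 0 := fun t => le_antisymm (hc t) (fnn t)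
      have h2 := hfreg 2 two_pos
      have h0 : Tendsto (fun t : ℝ => f (2*t) / f t) atTop (𝓝 0) := by
        simpa [hzero] using (tendsto_const_nhds : Tendsto (fun _ : ℝ => (0:ℝ)) atTop (𝓝 0))
      exact absurd (tendsto_nhds_unique h2 h0) (Real.rpow_pos_of_pos two_pos α).ne'
    obtain ⟨t₀, ht₀⟩ := hex
    filter_upwards [eventually_ge_atTop t₀] with t ht
    exact lt_of_lt_of_le ht₀ (fmono ht)
  have gpos : ∀ᶠ t in atTop, 0 < g t := by
    have hex : ∃ t, 0 < g t := by
      by_contra hc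
      push_neg at hc
      have hzero : ∀ t, g t = 0 := fun t => le_antisymm (hc t) (gnn t)
      have h2 := hgreg 2 two_pos
      have h0 : Tendsto (fun t : ℝ => g (2*t) / g t) atTop (𝓝 0) := by
        simpa [hzero] using (tendsto_const_nhds : Tendsto (fun _ : ℝ => (0:ℝ)) atTop (𝓝 0))
      exact absurd (tendsto_nhds_unique h2 h0) (Real.rpow_pos_of_pos two_pos β).ne'
    obtain ⟨t₀, ht₀⟩ := hex
    filter_upwards [eventually_ge_atTop t₀] with t ht
    exact lt_of_lt_of_le ht₀ (gmono ht)
  have integOn : ∀ t : ℝ, IntegrableOn (fun y => f (t - y)) (Ioc (-1 : ℝ) t) ν := by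
    intro t
    have meas : Measurable fun y : ℝ => f (t - y) :=
      fmono.measurable.comp (measurable_const.sub measurable_id)
    refine Integrable.mono' (g := fun _ => f (t+1)) ?_ meas.aestronglyMeasurable ?_
    · exact integrableOn_const
        (lt_of_le_of_lt (measure_mono Ioc_subset_Iic_self) (hνfin t)).ne
    · filter_upwards [ae_restrict_mem measurableSet_Ioc] with y hy
      rw [Real.norm_eq_abs, abs_of_nonneg (fnn _)]
      exact fmono (by linarith [hy.1])
  rw [Metric.tendsto_nhds]
  intro ε hε
  obtain ⟨n', hn1, hgap⟩ := gap_small hα hβ (half_pos hε)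
  obtain ⟨m, rfl⟩ : ∃ m, n' = m + 1 := ⟨n' - 1, (Nat.succ_pred_eq_of_pos hn1).symm⟩
  clear hn1
  push_cast at hgap
  have hm0 : (0:ℝ) < (m:ℝ) + 1 := by positivity
  set c : ℝ → ℕ → ℝ := fun t i => if i = 0 then (-1:ℝ) else t * i / ((m:ℝ)+1) with hcdef
  have hcmono : ∀ t : ℝ, 0 < t → Monotone (c t) := by
    intro t ht
    apply monotone_nat_of_le_succ
    intro i
    by_cases hi : i = 0
    · subst hi
      simp only [hcdef, if_pos rfl, if_neg (Nat.one_ne_zero)]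
      have : 0 ≤ t * (1:ℕ) / ((m:ℝ)+1) := by positivity
      push_cast at this ⊢
      linarith
    · simp only [hcdef, if_neg hi, if_neg (Nat.succ_ne_zero i)]
      gcongr
      exact Nat.le_succ i
  have hczero : ∀ t : ℝ, c t 0 = -1 := fun t => by simp [hcdef]
  have hclast : ∀ t : ℝ, 0 < t → c t (m+1) = t := by
    intro t ht
    simp only [hcdef, if_neg (Nat.succ_ne_zero m)]
    push_cast
    field_simp
  have hsub : ∀ t : ℝ, 0 < t → ∀ i ∈ Finset.range (m+1),
      Ioc (c t i) (c t (i+1)) ⊆ Ioc (-1:ℝ) t := by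
    intro t ht i hi
    apply Ioc_subset_Ioc
    · rw [← hczero t]; exact hcmono t ht (Nat.zero_le i)
    · exact (hcmono t ht (Finset.mem_range.1 hi)).trans (hclast t ht).le
  have hsplit : ∀ t : ℝ, 0 < t →
      h t = ∑ i ∈ Finset.range (m+1), ∫ y in Ioc (c t i) (c t (i+1)), f (t - y) ∂ν := by
    intro t ht
    have hae : (Icc (0:ℝ) t : Set ℝ) =ᵐ[ν] Ioc (-1:ℝ) t := by
      rw [MeasureTheory.ae_eq_set]
      constructor
      · refine measure_mono_null (fun x hx => ?_) hν0
        exact absurd ⟨by linarith [hx.1.1], hx.1.2⟩ hx.2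
      · refine measure_mono_null (fun x hx => ?_) hν0
        simp only [mem_diff, mem_Ioc, mem_Icc, not_and, not_le] at hx
        simp only [mem_Iio]
        by_contra hx0
        push_neg at hx0
        exact absurd (hx.2 hx0) (not_lt.2 hx.1.2)
    have hunion : (⋃ i ∈ Finset.range (m+1), Ioc (c t i) (c t (i+1))) = Ioc (-1:ℝ) t := by
      rw [biUnion_Ioc (c t) (fun i => hcmono t ht (Nat.le_succ i)) (m+1), hczero t,
        hclast t ht]
    have hdisj : ∀ i j : ℕ, i < j →
        Disjoint (Ioc (c t i) (c t (i+1))) (Ioc (c t j) (c t (j+1))) := by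
      intro i j hij
      rw [Set.Ioc_disjoint_Ioc]
      exact le_trans (min_le_left _ _) (le_trans (hcmono t ht hij) (le_max_right _ _))
    rw [hh t, setIntegral_congr_set hae, ← hunion,
      integral_biUnion_finset _ (fun i _ => measurableSet_Ioc)
        (fun i _ j _ hij => hij.lt_or_gt.elim (fun h' => hdisj i j h')
          (fun h' => (hdisj j i h').symm))
        (fun i hi => (integOn t).mono_set (hsub t ht i hi))]
  have piece_ub : ∀ t : ℝ, 0 < t → ∀ i ∈ Finset.range (m+1),
      ∫ y in Ioc (c t i) (c t (i+1)), f (t - y) ∂ν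
        ≤ f ((1 - (i:ℝ)/((m:ℝ)+1)) * t) * (ν (Ioc (c t i) (c t (i+1)))).toReal := by
    intro t ht i hi
    have hfin : ν (Ioc (c t i) (c t (i+1))) < ⊤ :=
      lt_of_le_of_lt (measure_mono Ioc_subset_Iic_self) (hνfin _)
    have hbound : ∀ᵐ y ∂(ν.restrict (Ioc (c t i) (c t (i+1)))),
        f (t - y) ≤ f ((1 - (i:ℝ)/((m:ℝ)+1)) * t) := by
      filter_upwards [ae_restrict_mem measurableSet_Ioc, ae_restrict_of_ae hνae] with y hy h0y
      apply fmono
      have hkey : (i:ℝ)/((m:ℝ)+1) * t ≤ y := by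
        by_cases hi0 : i = 0
        · subst hi0
          simpa using h0y
        · have hci : c t i = t * i / ((m:ℝ)+1) := by simp [hcdef, hi0]
          have h5 := hy.1
          rw [hci, show t * (i:ℝ)/((m:ℝ)+1) = (i:ℝ)/((m:ℝ)+1)*t from by ring] at h5
          linarith
      rw [show (1 - (i:ℝ)/((m:ℝ)+1)) * t = t - (i:ℝ)/((m:ℝ)+1)*t from by ring]
      linarith
    calc ∫ y in Ioc (c t i) (c t (i+1)), f (t - y) ∂ν
        ≤ ∫ _ in Ioc (c t i) (c t (i+1)), f ((1 - (i:ℝ)/((m:ℝ)+1)) * t) ∂ν :=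
          integral_mono_ae ((integOn t).mono_set (hsub t ht i hi))
            (integrableOn_const hfin.ne) hbound
      _ = f ((1 - (i:ℝ)/((m:ℝ)+1)) * t) * (ν (Ioc (c t i) (c t (i+1)))).toReal := by
          rw [setIntegral_const, smul_eq_mul, mul_comm]; rfl
  have piece_lb : ∀ t : ℝ, 0 < t → ∀ i ∈ Finset.range (m+1),
      f ((1 - ((i:ℝ)+1)/((m:ℝ)+1)) * t) * (ν (Ioc (c t i) (c t (i+1)))).toReal
        ≤ ∫ y in Ioc (c t i) (c t (i+1)), f (t - y) ∂ν := by
    intro t ht i hi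
    have hfin : ν (Ioc (c t i) (c t (i+1))) < ⊤ :=
      lt_of_le_of_lt (measure_mono Ioc_subset_Iic_self) (hνfin _)
    have hbound : ∀ᵐ y ∂(ν.restrict (Ioc (c t i) (c t (i+1)))),
        f ((1 - ((i:ℝ)+1)/((m:ℝ)+1)) * t) ≤ f (t - y) := by
      filter_upwards [ae_restrict_mem measurableSet_Ioc] with y hy
      apply fmono
      have hci : c t (i+1) = t * ((i:ℝ)+1) / ((m:ℝ)+1) := by
        simp only [hcdef, if_neg (Nat.succ_ne_zero i)]
        push_cast
        ring
      have h5 := hy.2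
      rw [hci] at h5
      rw [show (1 - ((i:ℝ)+1)/((m:ℝ)+1)) * t = t - t*((i:ℝ)+1)/((m:ℝ)+1) from by ring]
      linarith
    calc f ((1 - ((i:ℝ)+1)/((m:ℝ)+1)) * t) * (ν (Ioc (c t i) (c t (i+1)))).toReal
        = ∫ _ in Ioc (c t i) (c t (i+1)), f ((1 - ((i:ℝ)+1)/((m:ℝ)+1)) * t) ∂ν := by
          rw [setIntegral_const, smul_eq_mul, mul_comm]; rfl
      _ ≤ ∫ y in Ioc (c t i) (c t (i+1)), f (t - y) ∂ν :=
          integral_mono_ae (integrableOn_const hfin.ne)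
            ((integOn t).mono_set (hsub t ht i hi)) hbound
  have w_eq : ∀ t : ℝ, 0 < t → ∀ i : ℕ,
      (ν (Ioc (c t i) (c t (i+1)))).toReal = g (c t (i+1)) - g (c t i) := by
    intro t ht i
    have hle := hcmono t ht (Nat.le_succ i)
    have hm : ν (Iic (c t (i+1))) = ν (Iic (c t i)) + ν (Ioc (c t i) (c t (i+1))) := by
      rw [← Iic_union_Ioc_eq_Iic hle, measure_union (Iic_disjoint_Ioc le_rfl) measurableSet_Ioc]
    rw [hg, hg, hm, ENNReal.toReal_add (hνfin _).ne
      (lt_of_le_of_lt (measure_mono Ioc_subset_Iic_self) (hνfin _)).ne]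
    ring
  have limA : ∀ i : ℕ, i < m+1 →
      Tendsto (fun t => f ((1 - (i:ℝ)/((m:ℝ)+1)) * t) / f t) atTop
        (𝓝 ((1 - (i:ℝ)/((m:ℝ)+1)) ^ α)) := by
    intro i hi
    apply hfreg
    have hlt : (i:ℝ) < (m:ℝ)+1 := by exact_mod_cast hi
    have h1 : (i:ℝ)/((m:ℝ)+1) < 1 := (div_lt_one hm0).2 hlt
    linarith
  have limB : ∀ j : ℕ, j ≤ m+1 → Tendsto (fun t => g (c t j) / g t) atTop
      (𝓝 (((j:ℝ)/((m:ℝ)+1)) ^ β)) := by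
    intro j _
    by_cases hj : j = 0
    · subst hj
      have hzero : ∀ t : ℝ, g (c t 0) / g t = 0 := by
        intro t
        rw [hczero t, gneg (-1) (by norm_num), zero_div]
      rw [show (((0:ℕ):ℝ)/((m:ℝ)+1)) ^ β = 0 by
        norm_num; exact Real.zero_rpow hβ.ne']
      exact Tendsto.congr (fun t => (hzero t).symm) tendsto_const_nhds
    · have hjpos : (0:ℝ) < (j:ℝ)/((m:ℝ)+1) := by
        have : 0 < (j:ℝ) := by exact_mod_cast Nat.pos_of_ne_zero hj
        positivity
      refine (hgreg _ hjpos).congr fun t => ?_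
      simp only [hcdef, if_neg hj]
      congr 1
      ring
  -- the limit sums
  have limSU : Tendsto (fun t => ∑ i ∈ Finset.range (m+1),
      (f ((1 - (i:ℝ)/((m:ℝ)+1)) * t) / f t) * (g (c t (i+1)) / g t - g (c t i) / g t))
      atTop (𝓝 (∑ i ∈ Finset.range (m+1),
      (1 - (i:ℝ)/((m:ℝ)+1)) ^ α
        * ((((i:ℝ)+1)/((m:ℝ)+1)) ^ β - ((i:ℝ)/((m:ℝ)+1)) ^ β))) := by
    apply tendsto_finset_sum
    intro i hi
    have hB1 := limB (i+1) (Finset.mem_range.1 hi)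
    have hB0 := limB i (Finset.mem_range.1 hi).le
    simp only [Nat.cast_add, Nat.cast_one] at hB1
    exact (limA i (Finset.mem_range.1 hi)).mul (hB1.sub hB0)
  have limSL : Tendsto (fun t => ∑ i ∈ Finset.range m,
      (f ((1 - ((i:ℝ)+1)/((m:ℝ)+1)) * t) / f t) * (g (c t (i+1)) / g t - g (c t i) / g t))
      atTop (𝓝 (∑ i ∈ Finset.range m,
      (1 - ((i:ℝ)+1)/((m:ℝ)+1)) ^ α
        * ((((i:ℝ)+1)/((m:ℝ)+1)) ^ β - ((i:ℝ)/((m:ℝ)+1)) ^ β))) := by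
    apply tendsto_finset_sum
    intro i hi
    have him : i < m := Finset.mem_range.1 hi
    have hi' : i + 1 < m + 1 := by omega
    have hA := limA (i+1) hi'
    simp only [Nat.cast_add, Nat.cast_one] at hA
    have hB1 := limB (i+1) hi'.le
    have hB0 := limB i (by omega)
    simp only [Nat.cast_add, Nat.cast_one] at hB1
    exact hA.mul (hB1.sub hB0)
  -- numeric comparisons
  obtain ⟨hsqL, hsqU⟩ := sum_squeeze hα hβ (m+1) (Nat.le_add_left 1 m)
  push_cast at hsqL hsqU
  have hCval := C_val hα hβ
  set C : ℝ := Real.Gamma (1+α) * Real.Gamma (1+β) / Real.Gamma (1+α+β) with hCdef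
  have hLdrop : (∑ i ∈ Finset.range (m+1),
      (1 - ((i:ℝ)+1)/((m:ℝ)+1)) ^ α
        * ((((i:ℝ)+1)/((m:ℝ)+1)) ^ β - ((i:ℝ)/((m:ℝ)+1)) ^ β))
      = ∑ i ∈ Finset.range m,
      (1 - ((i:ℝ)+1)/((m:ℝ)+1)) ^ α
        * ((((i:ℝ)+1)/((m:ℝ)+1)) ^ β - ((i:ℝ)/((m:ℝ)+1)) ^ β) := by
    rw [Finset.sum_range_succ]
    have hco : (1 - ((m:ℝ)+1)/((m:ℝ)+1)) ^ α = 0 := by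
      rw [div_self hm0.ne', sub_self]
      exact Real.zero_rpow hα.ne'
    rw [hco, zero_mul, add_zero]
  rw [hLdrop] at hsqL hgap
  rw [hCval] at hsqL hsqU
  have hUbd : (∑ i ∈ Finset.range (m+1),
      (1 - (i:ℝ)/((m:ℝ)+1)) ^ α
        * ((((i:ℝ)+1)/((m:ℝ)+1)) ^ β - ((i:ℝ)/((m:ℝ)+1)) ^ β)) < C + ε := by
    have : ε / 2 < ε := by linarith
    linarith
  have hLbd : C - ε < (∑ i ∈ Finset.range m,
      (1 - ((i:ℝ)+1)/((m:ℝ)+1)) ^ α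
        * ((((i:ℝ)+1)/((m:ℝ)+1)) ^ β - ((i:ℝ)/((m:ℝ)+1)) ^ β)) := by
    linarith
  have hUev := limSU.eventually_lt_const hUbd
  have hLev := limSL.eventually_const_lt hLbd
  filter_upwards [fpos, gpos, eventually_gt_atTop (0:ℝ), hUev, hLev] with t hft hgt ht hU hL
  have hfg : 0 < f t * g t := mul_pos hft hgt
  have hub : h t / (f t * g t) ≤ ∑ i ∈ Finset.range (m+1),
      (f ((1 - (i:ℝ)/((m:ℝ)+1)) * t) / f t) * (g (c t (i+1)) / g t - g (c t i) / g t) := by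
    have h1 : h t ≤ ∑ i ∈ Finset.range (m+1),
        f ((1 - (i:ℝ)/((m:ℝ)+1)) * t) * (ν (Ioc (c t i) (c t (i+1)))).toReal := by
      rw [hsplit t ht]
      exact Finset.sum_le_sum (piece_ub t ht)
    have h2 : (∑ i ∈ Finset.range (m+1),
        f ((1 - (i:ℝ)/((m:ℝ)+1)) * t) * (ν (Ioc (c t i) (c t (i+1)))).toReal) / (f t * g t)
        = ∑ i ∈ Finset.range (m+1),
        (f ((1 - (i:ℝ)/((m:ℝ)+1)) * t) / f t) * (g (c t (i+1)) / g t - g (c t i) / g t) := by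
      rw [Finset.sum_div]
      refine Finset.sum_congr rfl fun i _ => ?_
      rw [w_eq t ht i]
      field_simp
    rw [← h2]
    gcongr
  have hlb : (∑ i ∈ Finset.range m,
      (f ((1 - ((i:ℝ)+1)/((m:ℝ)+1)) * t) / f t) * (g (c t (i+1)) / g t - g (c t i) / g t))
      ≤ h t / (f t * g t) := by
    have h1 : (∑ i ∈ Finset.range m,
        f ((1 - ((i:ℝ)+1)/((m:ℝ)+1)) * t) * (ν (Ioc (c t i) (c t (i+1)))).toReal) ≤ h t := by
      rw [hsplit t ht]
      refine le_trans (Finset.sum_le_sum fun i hi =>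
        piece_lb t ht i (Finset.mem_range.2 ((Finset.mem_range.1 hi).trans_le (Nat.le_succ m)))) ?_
      exact Finset.sum_le_sum_of_subset_of_nonneg (Finset.range_subset_range.2 (Nat.le_succ m))
        fun i _ _ => setIntegral_nonneg measurableSet_Ioc fun y _ => fnn _
    have h2 : (∑ i ∈ Finset.range m,
        f ((1 - ((i:ℝ)+1)/((m:ℝ)+1)) * t) * (ν (Ioc (c t i) (c t (i+1)))).toReal) / (f t * g t)
        = ∑ i ∈ Finset.range m,
        (f ((1 - ((i:ℝ)+1)/((m:ℝ)+1)) * t) / f t)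
          * (g (c t (i+1)) / g t - g (c t i) / g t) := by
      rw [Finset.sum_div]
      refine Finset.sum_congr rfl fun i _ => ?_
      rw [w_eq t ht i]
      field_simp
    rw [← h2]
    gcongr
  rw [Real.dist_eq, abs_lt]
  constructor
  · linarith
  · linarith
end

section
/- Let f : [0,∞) → [0,∞) be nondecreasing and right-continuous with f(t) ~ A e^{βt} t^α ℓ(t) as t → ∞, where A, α, β > 0 and ℓ slowly varying. Then the exponentially tilted Stieltjes integral F(t) := ∫_{[0,t]} e^{−βy} df(y) satisfies F(t) ~ (βA/(1+α)) t^{1+α} ℓ(t) as t → ∞. -/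
open MeasureTheory Set Filter Topology
open scoped ENNReal


lemma my_uct (k : ℝ → ℝ) (hk : Measurable k)
    (hlim : ∀ u : ℝ, Tendsto (fun x => k (x + u) - k x) atTop (𝓝 0))
    (ε : ℝ) (hε : 0 < ε) :
    ∃ X : ℝ, ∀ x ≥ X, ∀ u ∈ Icc (0:ℝ) 1, |k (x + u) - k x| ≤ ε := by
  by_contra hcon
  push_neg at hcon
  choose x hx u hu hbig using hcon
  set y : ℕ → ℝ := fun n => x (n : ℝ) with hy
  have hyn : ∀ n : ℕ, (n : ℝ) ≤ y n := fun n => hx _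
  have hytop : Tendsto y atTop atTop :=
    tendsto_atTop_mono hyn tendsto_natCast_atTop_atTop
  have hztop : Tendsto (fun n => y n + u (n:ℝ)) atTop atTop := by
    apply tendsto_atTop_mono (fun n => ?_) hytop
    have := (hu (n:ℝ)).1
    linarith
  -- the bad sets
  set V : ℕ → Set ℝ := fun n => Icc (0:ℝ) 2 ∩ {v | ε/2 ≤ |k (y n + v) - k (y n)|} with hV
  set W : ℕ → Set ℝ := fun n => Icc (0:ℝ) 2 ∩ {v | ε/2 ≤ |k (y n + u (n:ℝ) + v) - k (y n + u (n:ℝ))|} with hW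
  have measV : ∀ n, MeasurableSet (V n) := by
    intro n
    exact measurableSet_Icc.inter
      (measurableSet_le measurable_const (((hk.comp (measurable_const.add measurable_id)).sub measurable_const).abs))
  have measW : ∀ n, MeasurableSet (W n) := by
    intro n
    exact measurableSet_Icc.inter
      (measurableSet_le measurable_const (((hk.comp (measurable_const.add measurable_id)).sub measurable_const).abs))
  -- generic convergence of measures fact
  have key : ∀ (S : ℕ → Set ℝ) (z : ℕ → ℝ), (∀ n, MeasurableSet (S n)) →
      (∀ n, S n = Icc (0:ℝ) 2 ∩ {v | ε/2 ≤ |k (z n + v) - k (z n)|}) →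
      Tendsto z atTop atTop →
      Tendsto (fun n => volume (S n)) atTop (𝓝 0) := by
    intro S z hSm hSdef hz
    have h0 : (0:ℝ≥0∞) = ∫⁻ _ : ℝ, 0 ∂volume := by simp
    have hvol : ∀ n, volume (S n) = ∫⁻ v, (S n).indicator (1 : ℝ → ℝ≥0∞) v ∂volume := by
      intro n; rw [lintegral_indicator_one (hSm n)]
    simp_rw [hvol]
    rw [h0]
    apply tendsto_lintegral_of_dominated_convergence
      ((Icc (0:ℝ) 2).indicator (1 : ℝ → ℝ≥0∞))
    · intro n; exact (measurable_one).indicator (hSm n)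
    · intro n
      filter_upwards with v
      by_cases hv : v ∈ S n
      · have hv2 : v ∈ Icc (0:ℝ) 2 := by rw [hSdef n] at hv; exact hv.1
        simp [indicator_of_mem hv, indicator_of_mem hv2]
      · simp [indicator_of_notMem hv]
    · rw [lintegral_indicator_one measurableSet_Icc]
      simp [Real.volume_Icc]
    · filter_upwards with v
      by_cases hv2 : v ∈ Icc (0:ℝ) 2
      · have : ∀ᶠ n in atTop, v ∉ S n := by
          have h1 : Tendsto (fun n => k (z n + v) - k (z n)) atTop (𝓝 0) := by
            have := (hlim v).comp hz
            simpa [Function.comp_def] using this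
          have h2 : ∀ᶠ n in atTop, |k (z n + v) - k (z n)| < ε/2 := by
            have := h1.abs
            simp only [abs_zero] at this
            exact this.eventually_lt_const (by linarith)
          filter_upwards [h2] with n hn
          rw [hSdef n]
          rintro ⟨-, hmem⟩
          exact absurd hn (not_lt.2 hmem)
        refine Tendsto.congr' (f₁ := fun _ => (0:ℝ≥0∞)) ?_ tendsto_const_nhds
        filter_upwards [this] with n hn
        simp [indicator_of_notMem hn]
      · have : ∀ n, v ∉ S n := by
          intro n; rw [hSdef n]; rintro ⟨hv, -⟩; exact hv2 hv
        simpa [indicator_of_notMem (this _)] using tendsto_const_nhds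
  have hVlim := key V y measV (fun n => rfl) hytop
  have hWlim := key W (fun n => y n + u (n:ℝ)) measW (fun n => rfl) hztop
  have hsum : Tendsto (fun n => volume (V n) + volume (W n)) atTop (𝓝 0) := by
    simpa using hVlim.add hWlim
  have hev : ∀ᶠ n in atTop, volume (V n) + volume (W n) < 1 :=
    hsum.eventually_lt_const (by norm_num)
  obtain ⟨n, hn⟩ := hev.exists
  -- find good point w
  set B : Set ℝ := V n ∪ ((fun w => w - u (n:ℝ)) ⁻¹' W n) with hB
  have hvolB : volume B ≤ volume (V n) + volume (W n) := by
    have hpre : volume ((fun w : ℝ => w - u (n:ℝ)) ⁻¹' W n) = volume (W n) := by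
      have e : (fun w : ℝ => w - u (n:ℝ)) = (fun w : ℝ => w + (-u (n:ℝ))) := by
        funext w; ring
      rw [e, measure_preimage_add_right]
    exact le_trans (measure_union_le _ _) (by rw [hpre])
  have hex : ∃ w ∈ Icc (1:ℝ) 2, w ∉ B := by
    by_contra hco
    push_neg at hco
    have hsub : Icc (1:ℝ) 2 ⊆ B := fun w hw => hco w hw
    have : volume (Icc (1:ℝ) 2) ≤ volume B := measure_mono hsub
    rw [Real.volume_Icc] at this
    norm_num at this
    exact absurd (lt_of_le_of_lt (le_trans this hvolB) hn) (lt_irrefl _)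
  obtain ⟨w, hw12, hwB⟩ := hex
  have hwV : w ∉ V n := fun h => hwB (Or.inl h)
  have hwW : w - u (n:ℝ) ∉ W n := fun h => hwB (Or.inr h)
  have hun := hu (n:ℝ)
  have hw02 : w ∈ Icc (0:ℝ) 2 := ⟨by linarith [hw12.1], hw12.2⟩
  have hwu02 : w - u (n:ℝ) ∈ Icc (0:ℝ) 2 := ⟨by linarith [hw12.1, hun.2], by linarith [hw12.2, hun.1]⟩
  have h1 : |k (y n + w) - k (y n)| < ε/2 := by
    by_contra hc
    exact hwV ⟨hw02, le_of_not_gt hc⟩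
  have h2 : |k (y n + u (n:ℝ) + (w - u (n:ℝ))) - k (y n + u (n:ℝ))| < ε/2 := by
    by_contra hc
    exact hwW ⟨hwu02, le_of_not_gt hc⟩
  have heq : y n + u (n:ℝ) + (w - u (n:ℝ)) = y n + w := by ring
  rw [heq] at h2
  have : |k (y n + u (n:ℝ)) - k (y n)| < ε := by
    calc |k (y n + u (n:ℝ)) - k (y n)|
        ≤ |k (y n + u (n:ℝ)) - k (y n + w)| + |k (y n + w) - k (y n)| := abs_sub_le _ _ _
      _ < ε/2 + ε/2 := by
          rw [abs_sub_comm]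
          exact add_lt_add h2 h1
      _ = ε := by ring
  exact absurd (hbig (n:ℝ)) (not_lt.2 (le_of_lt this))

lemma my_potter (k : ℝ → ℝ) (hk : Measurable k)
    (hlim : ∀ u : ℝ, Tendsto (fun x => k (x + u) - k x) atTop (𝓝 0))
    (ε : ℝ) (hε : 0 < ε) :
    ∃ X : ℝ, ∀ x ≥ X, ∀ u : ℝ, 0 ≤ u → |k (x + u) - k x| ≤ ε * (u + 1) := by
  obtain ⟨X, hX⟩ := my_uct k hk hlim ε hε
  refine ⟨X, fun x hx u hu => ?_⟩
  have step : ∀ n : ℕ, ∀ u : ℝ, 0 ≤ u → u ≤ n → |k (x + u) - k x| ≤ ε * n := by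
    intro n
    induction n with
    | zero =>
      intro u hu0 hun
      have : u = 0 := le_antisymm (by exact_mod_cast hun) hu0
      simp [this]
    | succ n ih =>
      intro u hu0 hun
      by_cases hcase : u ≤ n
      · refine le_trans (ih u hu0 hcase) ?_
        have : (n:ℝ) ≤ (n+1 : ℕ) := by push_cast; linarith
        nlinarith
      · push_neg at hcase
        have h1 : |k ((x + n) + (u - n)) - k (x + n)| ≤ ε := by
          apply hX (x + n) (by have : (0:ℝ) ≤ n := Nat.cast_nonneg n; linarith) (u - n)
          constructor
          · linarith
          · push_cast at hun ⊢; linarith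
        have h2 : |k (x + (n:ℝ)) - k x| ≤ ε * n := ih n (by positivity) le_rfl
        have heq : (x + n) + (u - n) = x + u := by ring
        rw [heq] at h1
        calc |k (x + u) - k x| ≤ |k (x + u) - k (x + n)| + |k (x + n) - k x| := abs_sub_le _ _ _
          _ ≤ ε + ε * n := add_le_add h1 h2
          _ = ε * (n + 1 : ℕ) := by push_cast; ring
  have hn := step ⌈u⌉₊ u hu (Nat.le_ceil u)
  refine le_trans hn ?_
  have : (⌈u⌉₊ : ℝ) ≤ u + 1 := (Nat.ceil_lt_add_one hu).le
  nlinarith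

lemma aux_flip {a b e p q : ℝ} (hpq : p * q = 1) (he : 0 < e) (hq : 0 ≤ q)
    (hab : a * e⁻¹ * p ≤ b) : a ≤ b * e * q := by
  calc a = a * (e⁻¹ * e) * (p * q) := by
        rw [inv_mul_cancel₀ (ne_of_gt he), hpq]; ring
    _ = (a * e⁻¹ * p) * (e * q) := by ring
    _ ≤ b * (e * q) := mul_le_mul_of_nonneg_right hab (by positivity)
    _ = b * e * q := by ring

lemma aux_flip2 {a b e p q : ℝ} (hpq : p * q = 1) (he : 0 < e) (hq : 0 ≤ q)
    (hab : b ≤ a * e * p) : b * e⁻¹ * q ≤ a := by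
  calc b * e⁻¹ * q ≤ (a * e * p) * e⁻¹ * q := by
        have := mul_le_mul_of_nonneg_right hab (mul_nonneg (le_of_lt (inv_pos.mpr he)) hq)
        calc b * e⁻¹ * q = b * (e⁻¹ * q) := by ring
          _ ≤ (a * e * p) * (e⁻¹ * q) := this
          _ = a * e * p * e⁻¹ * q := by ring
    _ = a * (e * e⁻¹) * (p * q) := by ring
    _ = a := by rw [mul_inv_cancel₀ (ne_of_gt he), hpq]; ring

lemma my_karamata (h : ℝ → ℝ) (hm : Measurable h) (h0 : ∀ s, 0 ≤ h s)
    (ρ : ℝ) (hρ : 0 < ρ)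
    (hpos : ∀ᶠ t in atTop, 0 < h t)
    (hreg : ∀ lam : ℝ, 0 < lam → Tendsto (fun t => h (lam * t) / h t) atTop (𝓝 (lam ^ ρ)))
    (hint : ∀ t : ℝ, IntegrableOn h (Icc 0 t)) :
    Tendsto (fun t => (∫ s in Icc 0 t, h s) / (t * h t)) atTop (𝓝 (1/(1+ρ))) := by
  obtain ⟨a, ha⟩ := eventually_atTop.mp hpos
  set T₀ : ℝ := max a 1 with hT₀def
  have hT₀1 : (1:ℝ) ≤ T₀ := le_max_right _ _
  have hT₀0 : (0:ℝ) < T₀ := lt_of_lt_of_le one_pos hT₀1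
  have hhT₀ : ∀ t, T₀ ≤ t → 0 < h t := fun t ht => ha t (le_trans (le_max_left _ _) ht)
  set k : ℝ → ℝ := fun x => Real.log (h (Real.exp x)) - ρ * x with hkdef
  have hkm : Measurable k :=
    (Real.measurable_log.comp (hm.comp Real.measurable_exp)).sub (measurable_id.const_mul ρ)
  have hklim : ∀ u : ℝ, Tendsto (fun x => k (x + u) - k x) atTop (𝓝 0) := by
    intro u
    have A2 : Tendsto (fun x => h (Real.exp u * Real.exp x) / h (Real.exp x)) atTop
        (𝓝 (Real.exp u ^ ρ)) := by
      have := (hreg _ (Real.exp_pos u)).comp Real.tendsto_exp_atTop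
      simpa [Function.comp_def] using this
    have A3 : Tendsto (fun x => Real.log (h (Real.exp u * Real.exp x) / h (Real.exp x)))
        atTop (𝓝 (ρ * u)) := by
      have hc : ContinuousAt Real.log (Real.exp u ^ ρ) :=
        Real.continuousAt_log (ne_of_gt (Real.rpow_pos_of_pos (Real.exp_pos u) ρ))
      have := hc.tendsto.comp A2
      rw [Real.log_rpow (Real.exp_pos u), Real.log_exp] at this
      simpa [Function.comp_def] using this
    have A4 : Tendsto (fun x => Real.log (h (Real.exp u * Real.exp x) / h (Real.exp x)) - ρ * u)
        atTop (𝓝 0) := by simpa using A3.sub_const (ρ * u)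
    refine A4.congr' ?_
    filter_upwards [eventually_ge_atTop (Real.log T₀), eventually_ge_atTop (Real.log T₀ - u)]
      with x h1 h2
    have hx1 : T₀ ≤ Real.exp x := by
      rw [← Real.exp_log hT₀0]; exact Real.exp_le_exp.mpr h1
    have hx2 : T₀ ≤ Real.exp (x + u) := by
      rw [← Real.exp_log hT₀0]; exact Real.exp_le_exp.mpr (by linarith)
    have hp1 : 0 < h (Real.exp x) := hhT₀ _ hx1
    have hp2 : 0 < h (Real.exp (x + u)) := hhT₀ _ hx2
    have hexp : Real.exp (x + u) = Real.exp u * Real.exp x := by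
      rw [Real.exp_add]; ring
    simp only [hkdef]
    rw [← hexp, Real.log_div (ne_of_gt hp2) (ne_of_gt hp1)]
    ring
  -- now the main argument
  rw [Metric.tendsto_nhds]
  intro δ hδ
  -- choose ε
  have hcont1 : Tendsto (fun e : ℝ => Real.exp e / (1 + ρ - e) + e) (𝓝 0) (𝓝 (1/(1+ρ))) := by
    have : ContinuousAt (fun e : ℝ => Real.exp e / (1 + ρ - e) + e) 0 := by
      apply ContinuousAt.add ?_ continuousAt_id
      apply ContinuousAt.div Real.continuous_exp.continuousAt
        ((continuous_const.sub continuous_id).continuousAt)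
      exact ne_of_gt (by norm_num; linarith)
    have h00 : Real.exp 0 / (1 + ρ - 0) + 0 = 1/(1+ρ) := by simp
    simpa [h00] using this.tendsto
  have hcont2 : Tendsto (fun e : ℝ => Real.exp (-e) / (1 + ρ + e) - e) (𝓝 0) (𝓝 (1/(1+ρ))) := by
    have : ContinuousAt (fun e : ℝ => Real.exp (-e) / (1 + ρ + e) - e) 0 := by
      apply ContinuousAt.sub ?_ continuousAt_id
      apply ContinuousAt.div (Real.continuous_exp.comp continuous_neg).continuousAt
        ((continuous_const.add continuous_id).continuousAt)
      exact ne_of_gt (by norm_num; linarith)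
    have h00 : Real.exp (-0) / (1 + ρ + 0) - 0 = 1/(1+ρ) := by simp
    simpa [h00] using this.tendsto
  have hev : ∀ᶠ e in 𝓝[>] (0:ℝ),
      (Real.exp e / (1 + ρ - e) + e < 1/(1+ρ) + δ) ∧
      (1/(1+ρ) - δ < Real.exp (-e) / (1 + ρ + e) - e) ∧ e < ρ/2 := by
    filter_upwards [
      ((hcont1.mono_left nhdsWithin_le_nhds).eventually (eventually_lt_nhds (show (1:ℝ)/(1+ρ) < 1/(1+ρ)+δ by linarith))),
      ((hcont2.mono_left nhdsWithin_le_nhds).eventually (eventually_gt_nhds (show (1:ℝ)/(1+ρ)-δ < 1/(1+ρ) by linarith))),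
      (eventually_nhdsWithin_of_eventually_nhds (eventually_lt_nhds (by linarith : (0:ℝ) < ρ/2)))]
      with e h1 h2 h3
    exact ⟨h1, h2, h3⟩
  obtain ⟨ε, ⟨hup1, hlo1, hερ⟩, hε⟩ := (hev.and self_mem_nhdsWithin).exists
  have hε0 : 0 < ε := hε
  have hρε1 : 0 < ρ - ε := by linarith
  have hρε2 : 0 < 1 + ρ - ε := by linarith
  obtain ⟨X, hX⟩ := my_potter k hkm hklim ε hε0
  set T : ℝ := max (Real.exp X) T₀ with hTdef
  have hT0 : 0 < T := lt_of_lt_of_le hT₀0 (le_max_right _ _)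
  have hT1 : 1 ≤ T := le_trans hT₀1 (le_max_right _ _)
  have hhT : ∀ t, T ≤ t → 0 < h t := fun t ht => hhT₀ t (le_trans (le_max_right _ _) ht)
  -- multiplicative Potter bounds
  have pB : ∀ σ τ : ℝ, T ≤ σ → σ ≤ τ →
      h τ ≤ h σ * Real.exp ε * (τ/σ) ^ (ρ+ε) ∧
      h σ * Real.exp (-ε) * (τ/σ) ^ (ρ-ε) ≤ h τ := by
    intro σ τ hσ hστ
    have hσ0 : 0 < σ := lt_of_lt_of_le hT0 hσ
    have hτ0 : 0 < τ := lt_of_lt_of_le hσ0 hστ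
    have hhσ : 0 < h σ := hhT σ hσ
    have hhτ : 0 < h τ := hhT τ (le_trans hσ hστ)
    have hXσ : X ≤ Real.log σ := by
      rw [Real.le_log_iff_exp_le hσ0]
      exact le_trans (le_max_left _ _) hσ
    have hu : 0 ≤ Real.log τ - Real.log σ := sub_nonneg.mpr (Real.log_le_log hσ0 hστ)
    have hh := hX (Real.log σ) hXσ (Real.log τ - Real.log σ) hu
    rw [show Real.log σ + (Real.log τ - Real.log σ) = Real.log τ by ring] at hh
    have hk1 : k (Real.log τ) = Real.log (h τ) - ρ * Real.log τ := by
      simp only [hkdef]; rw [Real.exp_log hτ0]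
    have hk2 : k (Real.log σ) = Real.log (h σ) - ρ * Real.log σ := by
      simp only [hkdef]; rw [Real.exp_log hσ0]
    rw [hk1, hk2] at hh
    obtain ⟨hlo, hup⟩ := abs_le.mp hh
    have hlogdiv : Real.log (τ/σ) = Real.log τ - Real.log σ :=
      Real.log_div (ne_of_gt hτ0) (ne_of_gt hσ0)
    constructor
    · calc h τ = Real.exp (Real.log (h τ)) := (Real.exp_log hhτ).symm
        _ ≤ Real.exp (Real.log (h σ) + ε + Real.log (τ/σ) * (ρ+ε)) := by
            apply Real.exp_le_exp.mpr
            rw [hlogdiv]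
            nlinarith [hup]
        _ = h σ * Real.exp ε * (τ/σ) ^ (ρ+ε) := by
            rw [Real.exp_add, Real.exp_add, Real.exp_log hhσ,
              ← Real.rpow_def_of_pos (div_pos hτ0 hσ0)]
    · calc h σ * Real.exp (-ε) * (τ/σ) ^ (ρ-ε)
          = Real.exp (Real.log (h σ) + (-ε) + Real.log (τ/σ) * (ρ-ε)) := by
            rw [Real.exp_add, Real.exp_add, Real.exp_log hhσ,
              ← Real.rpow_def_of_pos (div_pos hτ0 hσ0)]
        _ ≤ Real.exp (Real.log (h τ)) := by
            apply Real.exp_le_exp.mpr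
            rw [hlogdiv]
            nlinarith [hlo]
        _ = h τ := Real.exp_log hhτ
  -- flipped bounds
  have bUp : ∀ t s : ℝ, T ≤ s → s ≤ t → h s ≤ h t * Real.exp ε * (s/t) ^ (ρ-ε) := by
    intro t s hTs hst
    have hs0 : 0 < s := lt_of_lt_of_le hT0 hTs
    have ht0 : 0 < t := lt_of_lt_of_le hs0 hst
    have h2 := (pB s t hTs hst).2
    rw [Real.exp_neg] at h2
    have hpq : (t/s) ^ (ρ-ε) * (s/t) ^ (ρ-ε) = 1 := by
      rw [← Real.mul_rpow (by positivity) (by positivity),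
        show t/s*(s/t) = 1 by field_simp, Real.one_rpow]
    exact aux_flip hpq (Real.exp_pos ε) (Real.rpow_nonneg (by positivity) _) h2
  have bLo : ∀ t s : ℝ, T ≤ s → s ≤ t → h t * Real.exp (-ε) * (s/t) ^ (ρ+ε) ≤ h s := by
    intro t s hTs hst
    have hs0 : 0 < s := lt_of_lt_of_le hT0 hTs
    have ht0 : 0 < t := lt_of_lt_of_le hs0 hst
    have h1 := (pB s t hTs hst).1
    rw [Real.exp_neg]
    have hpq : (t/s) ^ (ρ+ε) * (s/t) ^ (ρ+ε) = 1 := by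
      rw [← Real.mul_rpow (by positivity) (by positivity),
        show t/s*(s/t) = 1 by field_simp, Real.one_rpow]
    exact aux_flip2 hpq (Real.exp_pos ε) (Real.rpow_nonneg (by positivity) _) h1
  -- growth of t * h t
  have hgrow : Tendsto (fun t => t * h t) atTop atTop := by
    have hlb : ∀ᶠ t in atTop, h T * Real.exp (-ε) * ((t/T)^(ρ-ε) * t) ≤ t * h t := by
      filter_upwards [eventually_ge_atTop T, eventually_gt_atTop 0] with t hTt ht0
      have h2 := (pB T t le_rfl hTt).2
      have := mul_le_mul_of_nonneg_left h2 (le_of_lt ht0)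
      calc h T * Real.exp (-ε) * ((t/T)^(ρ-ε) * t)
          = t * (h T * Real.exp (-ε) * (t/T)^(ρ-ε)) := by ring
        _ ≤ t * h t := this
    apply tendsto_atTop_mono' atTop hlb
    have h1 : Tendsto (fun t : ℝ => (t/T)^(ρ-ε)) atTop atTop := by
      apply (tendsto_rpow_atTop hρε1).comp
      exact Tendsto.atTop_div_const hT0 tendsto_id
    have h2 := h1.atTop_mul_atTop₀ tendsto_id
    exact Tendsto.const_mul_atTop (by have := hhT T le_rfl; positivity) h2
  set C : ℝ := ∫ s in Icc 0 T, h s with hCdef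
  have hC0 : 0 ≤ C := setIntegral_nonneg measurableSet_Icc (fun s _ => h0 s)
  have hCto0 : Tendsto (fun t => C/(t*h t)) atTop (𝓝 0) := tendsto_const_nhds.div_atTop hgrow
  have hsub : ∀ t : ℝ, Ioc T t ⊆ Icc 0 t := fun t s hs =>
    ⟨le_of_lt (lt_of_lt_of_le hT0 (le_of_lt hs.1)), hs.2⟩
  have hsplit : ∀ t, T ≤ t → ∫ s in Icc 0 t, h s = C + ∫ s in Ioc T t, h s := by
    intro t ht
    rw [show Icc (0:ℝ) t = Icc 0 T ∪ Ioc T t from (Icc_union_Ioc_eq_Icc (le_of_lt hT0) ht).symm,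
      setIntegral_union (by rw [Set.disjoint_left]; rintro x ⟨-, h1⟩ ⟨h2, -⟩; exact absurd h1 (not_le.mpr h2))
        measurableSet_Ioc (hint T) ((hint t).mono_set (hsub t))]
  have hcint : ∀ (c : ℝ) (t : ℝ), T ≤ t → IntegrableOn (fun s => (s/t)^c) (Ioc T t) := by
    intro c t ht
    have hco : ContinuousOn (fun s : ℝ => (s/t)^c) (Icc T t) := by
      apply ContinuousOn.rpow_const (continuousOn_id.div_const t)
      intro s hs
      left
      have hs0 : 0 < s := lt_of_lt_of_le hT0 hs.1
      have ht0 : 0 < t := lt_of_lt_of_le hT0 ht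
      exact ne_of_gt (div_pos hs0 ht0)
    exact hco.integrableOn_Icc.mono_set Ioc_subset_Icc_self
  have hJ : ∀ c : ℝ, 0 < c → ∀ t, T ≤ t → ∫ s in Ioc T t, (s/t)^c
      = (t^(c+1) - T^(c+1))/(c+1)/t^c := by
    intro c hc t ht
    have ht0 : 0 < t := lt_of_lt_of_le hT0 ht
    rw [setIntegral_congr_fun measurableSet_Ioc (g := fun s => s^c / t^c)
      (fun s hs => Real.div_rpow (le_of_lt (lt_trans hT0 hs.1)) (le_of_lt ht0) c)]
    rw [integral_div]
    congr 1
    rw [← intervalIntegral.integral_of_le ht, integral_rpow (Or.inl (by linarith))]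
  -- upper bound
  have hUp : ∀ᶠ t in atTop, (∫ s in Icc 0 t, h s)/(t * h t)
      ≤ C/(t*h t) + Real.exp ε/(1+ρ-ε) := by
    filter_upwards [eventually_ge_atTop T] with t ht
    have ht0 : 0 < t := lt_of_lt_of_le hT0 ht
    have hht : 0 < h t := hhT t ht
    have hth : 0 < t * h t := mul_pos ht0 hht
    rw [hsplit t ht, add_div]
    apply add_le_add le_rfl
    rw [div_le_iff₀ hth]
    have htc : 0 < t^(ρ-ε) := Real.rpow_pos_of_pos ht0 _
    calc ∫ s in Ioc T t, h s
        ≤ ∫ s in Ioc T t, h t * Real.exp ε * (s/t)^(ρ-ε) := by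
          apply setIntegral_mono_on ((hint t).mono_set (hsub t))
            (((hcint (ρ-ε) t ht).const_mul _)) measurableSet_Ioc
          intro s hs
          exact bUp t s (le_of_lt hs.1) hs.2
      _ = h t * Real.exp ε * ∫ s in Ioc T t, (s/t)^(ρ-ε) := by
          rw [MeasureTheory.integral_const_mul]
      _ = h t * Real.exp ε * ((t^(ρ-ε+1) - T^(ρ-ε+1))/(ρ-ε+1)/t^(ρ-ε)) := by
          rw [hJ (ρ-ε) hρε1 t ht]
      _ ≤ h t * Real.exp ε * (t^(ρ-ε+1)/(ρ-ε+1)/t^(ρ-ε)) := by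
          have hTc : (0:ℝ) ≤ T^(ρ-ε+1) := Real.rpow_nonneg (le_of_lt hT0) _
          have htc2 : (0:ℝ) < t^(ρ-ε) := Real.rpow_pos_of_pos ht0 _
          apply mul_le_mul_of_nonneg_left _ (by positivity)
          gcongr
          linarith
      _ = Real.exp ε/(1+ρ-ε) * (t * h t) := by
          rw [Real.rpow_add_one (ne_of_gt ht0)]
          field_simp
          ring
  -- lower bound
  have hLo : ∀ᶠ t in atTop, Real.exp (-ε)/(1+ρ+ε) * (1 - (T/t)^(ρ+ε+1))
      ≤ (∫ s in Icc 0 t, h s)/(t * h t) := by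
    filter_upwards [eventually_ge_atTop T] with t ht
    have ht0 : 0 < t := lt_of_lt_of_le hT0 ht
    have hht : 0 < h t := hhT t ht
    have hth : 0 < t * h t := mul_pos ht0 hht
    rw [hsplit t ht]
    have step1 : Real.exp (-ε)/(1+ρ+ε) * (1 - (T/t)^(ρ+ε+1)) * (t * h t)
        ≤ ∫ s in Ioc T t, h s := by
      calc Real.exp (-ε)/(1+ρ+ε) * (1 - (T/t)^(ρ+ε+1)) * (t * h t)
          = h t * Real.exp (-ε) * ((t^(ρ+ε+1) - T^(ρ+ε+1))/(ρ+ε+1)/t^(ρ+ε)) := by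
            rw [Real.div_rpow (le_of_lt hT0) (le_of_lt ht0),
              Real.rpow_add_one (ne_of_gt ht0)]
            have htc : (0:ℝ) < t^(ρ+ε) := Real.rpow_pos_of_pos ht0 _
            field_simp
            ring
        _ = h t * Real.exp (-ε) * ∫ s in Ioc T t, (s/t)^(ρ+ε) := by
            rw [hJ (ρ+ε) (by linarith) t ht]
        _ = ∫ s in Ioc T t, h t * Real.exp (-ε) * (s/t)^(ρ+ε) := by
            rw [MeasureTheory.integral_const_mul]
        _ ≤ ∫ s in Ioc T t, h s := by
            apply setIntegral_mono_on (((hcint (ρ+ε) t ht).const_mul _))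
              ((hint t).mono_set (hsub t)) measurableSet_Ioc
            intro s hs
            exact bLo t s (le_of_lt hs.1) hs.2
    have hmain : Real.exp (-ε)/(1+ρ+ε) * (1 - (T/t)^(ρ+ε+1)) ≤ (∫ s in Ioc T t, h s)/(t*h t) := by
      rw [le_div_iff₀ hth]
      exact step1
    have h2 : (∫ s in Ioc T t, h s)/(t*h t) ≤ (C + ∫ s in Ioc T t, h s)/(t*h t) :=
      (div_le_div_iff_of_pos_right hth).mpr (by linarith)
    linarith
  -- θ → 0
  have hθ : Tendsto (fun t => (T/t)^(ρ+ε+1)) atTop (𝓝 0) := by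
    have hc : (0:ℝ) < ρ+ε+1 := by linarith
    have base : Tendsto (fun t : ℝ => T^(ρ+ε+1)/t^(ρ+ε+1)) atTop (𝓝 0) :=
      tendsto_const_nhds.div_atTop (tendsto_rpow_atTop hc)
    apply base.congr'
    filter_upwards [eventually_gt_atTop 0] with t ht0
    rw [Real.div_rpow (le_of_lt hT0) (le_of_lt ht0)]
  -- finish
  filter_upwards [hUp, hLo, hCto0.eventually_lt_const hε0,
    hθ.eventually_lt_const hε0, eventually_ge_atTop T] with t h1 h2 h3 h4 ht
  have ht0 : 0 < t := lt_of_lt_of_le hT0 ht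
  have hθ0 : 0 ≤ (T/t)^(ρ+ε+1) := Real.rpow_nonneg (by positivity) _
  rw [Real.dist_eq]
  rw [abs_lt]
  constructor
  · -- lower
    have hle1 : Real.exp (-ε)/(1+ρ+ε) ≤ 1 := by
      rw [div_le_one (by linarith)]
      have := Real.exp_le_one_iff.mpr (le_of_lt (neg_neg_iff_pos.mpr hε0))
      linarith
    have hd0 : 0 < Real.exp (-ε)/(1+ρ+ε) := by positivity
    have hdθ : Real.exp (-ε)/(1+ρ+ε) * (T/t)^(ρ+ε+1) ≤ (T/t)^(ρ+ε+1) :=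
      mul_le_of_le_one_left hθ0 hle1
    have hexp : Real.exp (-ε)/(1+ρ+ε) * (1 - (T/t)^(ρ+ε+1))
        = Real.exp (-ε)/(1+ρ+ε) - Real.exp (-ε)/(1+ρ+ε) * (T/t)^(ρ+ε+1) := by ring
    linarith
  · -- upper
    linarith



lemma my_parts (β : ℝ) (hβ : 0 < β) (μ : Measure ℝ) (hsupp : μ (Iio 0) = 0)
    (hfin : ∀ t : ℝ, μ (Iic t) < ⊤) (t : ℝ) (ht : 0 ≤ t) :
    ∫ y in Icc 0 t, Real.exp (-β * y) ∂μ
      = Real.exp (-β * t) * (μ (Iic t)).toReal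
        + ∫ s in Icc 0 t, β * Real.exp (-β * s) * (μ (Iic s)).toReal := by
  set f : ℝ → ℝ := fun s => (μ (Iic s)).toReal with hfdef
  have hf_nonneg : ∀ s, 0 ≤ f s := fun s => ENNReal.toReal_nonneg
  have hf_mono : Monotone f := by
    intro s₁ s₂ hs
    exact ENNReal.toReal_mono (ne_of_lt (hfin s₂)) (measure_mono (Iic_subset_Iic.mpr hs))
  have hf_meas : Measurable f := hf_mono.measurable
  have hμfin : μ (Icc 0 t) < ⊤ := lt_of_le_of_lt (measure_mono Icc_subset_Iic_self) (hfin t)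
  haveI : IsFiniteMeasure (μ.restrict (Icc 0 t)) := by
    constructor
    rw [Measure.restrict_apply_univ]
    exact hμfin
  have hIcc : ∀ s : ℝ, 0 ≤ s → μ (Icc 0 s) = μ (Iic s) := by
    intro s hs
    apply le_antisymm (measure_mono Icc_subset_Iic_self)
    have hdec : Iic s = Iio 0 ∪ Icc 0 s := by
      ext x
      simp only [mem_Iic, mem_union, mem_Iio, mem_Icc]
      constructor
      · intro hx
        rcases lt_or_ge x 0 with h | h
        · exact Or.inl h
        · exact Or.inr ⟨h, hx⟩
      · rintro (h | ⟨-, h⟩)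
        · linarith
        · exact h
    calc μ (Iic s) = μ (Iio 0 ∪ Icc 0 s) := by rw [← hdec]
      _ ≤ μ (Iio 0) + μ (Icc 0 s) := measure_union_le _ _
      _ = μ (Icc 0 s) := by rw [hsupp, zero_add]
  set ψ : ℝ → ℝ≥0∞ := fun s => ENNReal.ofReal (β * Real.exp (-β * s)) with hψdef
  have hlin : Continuous fun y : ℝ => -β * y := by fun_prop
  have hcontA : Continuous fun y : ℝ => Real.exp (-β * y) := hlin.rexp
  have hψcont : Continuous (fun s : ℝ => β * Real.exp (-β * s)) :=
    continuous_const.mul hcontA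
  have hψm : Measurable ψ := ENNReal.measurable_ofReal.comp hψcont.measurable
  -- step A
  have hA : (∫ y in Icc 0 t, Real.exp (-β * y) ∂μ)
      = (∫⁻ y in Icc 0 t, ENNReal.ofReal (Real.exp (-β * y)) ∂μ).toReal := by
    rw [integral_eq_lintegral_of_nonneg_ae (ae_of_all _ (fun y => le_of_lt (Real.exp_pos _)))
      hcontA.aestronglyMeasurable]
  -- step B
  have hB : ∀ y ∈ Icc (0:ℝ) t, ENNReal.ofReal (Real.exp (-β * y))
      = ENNReal.ofReal (Real.exp (-β * t)) + ∫⁻ s in Icc 0 t, (Ici y).indicator ψ s := by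
    intro y hy
    have hyt : y ≤ t := hy.2
    have hy0 : 0 ≤ y := hy.1
    have hinter : Ici y ∩ Icc 0 t = Icc y t := by
      ext x
      simp only [mem_inter_iff, mem_Ici, mem_Icc]
      constructor
      · rintro ⟨h1, -, h2⟩; exact ⟨h1, h2⟩
      · rintro ⟨h1, h2⟩; exact ⟨h1, le_trans hy0 h1, h2⟩
    have hreal : ∫ s in Icc y t, β * Real.exp (-β * s) = Real.exp (-β*y) - Real.exp (-β*t) := by
      rw [integral_Icc_eq_integral_Ioc, ← intervalIntegral.integral_of_le hyt]
      have hderiv : ∀ s ∈ uIcc y t, HasDerivAt (fun s : ℝ => -Real.exp (-β * s))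
          (β * Real.exp (-β * s)) s := by
        intro s _
        have h1 : HasDerivAt (fun s : ℝ => -β * s) (-β) s := by
          simpa using (hasDerivAt_id s).const_mul (-β)
        have h2 := h1.exp
        have h3 := h2.neg
        exact h3.congr_deriv (by ring)
      rw [intervalIntegral.integral_eq_sub_of_hasDerivAt hderiv
        (hψcont.intervalIntegrable y t)]
      ring
    have hint_eval : (∫⁻ s in Icc 0 t, (Ici y).indicator ψ s)
        = ENNReal.ofReal (Real.exp (-β*y) - Real.exp (-β*t)) := by
      rw [lintegral_indicator measurableSet_Ici, Measure.restrict_restrict measurableSet_Ici,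
        hinter, ← ofReal_integral_eq_lintegral_ofReal
          (hψcont.integrableOn_Icc) (ae_of_all _ (fun s => by positivity)), hreal]
    rw [hint_eval, ← ENNReal.ofReal_add (le_of_lt (Real.exp_pos _))
      (sub_nonneg.mpr (Real.exp_le_exp.mpr (by nlinarith)))]
    congr 1
    ring
  -- step C
  have hC : (∫⁻ y in Icc 0 t, ENNReal.ofReal (Real.exp (-β*y)) ∂μ)
      = ENNReal.ofReal (Real.exp (-β*t)) * μ (Icc 0 t)
        + ∫⁻ y in Icc 0 t, (∫⁻ s in Icc 0 t, (Ici y).indicator ψ s) ∂μ := by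
    rw [setLIntegral_congr_fun measurableSet_Icc hB]
    rw [lintegral_add_left measurable_const, lintegral_const, Measure.restrict_apply_univ]
  -- step D : swap
  have hmeasG : Measurable (Function.uncurry (fun y s => (Ici y).indicator ψ s)) := by
    have heq : Function.uncurry (fun y s => (Ici y).indicator ψ s)
        = fun p : ℝ × ℝ => ({q : ℝ × ℝ | q.1 ≤ q.2}).indicator (fun q => ψ q.2) p := by
      funext p
      rcases p with ⟨y, s⟩
      by_cases hys : y ≤ s
      · rw [Function.uncurry]
        simp only [indicator_of_mem (mem_Ici.mpr hys)]
        rw [indicator_of_mem (by exact hys : (y, s) ∈ {q : ℝ × ℝ | q.1 ≤ q.2})]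
      · rw [Function.uncurry]
        simp only [indicator_of_notMem (fun h => hys (mem_Ici.mp h))]
        rw [indicator_of_notMem (by exact hys : (y, s) ∉ {q : ℝ × ℝ | q.1 ≤ q.2})]
    rw [heq]
    exact (hψm.comp measurable_snd).indicator (measurableSet_le measurable_fst measurable_snd)
  have hswap : (∫⁻ y in Icc 0 t, (∫⁻ s in Icc 0 t, (Ici y).indicator ψ s) ∂μ)
      = ∫⁻ s in Icc 0 t, (∫⁻ y in Icc 0 t, (Ici y).indicator ψ s ∂μ) := by
    exact lintegral_lintegral_swap hmeasG.aemeasurable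
  -- step E : inner integral over y
  have hE : ∀ s ∈ Icc (0:ℝ) t, (∫⁻ y in Icc 0 t, (Ici y).indicator ψ s ∂μ)
      = ψ s * μ (Iic s) := by
    intro s hs
    have hptw : ∀ y : ℝ, (Ici y).indicator ψ s = (Iic s).indicator (fun _ => ψ s) y := by
      intro y
      by_cases hys : y ≤ s
      · rw [indicator_of_mem (mem_Ici.mpr hys), indicator_of_mem (mem_Iic.mpr hys)]
      · rw [indicator_of_notMem (fun h => hys (mem_Ici.mp h)),
          indicator_of_notMem (fun h => hys (mem_Iic.mp h))]
    rw [lintegral_congr hptw, lintegral_indicator_const measurableSet_Iic,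
      Measure.restrict_apply measurableSet_Iic]
    congr 1
    have : Iic s ∩ Icc 0 t = Icc 0 s := by
      ext x
      simp only [mem_inter_iff, mem_Iic, mem_Icc]
      constructor
      · rintro ⟨h1, h2, -⟩; exact ⟨h2, h1⟩
      · rintro ⟨h1, h2⟩; exact ⟨h2, h1, le_trans h2 hs.2⟩
    rw [this, hIcc s hs.1]
  -- step F : outer integral over s
  have hintF : IntegrableOn (fun s => β * Real.exp (-β * s) * f s) (Icc 0 t) := by
    apply Measure.integrableOn_of_bounded (M := β * f t)
    · rw [Real.volume_Icc]; exact ENNReal.ofReal_ne_top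
    · exact (hψcont.measurable.mul hf_meas).aestronglyMeasurable
    · rw [ae_restrict_iff' measurableSet_Icc]
      filter_upwards with s
      intro hs
      have h1 : Real.exp (-β * s) ≤ 1 := Real.exp_le_one_iff.mpr (by nlinarith [hs.1])
      have h2 : f s ≤ f t := hf_mono hs.2
      rw [Real.norm_eq_abs, abs_of_nonneg (by positivity)]
      calc β * Real.exp (-β*s) * f s ≤ β * 1 * f s := by
            apply mul_le_mul_of_nonneg_right _ (hf_nonneg s)
            apply mul_le_mul_of_nonneg_left h1 (le_of_lt hβ)
        _ = β * f s := by ring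
        _ ≤ β * f t := mul_le_mul_of_nonneg_left h2 (le_of_lt hβ)
  have hF : (∫⁻ s in Icc 0 t, ψ s * μ (Iic s))
      = ENNReal.ofReal (∫ s in Icc 0 t, β * Real.exp (-β * s) * f s) := by
    rw [ofReal_integral_eq_lintegral_ofReal hintF
      (ae_of_all _ (fun s => by positivity))]
    apply setLIntegral_congr_fun measurableSet_Icc
    intro s _
    show ψ s * μ (Iic s) = ENNReal.ofReal (β * Real.exp (-β*s) * f s)
    rw [ENNReal.ofReal_mul (by positivity : (0:ℝ) ≤ β * Real.exp (-β*s))]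
    congr 1
    exact (ENNReal.ofReal_toReal (ne_of_lt (hfin s))).symm
  -- final assembly
  have hE' := setLIntegral_congr_fun (μ := volume) measurableSet_Icc hE
  have hfinal1 : (ENNReal.ofReal (Real.exp (-β*t)) * μ (Icc 0 t)) ≠ ⊤ :=
    ENNReal.mul_ne_top ENNReal.ofReal_ne_top (ne_of_lt hμfin)
  calc ∫ y in Icc 0 t, Real.exp (-β*y) ∂μ
      = (ENNReal.ofReal (Real.exp (-β*t)) * μ (Icc 0 t)
         + ENNReal.ofReal (∫ s in Icc 0 t, β * Real.exp (-β*s) * f s)).toReal := by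
        rw [hA, hC, hswap, hE', hF]
    _ = Real.exp (-β*t) * (μ (Iic t)).toReal + ∫ s in Icc 0 t, β * Real.exp (-β*s) * f s := by
        rw [ENNReal.toReal_add hfinal1 ENNReal.ofReal_ne_top, ENNReal.toReal_mul,
          ENNReal.toReal_ofReal (le_of_lt (Real.exp_pos _)),
          ENNReal.toReal_ofReal (setIntegral_nonneg measurableSet_Icc
            (fun s _ => by positivity)),
          hIcc t ht]

/-- let `f : [0,∞) → [0,∞)` be nondecreasing and right-continuous
(vanishing at `0⁻`, represented by `f t = μ (Iic t)`) with
`f(t) ~ A e^{βt} t^α ℓ(t)` as `t → ∞`, where `A, α, β > 0` and `ℓ` is slowly varying.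
Then `F(t) := ∫_{[0,t]} e^{-βy} df(y)` satisfies `F(t) ~ (βA/(1+α)) t^{1+α} ℓ(t)`. -/
theorem stmt4 (A α β : ℝ) (hA : 0 < A) (hα : 0 < α) (hβ : 0 < β)
    (ℓ : ℝ → ℝ)
    (hslow : ∀ lam : ℝ, 0 < lam →
      Tendsto (fun t : ℝ => ℓ (lam * t) / ℓ t) atTop (𝓝 1))
    (f : ℝ → ℝ) (μ : MeasureTheory.Measure ℝ)
    (hsupp : μ (Set.Iio 0) = 0) (hfin : ∀ t : ℝ, μ (Set.Iic t) < ⊤)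
    (hrep : ∀ t : ℝ, f t = (μ (Set.Iic t)).toReal)
    (hasymp : Tendsto
      (fun t : ℝ => f t / (A * Real.exp (β * t) * t ^ α * ℓ t)) atTop (𝓝 1))
    (F : ℝ → ℝ) (hF : ∀ t : ℝ, F t = ∫ y in Set.Icc 0 t, Real.exp (-β * y) ∂μ) :
    Tendsto (fun t : ℝ => F t / (β * A / (1 + α) * t ^ (1 + α) * ℓ t)) atTop (𝓝 1) := by
  have hf_nonneg : ∀ s, 0 ≤ f s := fun s => (hrep s) ▸ ENNReal.toReal_nonneg
  have hf_mono : Monotone f := by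
    intro s₁ s₂ hs
    rw [hrep s₁, hrep s₂]
    exact ENNReal.toReal_mono (ne_of_lt (hfin s₂)) (measure_mono (Iic_subset_Iic.mpr hs))
  have hf_meas : Measurable f := hf_mono.measurable
  set h : ℝ → ℝ := fun s => Real.exp (-β * s) * f s with hhdef
  have hcontE : Continuous fun s : ℝ => Real.exp (-β * s) := by fun_prop
  have hm : Measurable h := hcontE.measurable.mul hf_meas
  have h0 : ∀ s, 0 ≤ h s := fun s => mul_nonneg (le_of_lt (Real.exp_pos _)) (hf_nonneg s)
  have hint : ∀ t : ℝ, IntegrableOn h (Icc 0 t) := by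
    intro t
    apply Measure.integrableOn_of_bounded (M := f t)
    · rw [Real.volume_Icc]; exact ENNReal.ofReal_ne_top
    · exact hm.aestronglyMeasurable
    · rw [ae_restrict_iff' measurableSet_Icc]
      filter_upwards with s hs
      have h1 : Real.exp (-β * s) ≤ 1 := Real.exp_le_one_iff.mpr (by nlinarith [hs.1])
      rw [Real.norm_eq_abs, abs_of_nonneg (h0 s)]
      calc Real.exp (-β*s) * f s ≤ 1 * f s :=
            mul_le_mul_of_nonneg_right h1 (hf_nonneg s)
        _ = f s := one_mul _
        _ ≤ f t := hf_mono hs.2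
  -- positivity of ℓ eventually
  have hℓpos : ∀ᶠ t in atTop, 0 < ℓ t := by
    filter_upwards [hasymp.eventually_const_lt (show (1:ℝ)/2 < 1 by norm_num),
      eventually_gt_atTop 0] with t hrat ht0
    by_contra hc
    push_neg at hc
    have hD : A * Real.exp (β*t) * t^α * ℓ t ≤ 0 := by
      have hpos : 0 < A * Real.exp (β*t) * t^α := by positivity
      exact mul_nonpos_of_nonneg_of_nonpos (le_of_lt hpos) hc
    have : f t / (A * Real.exp (β*t) * t^α * ℓ t) ≤ 0 :=
      div_nonpos_iff.mpr (Or.inl ⟨hf_nonneg t, hD⟩)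
    linarith
  -- ratio for h
  have hr : Tendsto (fun t => h t / (A * t^α * ℓ t)) atTop (𝓝 1) := by
    apply hasymp.congr'
    filter_upwards [eventually_gt_atTop 0] with t ht0
    rcases eq_or_ne (A * t^α * ℓ t) 0 with hz | hz
    · have hz2 : A * Real.exp (β*t) * t^α * ℓ t = Real.exp (β*t) * (A * t^α * ℓ t) := by ring
      rw [hz2, hz, mul_zero, div_zero, div_zero]
    · have he : Real.exp (β*t) ≠ 0 := Real.exp_ne_zero _
      show f t / (A * Real.exp (β*t) * t^α * ℓ t) = Real.exp (-β*t) * f t / (A * t^α * ℓ t)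
      have htα : t ^ α ≠ 0 := ne_of_gt (Real.rpow_pos_of_pos ht0 _)
      have hℓt : ℓ t ≠ 0 := by
        intro hl0
        exact hz (by rw [hl0, mul_zero])
      rw [neg_mul, Real.exp_neg]
      rw [div_eq_div_iff (by rw [show A * Real.exp (β*t) * t^α * ℓ t = Real.exp (β*t) * (A * t^α * ℓ t) by ring]; exact mul_ne_zero he hz) hz]
      field_simp
  have hhpos : ∀ᶠ t in atTop, 0 < h t := by
    filter_upwards [hr.eventually_const_lt (show (1:ℝ)/2 < 1 by norm_num),
      eventually_gt_atTop 0, hℓpos] with t hrat ht0 hℓt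
    have hden : 0 < A * t^α * ℓ t := by
      have : (0:ℝ) < t^α := Real.rpow_pos_of_pos ht0 _
      positivity
    have hratpos : 0 < h t / (A * t^α * ℓ t) := by linarith
    rcases div_pos_iff.mp hratpos with ⟨h1, -⟩ | ⟨-, h2⟩
    · exact h1
    · linarith
  -- regular variation of h
  have hreg : ∀ lam : ℝ, 0 < lam →
      Tendsto (fun t => h (lam * t) / h t) atTop (𝓝 (lam ^ α)) := by
    intro lam hlam
    have hmul : Tendsto (fun t : ℝ => lam * t) atTop atTop :=
      Tendsto.const_mul_atTop hlam tendsto_id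
    have hrc : Tendsto (fun t => h (lam * t) / (A * (lam*t)^α * ℓ (lam*t))) atTop (𝓝 1) := by
      have := hr.comp hmul
      simpa [Function.comp_def] using this
    have hslc : Tendsto (fun t => ℓ (lam * t) / ℓ t) atTop (𝓝 1) := hslow lam hlam
    have hrinv : Tendsto (fun t => (h t / (A * t^α * ℓ t))⁻¹) atTop (𝓝 1) := by
      simpa using hr.inv₀ one_ne_zero
    have hprod := (hrc.mul ((tendsto_const_nhds : Tendsto (fun _ : ℝ => lam ^ α) atTop (𝓝 (lam ^ α))).mul hslc)).mul hrinv
    have hlim : (1 : ℝ) * (lam ^ α * 1) * 1 = lam ^ α := by ring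
    rw [hlim] at hprod
    apply hprod.congr'
    filter_upwards [eventually_gt_atTop 0, hℓpos, hmul.eventually hℓpos,
      hhpos.and (hmul.eventually hhpos)] with t ht0 hℓt hℓlt ⟨hht, hhlt⟩
    have htα : (0:ℝ) < t^α := Real.rpow_pos_of_pos ht0 _
    have hlt0 : (0:ℝ) < lam * t := by positivity
    have hltα : (0:ℝ) < (lam*t)^α := Real.rpow_pos_of_pos hlt0 _
    have hmulr : (lam*t)^α = lam^α * t^α := Real.mul_rpow (le_of_lt hlam) (le_of_lt ht0)
    rw [hmulr]
    field_simp
  -- Karamata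
  have hK : Tendsto (fun t => (∫ s in Icc 0 t, h s) / (t * h t)) atTop (𝓝 (1/(1+α))) :=
    my_karamata h hm h0 α hα hhpos hreg hint
  -- representation of F
  have hFrep : ∀ᶠ t in atTop, F t = h t + β * ∫ s in Icc 0 t, h s := by
    filter_upwards [eventually_ge_atTop 0] with t ht0
    rw [hF t, my_parts β hβ μ hsupp hfin t ht0, ← hrep t]
    congr 1
    rw [setIntegral_congr_fun measurableSet_Icc
      (g := fun s => β * (Real.exp (-β*s) * f s))
      (fun s _ => by rw [← hrep s]; ring)]
    rw [MeasureTheory.integral_const_mul]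
  -- limit pieces
  have hz1 : Tendsto (fun t : ℝ => (1+α)/(β*t)) atTop (𝓝 0) :=
    tendsto_const_nhds.div_atTop (Tendsto.const_mul_atTop hβ tendsto_id)
  have hT1 : Tendsto (fun t => (h t / (A * t^α * ℓ t)) * ((1+α)/(β*t))) atTop (𝓝 0) := by
    simpa using hr.mul hz1
  have hT2 : Tendsto (fun t => ((∫ s in Icc 0 t, h s) / (t * h t))
      * (h t / (A * t^α * ℓ t)) * (1+α)) atTop (𝓝 1) := by
    have h2 := (hK.mul hr).mul_const (1+α)
    have hval : (1/(1+α) * 1) * (1+α) = 1 := by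
      field_simp
    rw [hval] at h2
    exact h2
  have hsum : Tendsto (fun t => (h t / (A * t^α * ℓ t)) * ((1+α)/(β*t))
      + ((∫ s in Icc 0 t, h s) / (t * h t)) * (h t / (A * t^α * ℓ t)) * (1+α))
      atTop (𝓝 1) := by
    simpa using hT1.add hT2
  apply hsum.congr'
  filter_upwards [hFrep, eventually_gt_atTop 0, hℓpos, hhpos] with t hFt ht0 hℓt hht
  have htα : (0:ℝ) < t^α := Real.rpow_pos_of_pos ht0 _
  have ht1α : t^(1+α) = t * t^α := by
    rw [Real.rpow_add ht0, Real.rpow_one]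
  rw [hFt, ht1α]
  have h1α : (1+α) ≠ 0 := by linarith
  field_simp
end

section
/- Let W : [0,∞) → ℝ be continuous with W(0)=0, let α > 0, and for j ≥ 1 define W_j(u) = j∫_0^u W(u−y) d(y^{α(j−1)}) (with W_1 = W). Then for every integer k ≥ 1 and u ≥ 0: ∫_0^u W(u−y) d(y^{αk}) + (Γ(1+αk)/(Γ(1+α)Γ(1+α(k−1)))) ∫_0^u W_k(u−y) d(y^α) = W_{k+1}(u). -/
open MeasureTheory Set Filter Topology intervalIntegral

/-- The Lebesgue–Stieltjes integral `∫_0^u f(u-y) d(y^β) = β ∫_0^u f(u-y) y^{β-1} dy`. -/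
noncomputable def LSint (f : ℝ → ℝ) (β : ℝ) (u : ℝ) : ℝ :=
  β * ∫ y in (0:ℝ)..u, f (u - y) * y ^ (β - 1)

/-- `W_1 = W` and, for `j ≥ 2`, `W_j(u) = j ∫_0^u W(u-y) d(y^{α(j-1)})`. -/
noncomputable def Wfun (W : ℝ → ℝ) (α : ℝ) : ℕ → ℝ → ℝ
  | 1 => W
  | j => fun u => j * LSint W (α * ((j : ℝ) - 1)) u

section Aux

lemma beta_scaled {a b z : ℝ} (ha : 0 < a) (hb : 0 < b) (hz : 0 < z) :
    ∫ y in (0:ℝ)..z, y ^ (a-1) * (z - y) ^ (b-1)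
      = Real.Gamma a * Real.Gamma b / Real.Gamma (a+b) * z ^ (a+b-1) := by
  have hC : ∫ y in (0:ℝ)..z, (y:ℂ) ^ ((a:ℂ)-1) * ((z:ℂ) - (y:ℂ)) ^ ((b:ℂ)-1)
      = (z:ℂ) ^ ((a:ℂ)+(b:ℂ)-1) * Complex.betaIntegral a b :=
    Complex.betaIntegral_scaled a b hz
  have hcongr : ∫ y in (0:ℝ)..z, (y:ℂ) ^ ((a:ℂ)-1) * ((z:ℂ) - (y:ℂ)) ^ ((b:ℂ)-1)
      = ((∫ y in (0:ℝ)..z, y ^ (a-1) * (z - y) ^ (b-1) : ℝ) : ℂ) := by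
    rw [← intervalIntegral.integral_ofReal]
    refine intervalIntegral.integral_congr (fun y hy => ?_)
    rw [uIcc_of_le hz.le] at hy
    rw [Complex.ofReal_mul, Complex.ofReal_cpow hy.1,
      Complex.ofReal_cpow (by linarith [hy.2] : (0:ℝ) ≤ z - y)]
    push_cast
    ring
  have hgamma : Complex.betaIntegral a b
      = Complex.Gamma a * Complex.Gamma b / Complex.Gamma (a+b) := by
    have h := Complex.Gamma_mul_Gamma_eq_betaIntegral (s := a) (t := b)
      (by simpa using ha) (by simpa using hb)
    have hne : Complex.Gamma ((a:ℂ)+(b:ℂ)) ≠ 0 := by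
      rw [← Complex.ofReal_add, Complex.Gamma_ofReal]
      exact_mod_cast (Real.Gamma_pos_of_pos (by linarith)).ne'
    rw [eq_div_iff hne]
    linear_combination -h
  rw [hgamma] at hC
  rw [hcongr] at hC
  have : ((Real.Gamma a * Real.Gamma b / Real.Gamma (a+b) * z ^ (a+b-1) : ℝ) : ℂ)
      = (z:ℂ) ^ ((a:ℂ)+(b:ℂ)-1) * (Complex.Gamma a * Complex.Gamma b / Complex.Gamma (a+b)) := by
    have hzg : Complex.Gamma ((a:ℂ)+(b:ℂ)) = ((Real.Gamma (a+b) : ℝ) : ℂ) := by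
      rw [← Complex.ofReal_add, Complex.Gamma_ofReal]
    rw [Complex.ofReal_mul, Complex.ofReal_cpow hz.le, hzg, Complex.Gamma_ofReal,
      Complex.Gamma_ofReal]
    push_cast
    ring
  exact_mod_cast hC.trans this.symm

lemma rpow_intervalIntegrable {c u y : ℝ} (hc : 0 < c) :
    IntervalIntegrable (fun z => (z - y) ^ (c - 1)) volume y u := by
  have h := (intervalIntegrable_rpow' (a := 0) (b := u - y)
    (by linarith : (-1:ℝ) < c - 1)).comp_sub_right y
  simpa using h

lemma rpow_integrableOn {c u y : ℝ} (hc : 0 < c) (hy : y ≤ u) :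
    IntegrableOn (fun z => (z - y) ^ (c - 1)) (Ioc y u) := by
  rw [← intervalIntegrable_iff_integrableOn_Ioc_of_le hy]
  exact rpow_intervalIntegrable hc

lemma rpow_setIntegral {c u y : ℝ} (hc : 0 < c) (hy : y ≤ u) :
    ∫ z in Ioc y u, (z - y) ^ (c - 1) = (u - y) ^ c / c := by
  rw [← intervalIntegral.integral_of_le hy,
    intervalIntegral.integral_comp_sub_right (fun x => x ^ (c - 1)) y,
    integral_rpow (Or.inl (by linarith : (-1:ℝ) < c - 1))]
  rw [sub_self, show c - 1 + 1 = c by ring, Real.zero_rpow hc.ne', sub_zero]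

lemma inner_integrable {b u : ℝ} (hb : 0 < b) {f : ℝ → ℝ} (hf : Continuous f) {y : ℝ}
    (hy : y ≤ u) :
    IntegrableOn (fun z => (z - y) ^ (b - 1) * f (u - z)) (Ioc y u) := by
  rw [← intervalIntegrable_iff_integrableOn_Ioc_of_le hy]
  exact (rpow_intervalIntegrable hb).mul_continuousOn
    ((hf.comp (continuous_const.sub continuous_id)).continuousOn)

lemma fubini_tri {a b u : ℝ} (ha : 0 < a) (hb : 0 < b) (hu : 0 ≤ u)
    {f : ℝ → ℝ} (hf : Continuous f) :
    ∫ y in Ioc 0 u, ∫ z in Ioc y u, y ^ (a - 1) * ((z - y) ^ (b - 1) * f (u - z))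
      = ∫ z in Ioc 0 u, ∫ y in Ioo 0 z, y ^ (a - 1) * ((z - y) ^ (b - 1) * f (u - z)) := by
  obtain ⟨C, hC⟩ := isCompact_Icc.exists_bound_of_continuousOn (s := Icc (0:ℝ) u)
    hf.continuousOn
  set M := max C 0 with hMdef
  have hM0 : 0 ≤ M := le_max_right _ _
  have hfM : ∀ x ∈ Icc (0:ℝ) u, |f x| ≤ M := fun x hx => (hC x hx).trans (le_max_left _ _)
  set φ : ℝ × ℝ → ℝ := fun p => p.1 ^ (a - 1) * ((p.2 - p.1) ^ (b - 1) * f (u - p.2)) with hφ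
  set T : Set (ℝ × ℝ) := {p | 0 < p.1 ∧ p.1 < p.2 ∧ p.2 ≤ u} with hTdef
  have hT : MeasurableSet T := by
    have : T = {p : ℝ × ℝ | 0 < p.1} ∩ ({p | p.1 < p.2} ∩ {p | p.2 ≤ u}) := rfl
    rw [this]
    exact (measurableSet_lt measurable_const measurable_fst).inter
      ((measurableSet_lt measurable_fst measurable_snd).inter
        (measurableSet_le measurable_snd measurable_const))
  have hφm : Measurable φ :=
    (measurable_fst.pow measurable_const).mul
      (((measurable_snd.sub measurable_fst).pow measurable_const).mul
        (hf.measurable.comp (measurable_const.sub measurable_snd)))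
  set H : ℝ × ℝ → ℝ := T.indicator φ with hH
  have hHm : AEStronglyMeasurable H (volume.prod volume) :=
    (hφm.indicator hT).aestronglyMeasurable
  have hrow : ∀ y : ℝ, 0 < y → y ≤ u →
      (fun z => H (y, z)) = (Ioc y u).indicator (fun z => φ (y, z)) := by
    intro y hy1 hy2
    funext z
    by_cases hz : z ∈ Ioc y u
    · rw [indicator_of_mem hz, hH, indicator_of_mem]
      exact ⟨hy1, hz.1, hz.2⟩
    · rw [indicator_of_notMem hz, hH, indicator_of_notMem]
      exact fun hmem => hz ⟨hmem.2.1, hmem.2.2⟩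
  have hrow0 : ∀ y : ℝ, y ∉ Ioc (0:ℝ) u → (fun z => H (y, z)) = 0 := by
    intro y hy
    funext z
    rw [hH]
    refine indicator_of_notMem (fun hmem => hy ?_) _
    exact ⟨hmem.1, le_trans hmem.2.1.le hmem.2.2⟩
  have hcol : ∀ z : ℝ, 0 < z → z ≤ u →
      (fun y => H (y, z)) = (Ioo 0 z).indicator (fun y => φ (y, z)) := by
    intro z hz1 hz2
    funext y
    by_cases hy : y ∈ Ioo (0:ℝ) z
    · rw [indicator_of_mem hy, hH, indicator_of_mem]
      exact ⟨hy.1, hy.2, hz2⟩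
    · rw [indicator_of_notMem hy, hH, indicator_of_notMem]
      exact fun hmem => hy ⟨hmem.1, hmem.2.1⟩
  have hcol0 : ∀ z : ℝ, z ∉ Ioc (0:ℝ) u → (fun y => H (y, z)) = 0 := by
    intro z hz
    funext y
    rw [hH]
    refine indicator_of_notMem (fun hmem => hz ?_) _
    exact ⟨lt_trans hmem.1 hmem.2.1, hmem.2.2⟩
  have hrowInt : ∀ y : ℝ, Integrable (fun z => H (y, z)) volume := by
    intro y
    by_cases hy : y ∈ Ioc (0:ℝ) u
    · rw [hrow y hy.1 hy.2]
      have h := (inner_integrable hb hf hy.2).const_mul (y ^ (a - 1))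
      exact (integrable_indicator_iff measurableSet_Ioc).mpr h
    · rw [hrow0 y hy]
      exact integrable_zero _ _ _
  have hrowNorm : ∀ y : ℝ, ‖∫ z, ‖H (y, z)‖‖
      ≤ (Ioc (0:ℝ) u).indicator (fun y => y ^ (a - 1) * (M * u ^ b / b)) y := by
    intro y
    by_cases hy : y ∈ Ioc (0:ℝ) u
    · rw [indicator_of_mem hy]
      have h1 : ∫ z, ‖H (y, z)‖ = ∫ z in Ioc y u, ‖φ (y, z)‖ := by
        rw [← MeasureTheory.integral_indicator measurableSet_Ioc]
        congr 1
        funext z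
        rw [congrFun (hrow y hy.1 hy.2) z, norm_indicator_eq_indicator_norm]
      rw [h1, Real.norm_eq_abs, abs_of_nonneg (integral_nonneg (fun z => norm_nonneg _))]
      have h2 : ∫ z in Ioc y u, ‖φ (y, z)‖
          ≤ ∫ z in Ioc y u, y ^ (a - 1) * (M * (z - y) ^ (b - 1)) := by
        refine setIntegral_mono_on ((inner_integrable hb hf hy.2).const_mul (y ^ (a - 1))).norm
          (((rpow_integrableOn hb hy.2).const_mul M).const_mul (y ^ (a - 1)))
          measurableSet_Ioc ?_
        intro z hz
        have hyz : (0:ℝ) ≤ z - y := by linarith [hz.1.le]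
        have h3 : |f (u - z)| ≤ M := hfM _ ⟨by linarith [hz.2], by linarith [hy.1, hz.1]⟩
        rw [hφ]
        simp only [Real.norm_eq_abs]
        rw [abs_mul, abs_mul, abs_of_nonneg (Real.rpow_nonneg hy.1.le _),
          abs_of_nonneg (Real.rpow_nonneg hyz _)]
        exact mul_le_mul_of_nonneg_left
          ((mul_le_mul_of_nonneg_left h3 (Real.rpow_nonneg hyz _)).trans_eq (mul_comm _ _))
          (Real.rpow_nonneg hy.1.le _)
      refine h2.trans ?_
      rw [MeasureTheory.integral_const_mul, MeasureTheory.integral_const_mul,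
        rpow_setIntegral hb hy.2]
      have h5 : (u - y) ^ b ≤ u ^ b :=
        Real.rpow_le_rpow (by linarith [hy.1, hy.2]) (by linarith [hy.1]) hb.le
      have h6 : M * ((u - y) ^ b / b) ≤ M * u ^ b / b := by
        rw [mul_div_assoc]
        exact mul_le_mul_of_nonneg_left ((div_le_div_iff_of_pos_right hb).mpr h5) hM0
      exact mul_le_mul_of_nonneg_left h6 (Real.rpow_nonneg hy.1.le _)
    · rw [indicator_of_notMem hy]
      have h0 : ∀ z, H (y, z) = 0 := fun z => congrFun (hrow0 y hy) z
      simp [h0]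
  have hHint : Integrable H (volume.prod volume) := by
    refine (integrable_prod_iff hHm).mpr ⟨ae_of_all _ hrowInt, ?_⟩
    refine Integrable.mono' ?_ hHm.norm.integral_prod_right' (ae_of_all _ hrowNorm)
    refine IntegrableOn.integrable_indicator ?_ measurableSet_Ioc
    have : IntegrableOn (fun y : ℝ => (y - 0) ^ (a - 1)) (Ioc 0 u) := rpow_integrableOn ha hu
    simpa [IntegrableOn] using this.mul_const (M * u ^ b / b)
  have hswap := integral_integral_swap (f := fun y z => H (y, z)) hHint
  have hLHS : (∫ y, ∫ z, H (y, z)) = ∫ y in Ioc 0 u, ∫ z in Ioc y u, φ (y, z) := by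
    rw [← MeasureTheory.integral_indicator measurableSet_Ioc]
    congr 1
    funext y
    by_cases hy : y ∈ Ioc (0:ℝ) u
    · rw [hrow y hy.1 hy.2, MeasureTheory.integral_indicator measurableSet_Ioc,
        indicator_of_mem hy]
    · rw [indicator_of_notMem hy]
      have h0 : ∀ z, H (y, z) = 0 := fun z => congrFun (hrow0 y hy) z
      simp [h0]
  have hRHS : (∫ z, ∫ y, H (y, z)) = ∫ z in Ioc 0 u, ∫ y in Ioo 0 z, φ (y, z) := by
    rw [← MeasureTheory.integral_indicator measurableSet_Ioc]
    congr 1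
    funext z
    by_cases hz : z ∈ Ioc (0:ℝ) u
    · rw [hcol z hz.1 hz.2, MeasureTheory.integral_indicator measurableSet_Ioo,
        indicator_of_mem hz]
    · rw [indicator_of_notMem hz]
      have h0 : ∀ y, H (y, z) = 0 := fun y => congrFun (hcol0 z hz) y
      simp [h0]
  exact hLHS.symm.trans (hswap.trans hRHS)

lemma LSint_LSint {a b : ℝ} (ha : 0 < a) (hb : 0 < b) {f : ℝ → ℝ} (hf : Continuous f)
    {u : ℝ} (hu : 0 ≤ u) :
    LSint (fun v => LSint f b v) a u
      = Real.Gamma (1 + a) * Real.Gamma (1 + b) / Real.Gamma (1 + a + b)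
          * LSint f (a + b) u := by
  have hstep1 : ∀ y : ℝ, LSint f b (u - y) * y ^ (a - 1)
      = b * ((∫ z in y..u, (z - y) ^ (b - 1) * f (u - z)) * y ^ (a - 1)) := by
    intro y
    have h := intervalIntegral.integral_comp_sub_right (a := y) (b := u)
      (fun x => x ^ (b - 1) * f (u - y - x)) y
    rw [sub_self] at h
    simp only [show ∀ z : ℝ, u - y - (z - y) = u - z from fun z => by ring] at h
    rw [LSint]
    rw [show (∫ x in (0:ℝ)..(u - y), f (u - y - x) * x ^ (b - 1))
        = ∫ x in (0:ℝ)..(u - y), x ^ (b - 1) * f (u - y - x) from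
      intervalIntegral.integral_congr (fun x _ => mul_comm _ _)]
    rw [← h]
    ring
  have e1 : LSint (fun v => LSint f b v) a u
      = a * b * ∫ y in (0:ℝ)..u, (∫ z in y..u, (z - y) ^ (b - 1) * f (u - z)) * y ^ (a - 1) := by
    rw [LSint]
    simp only [hstep1]
    rw [intervalIntegral.integral_const_mul]
    ring
  have e2 : ∫ y in (0:ℝ)..u, (∫ z in y..u, (z - y) ^ (b - 1) * f (u - z)) * y ^ (a - 1)
      = ∫ y in Ioc 0 u, ∫ z in Ioc y u, y ^ (a - 1) * ((z - y) ^ (b - 1) * f (u - z)) := by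
    rw [intervalIntegral.integral_of_le hu]
    refine setIntegral_congr_fun measurableSet_Ioc (fun y hy => ?_)
    rw [intervalIntegral.integral_of_le hy.2, mul_comm, ← MeasureTheory.integral_const_mul]
  have e4 : ∫ z in Ioc 0 u, ∫ y in Ioo 0 z, y ^ (a - 1) * ((z - y) ^ (b - 1) * f (u - z))
      = Real.Gamma a * Real.Gamma b / Real.Gamma (a + b)
          * ∫ z in Ioc 0 u, f (u - z) * z ^ (a + b - 1) := by
    rw [← MeasureTheory.integral_const_mul]
    refine setIntegral_congr_fun measurableSet_Ioc (fun z hz => ?_)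
    have hz0 : 0 < z := hz.1
    have h5 : ∫ y in Ioo 0 z, y ^ (a - 1) * ((z - y) ^ (b - 1) * f (u - z))
        = (∫ y in Ioo 0 z, y ^ (a - 1) * (z - y) ^ (b - 1)) * f (u - z) := by
      rw [← MeasureTheory.integral_mul_const]
      congr 1
      funext y
      ring
    rw [h5, ← MeasureTheory.integral_Ioc_eq_integral_Ioo,
      ← intervalIntegral.integral_of_le hz0.le, beta_scaled ha hb hz0]
    ring
  have e5 : LSint f (a + b) u = (a + b) * ∫ z in Ioc 0 u, f (u - z) * z ^ (a + b - 1) := by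
    rw [LSint, intervalIntegral.integral_of_le hu]
  rw [e1, e2, fubini_tri ha hb hu hf, e4, e5]
  have hga : Real.Gamma (1 + a) = a * Real.Gamma a := by
    rw [add_comm, Real.Gamma_add_one ha.ne']
  have hgb : Real.Gamma (1 + b) = b * Real.Gamma b := by
    rw [add_comm, Real.Gamma_add_one hb.ne']
  have hgab : Real.Gamma (1 + a + b) = (a + b) * Real.Gamma (a + b) := by
    rw [show (1:ℝ) + a + b = (a + b) + 1 by ring, Real.Gamma_add_one (by positivity)]
  have hΓab : Real.Gamma (a + b) ≠ 0 := (Real.Gamma_pos_of_pos (by linarith)).ne'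
  rw [hga, hgb, hgab]
  field_simp

lemma LSint_congr {h₁ h₂ : ℝ → ℝ} (hh : ∀ x, 0 ≤ x → h₁ x = h₂ x) {β v : ℝ} (hv : 0 ≤ v) :
    LSint h₁ β v = LSint h₂ β v := by
  rw [LSint, LSint]
  congr 1
  refine intervalIntegral.integral_congr (fun y hy => ?_)
  rw [uIcc_of_le hv] at hy
  rw [hh _ (by linarith [hy.2])]

lemma LSint_const_mul (c : ℝ) (h : ℝ → ℝ) (β u : ℝ) :
    LSint (fun v => c * h v) β u = c * LSint h β u := by
  have hpt : ∀ y : ℝ, c * h (u - y) * y ^ (β - 1) = c * (h (u - y) * y ^ (β - 1)) :=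
    fun y => by ring
  simp only [LSint, hpt, intervalIntegral.integral_const_mul]
  ring

lemma Wfun_succ_succ (W : ℝ → ℝ) (α : ℝ) (n : ℕ) :
    Wfun W α (n + 2) = fun u => ((n + 2 : ℕ) : ℝ) * LSint W (α * (((n + 2 : ℕ) : ℝ) - 1)) u := by
  rw [Wfun]
  omega

lemma Wfun_eval (W : ℝ → ℝ) (α : ℝ) (k : ℕ) (hk : 2 ≤ k) (u : ℝ) :
    Wfun W α k u = (k : ℝ) * LSint W (α * ((k : ℝ) - 1)) u := by
  obtain ⟨n, rfl⟩ : ∃ n, k = n + 2 := ⟨k - 2, by omega⟩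
  rw [Wfun_succ_succ]

end Aux

/-- for `W : [0,∞) → ℝ` continuous with `W(0) = 0` and `α > 0`, for every
integer `k ≥ 1` and `u ≥ 0`:
`∫_0^u W(u-y) d(y^{αk}) + (Γ(1+αk)/(Γ(1+α)Γ(1+α(k-1)))) ∫_0^u W_k(u-y) d(y^α) = W_{k+1}(u)`. -/
theorem stmt9 (α : ℝ) (hα : 0 < α) (W : ℝ → ℝ)
    (hWcont : ContinuousOn W (Set.Ici 0)) (hW0 : W 0 = 0)
    (k : ℕ) (hk : 1 ≤ k) :
    ∀ u : ℝ, 0 ≤ u →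
      LSint W (α * k) u
        + Real.Gamma (1 + α * k) /
            (Real.Gamma (1 + α) * Real.Gamma (1 + α * ((k : ℝ) - 1))) *
          LSint (Wfun W α k) α u
        = Wfun W α (k + 1) u := by
  intro u hu
  have hΓα : Real.Gamma (1 + α) ≠ 0 := (Real.Gamma_pos_of_pos (by linarith)).ne'
  set g : ℝ → ℝ := fun x => W (max x 0) with hgdef
  have hgc : Continuous g := hWcont.comp_continuous
    (continuous_id.max continuous_const) (fun x => le_max_right x 0)
  have hgW : ∀ x, 0 ≤ x → W x = g x := by
    intro x hx
    rw [hgdef]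
    simp only
    rw [max_eq_left hx]
  have hLW : ∀ (β v : ℝ), 0 ≤ v → LSint W β v = LSint g β v :=
    fun β v hv => LSint_congr hgW hv
  obtain ⟨m, rfl⟩ := Nat.exists_eq_add_of_le hk
  cases m with
  | zero =>
      rw [Wfun_eval W α (1 + 0 + 1) (by norm_num) u]
      norm_num [Real.Gamma_one]
      rw [show Wfun W α 1 = W from rfl, div_self hΓα]
      ring
  | succ n =>
      have hKcast : ((1 + (n + 1) : ℕ) : ℝ) = (n : ℝ) + 2 := by push_cast; ring
      have hb : 0 < α * (((1 + (n + 1) : ℕ) : ℝ) - 1) := by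
        rw [hKcast]
        have : (0:ℝ) < (n : ℝ) + 1 := by positivity
        nlinarith
      have hWk : LSint (Wfun W α (1 + (n + 1))) α u
          = ((1 + (n + 1) : ℕ) : ℝ)
            * LSint (fun v => LSint g (α * (((1 + (n + 1) : ℕ) : ℝ) - 1)) v) α u := by
        rw [← LSint_const_mul]
        refine LSint_congr (fun x hx => ?_) hu
        rw [Wfun_eval W α (1 + (n + 1)) (by omega) x, hLW _ x hx]
      rw [Wfun_eval W α (1 + (n + 1) + 1) (by omega) u]
      rw [hWk, LSint_LSint hα hb hgc hu]
      have hab : α + α * (((1 + (n + 1) : ℕ) : ℝ) - 1) = α * ((1 + (n + 1) : ℕ) : ℝ) := by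
        ring
      rw [hab]
      have h1ab : (1:ℝ) + α + α * (((1 + (n + 1) : ℕ) : ℝ) - 1)
          = 1 + α * ((1 + (n + 1) : ℕ) : ℝ) := by ring
      rw [h1ab]
      rw [hLW (α * ((1 + (n + 1) : ℕ) : ℝ)) u hu]
      have hΓb : Real.Gamma (1 + α * (((1 + (n + 1) : ℕ) : ℝ) - 1)) ≠ 0 :=
        (Real.Gamma_pos_of_pos (by linarith)).ne'
      have hΓak : Real.Gamma (1 + α * ((1 + (n + 1) : ℕ) : ℝ)) ≠ 0 := by
        refine (Real.Gamma_pos_of_pos ?_).ne'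
        have : 0 < α * ((1 + (n + 1) : ℕ) : ℝ) := by
          rw [hKcast]; positivity
        linarith
      have hcast2 : ((1 + (n + 1) + 1 : ℕ) : ℝ) = ((1 + (n + 1) : ℕ) : ℝ) + 1 := by
        push_cast; ring
      rw [hcast2, show α * (((1 + (n + 1) : ℕ) : ℝ) + 1 - 1) = α * ((1 + (n + 1) : ℕ) : ℝ)
        by ring]
      rw [hLW (α * ((1 + (n + 1) : ℕ) : ℝ)) u hu]
      field_simp
      ring
end

section
/- Let b be positive, nondecreasing, right-continuous, and regularly varying at ∞ of index α > 0. Then the Laplace–Stieltjes transform ψ(s) = ∫_{[0,∞)} e^{−sy} db(y) satisfies lim_{t→∞} ψ(u/t)/b(t) = Γ(1+α) u^{−α} for every u > 0, and the convergence is uniform in u on compact subsets [c,d] ⊂ (0,∞). -/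
open MeasureTheory Set Filter Topology

open scoped ENNReal

private lemma stmt15_fub (μ : MeasureTheory.Measure ℝ) [SigmaFinite μ]
    (hsupp : μ (Iio 0) = 0) (s : ℝ) (hs : 0 < s) :
    ∫⁻ y in Ici 0, ENNReal.ofReal (Real.exp (-(s*y))) ∂μ
      = ∫⁻ x, ENNReal.ofReal (s * Real.exp (-(s*x))) * μ (Iic x) := by
  set g : ℝ → ℝ≥0∞ := fun x => ENNReal.ofReal (s * Real.exp (-(s*x))) with hg
  have hmg : Measurable g := by
    apply Measurable.ennreal_ofReal
    fun_prop
  have hIic : ∀ x : ℝ, μ (Icc 0 x) = μ (Iic x) := by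
    intro x
    refine le_antisymm (measure_mono Icc_subset_Iic_self) ?_
    calc μ (Iic x) ≤ μ (Icc 0 x ∪ Iio 0) := by
          refine measure_mono (fun y hy => ?_)
          by_cases h : 0 ≤ y
          · exact Or.inl ⟨h, hy⟩
          · exact Or.inr (lt_of_not_ge h)
      _ ≤ μ (Icc 0 x) + μ (Iio 0) := measure_union_le _ _
      _ = μ (Icc 0 x) := by rw [hsupp, add_zero]
  have step1 : ∀ y : ℝ, ENNReal.ofReal (Real.exp (-(s*y))) = ∫⁻ x, if y ≤ x then g x else 0 := by
    intro y
    have hint : IntegrableOn (fun x => s * Real.exp (-(s*x))) (Ioi y) := by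
      simp only [neg_mul_eq_neg_mul]
      exact (exp_neg_integrableOn_Ioi y hs).const_mul s
    have hval : ∫ x in Ioi y, s * Real.exp (-(s*x)) = Real.exp (-(s*y)) := by
      rw [integral_const_mul]
      have h2 := integral_comp_mul_left_Ioi (fun x => Real.exp (-x)) y hs
      simp only [smul_eq_mul] at h2
      rw [h2, integral_exp_neg_Ioi]
      field_simp
    have h3 : ∫⁻ x, (if y ≤ x then g x else 0) = ∫⁻ x in Ici y, g x := by
      rw [← lintegral_indicator measurableSet_Ici]
      exact lintegral_congr fun x => by simp [Set.indicator_apply, mem_Ici]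
    rw [h3, ← restrict_Ioi_eq_restrict_Ici, ← hval,
      ofReal_integral_eq_lintegral_ofReal hint ?_]
    · filter_upwards with x
      positivity
  calc ∫⁻ y in Ici 0, ENNReal.ofReal (Real.exp (-(s*y))) ∂μ
      = ∫⁻ y in Ici 0, ∫⁻ x, (if y ≤ x then g x else 0) ∂volume ∂μ := by
        exact lintegral_congr fun y => step1 y
    _ = ∫⁻ x, ∫⁻ y in Ici 0, (if y ≤ x then g x else 0) ∂μ ∂volume := by
        apply lintegral_lintegral_swap
        apply Measurable.aemeasurable
        exact Measurable.ite (measurableSet_le measurable_fst measurable_snd)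
          (hmg.comp measurable_snd) measurable_const
    _ = ∫⁻ x, ENNReal.ofReal (s * Real.exp (-(s*x))) * μ (Iic x) := by
        refine lintegral_congr fun x => ?_
        have : ∀ y : ℝ, (if y ≤ x then g x else 0) = (Iic x).indicator (fun _ => g x) y := by
          intro y; simp [Set.indicator_apply, mem_Iic]
        simp_rw [this]
        rw [lintegral_indicator measurableSet_Iic, Measure.restrict_restrict measurableSet_Iic,
          setLIntegral_const]
        rw [show Iic x ∩ Ici 0 = Icc 0 x by rw [inter_comm, Ici_inter_Iic], hIic]

private lemma stmt15_rep (b : ℝ → ℝ) (μ : MeasureTheory.Measure ℝ) [SigmaFinite μ]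
    (hsupp : μ (Iio 0) = 0) (hfin : ∀ t : ℝ, μ (Set.Iic t) < ⊤)
    (hrep : ∀ t : ℝ, b t = (μ (Set.Iic t)).toReal)
    (hint : ∀ s : ℝ, 0 < s → IntegrableOn (fun y => Real.exp (-s * y)) (Set.Ici 0) μ)
    (ψ : ℝ → ℝ) (hψ : ∀ s : ℝ, ψ s = ∫ y in Set.Ici 0, Real.exp (-s * y) ∂μ)
    (s : ℝ) (hs : 0 < s) :
    ψ s = ∫ x in Ioi 0, s * Real.exp (-(s*x)) * b x ∧
      IntegrableOn (fun x => s * Real.exp (-(s*x)) * b x) (Ioi 0) := by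
  have hb0 : ∀ x, 0 ≤ b x := fun x => (hrep x) ▸ ENNReal.toReal_nonneg
  have hbmono : Monotone b := by
    intro x y hxy
    rw [hrep x, hrep y]
    exact ENNReal.toReal_mono (hfin y).ne (measure_mono (Iic_subset_Iic.mpr hxy))
  have hbmeas : Measurable b := hbmono.measurable
  have hμIic : ∀ x, μ (Iic x) = ENNReal.ofReal (b x) := by
    intro x; rw [hrep, ENNReal.ofReal_toReal (hfin x).ne]
  have hbneg : ∀ x : ℝ, x < 0 → b x = 0 := by
    intro x hx
    rw [hrep]
    have : μ (Iic x) = 0 :=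
      le_antisymm (le_trans (measure_mono (Iic_subset_Iio.mpr hx)) hsupp.le) zero_le
    simp [this]
  set L : ℝ≥0∞ := ∫⁻ y in Ici 0, ENNReal.ofReal (Real.exp (-(s*y))) ∂μ with hL
  have hψs : ψ s = L.toReal := by
    rw [hψ, integral_eq_lintegral_of_nonneg_ae]
    · simp only [neg_mul]; rfl
    · filter_upwards with y using (Real.exp_pos _).le
    · exact ((hint s hs).aestronglyMeasurable)
  have hLfin : L ≠ ⊤ := by
    have h1 := (hint s hs).hasFiniteIntegral
    rw [hasFiniteIntegral_iff_ofReal ?_] at h1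
    · simpa only [neg_mul, hL] using h1.ne
    · filter_upwards with y using (Real.exp_pos _).le
  set f : ℝ → ℝ := fun x => s * Real.exp (-(s*x)) * b x with hf
  have hfmeas : Measurable f := by
    apply Measurable.mul _ hbmeas
    fun_prop
  have hf0 : ∀ x, 0 ≤ f x := by
    intro x
    have := hb0 x
    have := (Real.exp_pos (-(s*x))).le
    positivity
  have hR : L = ∫⁻ x in Ioi 0, ENNReal.ofReal (f x) := by
    rw [hL, stmt15_fub μ hsupp s hs]
    have he : ∀ x : ℝ, ENNReal.ofReal (s * Real.exp (-(s*x))) * μ (Iic x)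
        = ENNReal.ofReal (f x) := by
      intro x
      rw [hμIic, ← ENNReal.ofReal_mul (by positivity)]
    simp_rw [he]
    rw [← lintegral_indicator measurableSet_Ioi]
    apply lintegral_congr_ae
    have h0 : ({(0:ℝ)}ᶜ : Set ℝ) ∈ ae (volume : MeasureTheory.Measure ℝ) :=
      compl_mem_ae_iff.mpr (measure_singleton 0)
    filter_upwards [h0] with x hx
    rcases lt_trichotomy x 0 with h | h | h
    · simp [Set.indicator_apply, not_lt.mpr h.le, hf, hbneg x h, h.not_gt]
    · exact absurd h hx
    · simp [Set.indicator_apply, h]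
  have hfint : IntegrableOn f (Ioi 0) := by
    constructor
    · exact hfmeas.aestronglyMeasurable
    · rw [hasFiniteIntegral_iff_ofReal (by filter_upwards with x using hf0 x)]
      rw [← hR]
      exact hLfin.lt_top
  refine ⟨?_, hfint⟩
  rw [hψs, hR, integral_eq_lintegral_of_nonneg_ae
    (by filter_upwards with x using hf0 x) hfmeas.aestronglyMeasurable]

private lemma stmt15_potter (α : ℝ) (hα : 0 < α) (b : ℝ → ℝ) (hbmono : Monotone b)
    (hpos : ∀ t, 0 ≤ t → 0 < b t)
    (hreg2 : Tendsto (fun t => b (2*t)/b t) atTop (𝓝 ((2:ℝ)^(α:ℝ)))) :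
    ∃ M T : ℝ, 1 ≤ M ∧ 1 ≤ T ∧ ∀ t, T ≤ t → ∀ x : ℝ, 0 < x →
      b (x*t) ≤ M * max 1 (x^(α+1)) * b t := by
  set M : ℝ := 2^(α:ℝ) + 1 with hM
  have h2α : (1:ℝ) ≤ 2^(α:ℝ) := Real.one_le_rpow (by norm_num) hα.le
  have hM1 : (1:ℝ) < M := by
    have : (0:ℝ) < 2^(α:ℝ) := Real.rpow_pos_of_pos (by norm_num) _
    linarith
  have hM0 : (0:ℝ) < M := by linarith
  have hev : ∀ᶠ t in atTop, b (2*t)/b t ≤ M := by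
    apply hreg2.eventually_le_const
    linarith
  obtain ⟨T₀, hT₀⟩ := eventually_atTop.mp hev
  set T : ℝ := max T₀ 1 with hT
  have hT1 : (1:ℝ) ≤ T := le_max_right _ _
  have hbT : ∀ s, T ≤ s → 0 < b s := fun s hs => hpos s (by linarith)
  have hstep : ∀ s, T ≤ s → b (2*s) ≤ M * b s := by
    intro s hs
    have h1 := hT₀ s (le_trans (le_max_left _ _) hs)
    rw [div_le_iff₀ (hbT s hs)] at h1
    exact h1
  have hiter : ∀ n : ℕ, ∀ t, T ≤ t → b (2^n * t) ≤ M^n * b t := by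
    intro n
    induction n with
    | zero => intro t ht; simp
    | succ n ih =>
      intro t ht
      have h2n : (1:ℝ) ≤ 2^n := one_le_pow₀ (by norm_num)
      have ht' : T ≤ 2^n * t := le_trans ht (le_mul_of_one_le_left (by linarith) h2n)
      calc b (2^(n+1) * t) = b (2 * (2^n * t)) := by ring_nf
        _ ≤ M * b (2^n * t) := hstep _ ht'
        _ ≤ M * (M^n * b t) := by
            exact mul_le_mul_of_nonneg_left (ih t ht) hM0.le
        _ = M^(n+1) * b t := by ring
  refine ⟨M, T, hM1.le, hT1, ?_⟩
  intro t ht x hx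
  have hbt0 := hbT t ht
  have hmax1 : (1:ℝ) ≤ max 1 (x^(α+1)) := le_max_left _ _
  rcases le_or_gt x 1 with hx1 | hx1
  · have : b (x*t) ≤ b t := hbmono (by nlinarith)
    calc b (x*t) ≤ b t := this
      _ ≤ M * max 1 (x^(α+1)) * b t := le_mul_of_one_le_left hbt0.le (by nlinarith)
  · set n : ℕ := ⌈Real.logb 2 x⌉₊ with hn
    have hlogb0 : 0 ≤ Real.logb 2 x := Real.logb_nonneg (by norm_num) hx1.le
    have hx2n : x ≤ 2^n := by
      have h1 : Real.logb 2 x ≤ (n:ℝ) := Nat.le_ceil _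
      have h2 : x = (2:ℝ)^(Real.logb 2 x) := (Real.rpow_logb (by norm_num) (by norm_num) hx).symm
      calc x = (2:ℝ)^(Real.logb 2 x) := h2
        _ ≤ (2:ℝ)^((n:ℕ):ℝ) := Real.rpow_le_rpow_of_exponent_le (by norm_num) h1
        _ = 2^n := by rw [Real.rpow_natCast]
    have hMn : M^n ≤ M * x^(α+1) := by
      have h1 : (n:ℝ) ≤ Real.logb 2 x + 1 := (Nat.ceil_lt_add_one hlogb0).le
      have h2 : M^n = M^((n:ℕ):ℝ) := by rw [Real.rpow_natCast]
      have h3 : M^((n:ℕ):ℝ) ≤ M^(Real.logb 2 x + 1) :=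
        Real.rpow_le_rpow_of_exponent_le hM1.le h1
      have h4 : M^(Real.logb 2 x + 1) = M * M^(Real.logb 2 x) := by
        rw [Real.rpow_add hM0, Real.rpow_one, mul_comm]
      have h5 : M^(Real.logb 2 x) = x^(Real.logb 2 M) := by
        rw [Real.rpow_def_of_pos hM0, Real.rpow_def_of_pos hx, Real.logb, Real.logb]
        congr 1; ring
      have h6 : Real.logb 2 M ≤ α + 1 := by
        have hM2 : M ≤ (2:ℝ)^(α+1) := by
          rw [Real.rpow_add (by norm_num), Real.rpow_one]
          nlinarith
        calc Real.logb 2 M ≤ Real.logb 2 ((2:ℝ)^(α+1)) :=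
              Real.logb_le_logb_of_le (by norm_num) hM0 hM2
          _ = α + 1 := Real.logb_rpow (by norm_num) (by norm_num)
      have h7 : x^(Real.logb 2 M) ≤ x^(α+1) :=
        Real.rpow_le_rpow_of_exponent_le hx1.le h6
      calc M^n = M^((n:ℕ):ℝ) := h2
        _ ≤ M * M^(Real.logb 2 x) := h4 ▸ h3
        _ = M * x^(Real.logb 2 M) := by rw [h5]
        _ ≤ M * x^(α+1) := by nlinarith
    have hx2nt : x * t ≤ 2^n * t := by nlinarith
    calc b (x*t) ≤ b (2^n * t) := hbmono hx2nt
      _ ≤ M^n * b t := hiter n t ht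
      _ ≤ M * x^(α+1) * b t := mul_le_mul_of_nonneg_right hMn hbt0.le
      _ ≤ M * max 1 (x^(α+1)) * b t := by
          have h8 : x^(α+1) ≤ max 1 (x^(α+1)) := le_max_right _ _
          exact mul_le_mul_of_nonneg_right (mul_le_mul_of_nonneg_left h8 hM0.le) hbt0.le

/-- let `b` be positive, nondecreasing, right-continuous and regularly
varying at `∞` of index `α > 0` (represented by `b t = μ (Iic t)` with `μ` carried by
`[0,∞)` and having finite Laplace–Stieltjes transform).  Then
`ψ(s) = ∫_{[0,∞)} e^{-sy} db(y)` satisfies `ψ(u/t)/b(t) → Γ(1+α) u^{-α}` as `t → ∞`, for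
every `u > 0`, uniformly in `u` on compact subsets `[c,d] ⊂ (0,∞)`. -/
theorem stmt15 (α : ℝ) (hα : 0 < α) (b : ℝ → ℝ) (μ : MeasureTheory.Measure ℝ)
    (hsupp : μ (Set.Iio 0) = 0) (hfin : ∀ t : ℝ, μ (Set.Iic t) < ⊤)
    (hrep : ∀ t : ℝ, b t = (μ (Set.Iic t)).toReal)
    (hpos : ∀ t : ℝ, 0 ≤ t → 0 < b t)
    (hreg : ∀ lam : ℝ, 0 < lam →
      Tendsto (fun t : ℝ => b (lam * t) / b t) atTop (𝓝 (lam ^ α)))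
    (hint : ∀ s : ℝ, 0 < s →
      MeasureTheory.IntegrableOn (fun y => Real.exp (-s * y)) (Set.Ici 0) μ)
    (ψ : ℝ → ℝ) (hψ : ∀ s : ℝ, ψ s = ∫ y in Set.Ici 0, Real.exp (-s * y) ∂μ) :
    (∀ u : ℝ, 0 < u →
      Tendsto (fun t : ℝ => ψ (u / t) / b t) atTop (𝓝 (Real.Gamma (1 + α) * u ^ (-α))))
    ∧ ∀ c d : ℝ, 0 < c → c < d →
        TendstoUniformlyOn (fun t : ℝ => fun u : ℝ => ψ (u / t) / b t)
          (fun u : ℝ => Real.Gamma (1 + α) * u ^ (-α)) atTop (Set.Icc c d) := by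
  haveI : IsLocallyFiniteMeasure μ :=
    ⟨fun x => ⟨Iic (x+1), Iic_mem_nhds (lt_add_one x), hfin _⟩⟩
  have hb0 : ∀ x, 0 ≤ b x := fun x => (hrep x) ▸ ENNReal.toReal_nonneg
  have hbmono : Monotone b := by
    intro x y hxy
    rw [hrep x, hrep y]
    exact ENNReal.toReal_mono (hfin y).ne (measure_mono (Iic_subset_Iic.mpr hxy))
  have hbmeas : Measurable b := hbmono.measurable
  obtain ⟨M, T, hM1, hT1, hpot⟩ := stmt15_potter α hα b hbmono hpos (hreg 2 (by norm_num))
  -- representation after substitution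
  have hrep2 : ∀ t u : ℝ, 0 < t → 0 < u →
      ψ (u/t) = ∫ z in Ioi 0, u * Real.exp (-(u*z)) * b (z*t) ∧
      IntegrableOn (fun z => u * Real.exp (-(u*z)) * b (z*t)) (Ioi 0) := by
    intro t u ht hu
    obtain ⟨h1, h2⟩ := stmt15_rep b μ hsupp hfin hrep hint ψ hψ (u/t) (div_pos hu ht)
    set f : ℝ → ℝ := fun x => (u/t) * Real.exp (-((u/t)*x)) * b x with hf
    have hcomp : ∀ z : ℝ, u * Real.exp (-(u*z)) * b (z*t) = t * f (z*t) := by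
      intro z
      show u * Real.exp (-(u*z)) * b (z*t)
        = t * ((u/t) * Real.exp (-((u/t)*(z*t))) * b (z*t))
      have hzt : (u/t) * (z*t) = u * z := by field_simp
      rw [hzt]
      field_simp
    have hint2 : IntegrableOn (fun z => u * Real.exp (-(u*z)) * b (z*t)) (Ioi 0) := by
      have h3 : IntegrableOn (fun z => f (z*t)) (Ioi 0) := by
        have := (integrableOn_Ioi_comp_mul_right_iff f 0 ht).mpr (by simpa using h2)
        simpa using this
      have h4 := h3.const_mul t
      exact MeasureTheory.IntegrableOn.congr_fun h4 (fun z _ => (hcomp z).symm)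
        measurableSet_Ioi
    constructor
    · rw [h1]
      have h5 := integral_comp_mul_right_Ioi f 0 ht
      simp only [zero_mul, smul_eq_mul] at h5
      calc ∫ x in Ioi 0, f x = t * (t⁻¹ * ∫ x in Ioi 0, f x) := by
            field_simp
        _ = t * ∫ z in Ioi 0, f (z*t) := by rw [← h5]
        _ = ∫ z in Ioi 0, t * f (z*t) := by rw [← integral_const_mul]
        _ = ∫ z in Ioi 0, u * Real.exp (-(u*z)) * b (z*t) := by
            refine setIntegral_congr_fun measurableSet_Ioi (fun z _ => ?_)
            rw [hcomp z]
    · exact hint2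
  -- Gamma identity
  have hgint : ∀ u : ℝ, 0 < u →
      IntegrableOn (fun z => u * Real.exp (-(u*z)) * z^α) (Ioi 0) := by
    intro u hu
    have h1 := integrableOn_rpow_mul_exp_neg_mul_rpow (p := 1) (s := α) (b := u)
      (by linarith) one_pos hu
    simp only [Real.rpow_one] at h1
    have h2 := h1.const_mul u
    refine MeasureTheory.IntegrableOn.congr_fun h2 (fun z hz => ?_) measurableSet_Ioi
    show u * (z ^ α * Real.exp (-u * z)) = u * Real.exp (-(u*z)) * z ^ α
    rw [neg_mul]
    ring
  have hgam : ∀ u : ℝ, 0 < u →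
      Real.Gamma (1 + α) * u ^ (-α) = ∫ z in Ioi 0, u * Real.exp (-(u*z)) * z^α := by
    intro u hu
    have h1 := Real.integral_rpow_mul_exp_neg_mul_Ioi (a := α + 1) (r := u)
      (by linarith) hu
    have h2 : ∫ z in Ioi 0, u * Real.exp (-(u*z)) * z^α
        = u * ∫ z in Ioi 0, z ^ (α + 1 - 1) * Real.exp (-(u * z)) := by
      rw [← integral_const_mul]
      refine setIntegral_congr_fun measurableSet_Ioi (fun z _ => ?_)
      norm_num
      ring
    rw [h2, h1]
    have h3 : (1/u) ^ (α+1) = u ^ (-(α+1)) := by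
      rw [one_div, Real.inv_rpow hu.le, ← Real.rpow_neg hu.le]
    rw [h3]
    have h4 : u * (u ^ (-(α+1)) * Real.Gamma (α+1)) = (u * u ^ (-(α+1))) * Real.Gamma (α+1) := by
      ring
    rw [h4]
    have h5 : u * u ^ (-(α+1)) = u ^ (-α) := by
      nth_rewrite 1 [← Real.rpow_one u]
      rw [← Real.rpow_add hu]
      norm_num
    rw [h5, add_comm α 1, mul_comm]
  -- integrability of the comparison functions
  have hzint : ∀ c : ℝ, 0 < c → IntegrableOn (fun z => Real.exp (-(c*z)) * z^α) (Ioi 0) := by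
    intro c hc
    have h1 := integrableOn_rpow_mul_exp_neg_mul_rpow (p := 1) (s := α) (b := c)
      (by linarith) one_pos hc
    simp only [Real.rpow_one] at h1
    refine MeasureTheory.IntegrableOn.congr_fun h1 (fun z hz => ?_) measurableSet_Ioi
    show z ^ α * Real.exp (-c * z) = Real.exp (-(c*z)) * z ^ α
    rw [neg_mul]
    ring
  have hz1int : ∀ c : ℝ, 0 < c →
      IntegrableOn (fun z => Real.exp (-(c*z)) * max 1 (z^(α+1))) (Ioi 0) := by
    intro c hc
    have h1 := integrableOn_rpow_mul_exp_neg_mul_rpow (p := 1) (s := α+1) (b := c)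
      (by linarith) one_pos hc
    simp only [Real.rpow_one] at h1
    have h2 : IntegrableOn (fun z => Real.exp (-(c*z)) * z^(α+1)) (Ioi 0) := by
      refine MeasureTheory.IntegrableOn.congr_fun h1 (fun z hz => ?_) measurableSet_Ioi
      show z ^ (α+1) * Real.exp (-c * z) = Real.exp (-(c*z)) * z ^ (α+1)
      rw [neg_mul]; ring
    have h3 : IntegrableOn (fun z => Real.exp (-(c*z))) (Ioi 0) := by
      simpa [neg_mul] using exp_neg_integrableOn_Ioi (0:ℝ) hc
    refine Integrable.mono (h3.add h2) ?_ ?_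
    · apply Measurable.aestronglyMeasurable
      apply Measurable.mul (by fun_prop)
      exact measurable_const.max (Real.continuous_rpow_const (by linarith)).measurable
    · rw [ae_restrict_iff' measurableSet_Ioi]
      filter_upwards with z hz
      have hz0 : (0:ℝ) < z := hz
      have he : (0:ℝ) < Real.exp (-(c*z)) := Real.exp_pos _
      have hp : (0:ℝ) ≤ z^(α+1) := Real.rpow_nonneg hz0.le _
      have hmax0 : (0:ℝ) ≤ max 1 (z^(α+1)) := le_trans zero_le_one (le_max_left _ _)
      simp only [Real.norm_eq_abs]
      rw [abs_of_nonneg (mul_nonneg he.le hmax0)]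
      refine le_trans ?_ (le_abs_self _)
      calc Real.exp (-(c*z)) * max 1 (z^(α+1))
          ≤ Real.exp (-(c*z)) * (1 + z^(α+1)) :=
            mul_le_mul_of_nonneg_left (max_le (by linarith) (by linarith)) he.le
        _ = Real.exp (-(c*z)) + Real.exp (-(c*z)) * z^(α+1) := by ring
  -- convergence of the error integral
  have hE : ∀ c : ℝ, 0 < c →
      Tendsto (fun t => ∫ z in Ioi 0, Real.exp (-(c*z)) * |b (z*t)/b t - z^α|)
        atTop (𝓝 0) := by
    intro c hc
    have hmain : Tendsto (fun t => ∫ z in Ioi (0:ℝ), Real.exp (-(c*z)) * |b (z*t)/b t - z^α|)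
        atTop (𝓝 (∫ z in Ioi (0:ℝ), (0:ℝ))) := by
      apply tendsto_integral_filter_of_dominated_convergence
        (fun z => M * (Real.exp (-(c*z)) * max 1 (z^(α+1))) + Real.exp (-(c*z)) * z^α)
      · filter_upwards with t
        apply Measurable.aestronglyMeasurable
        apply Measurable.mul (by fun_prop)
        apply Measurable.abs
        apply Measurable.sub _ (Real.continuous_rpow_const hα.le).measurable
        exact (hbmeas.comp (measurable_id.mul_const t)).div_const _
      · filter_upwards [eventually_ge_atTop T] with t hTt
        rw [ae_restrict_iff' measurableSet_Ioi]
        filter_upwards with z hz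
        have hz0 : (0:ℝ) < z := hz
        have hbt : 0 < b t := hpos t (by linarith)
        have hratio : b (z*t)/b t ≤ M * max 1 (z^(α+1)) := by
          rw [div_le_iff₀ hbt]
          have := hpot t hTt z hz0
          linarith [this]
        have hr0 : 0 ≤ b (z*t)/b t := div_nonneg (hb0 _) hbt.le
        have hzα : (0:ℝ) ≤ z^α := Real.rpow_nonneg hz0.le _
        have he : (0:ℝ) < Real.exp (-(c*z)) := Real.exp_pos _
        rw [Real.norm_eq_abs, abs_of_nonneg (by positivity)]
        have habs : |b (z*t)/b t - z^α| ≤ M * max 1 (z^(α+1)) + z^α := by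
          have := abs_sub (b (z*t)/b t) (z^α)
          rw [abs_of_nonneg hr0, abs_of_nonneg hzα] at this
          linarith
        calc Real.exp (-(c*z)) * |b (z*t)/b t - z^α|
            ≤ Real.exp (-(c*z)) * (M * max 1 (z^(α+1)) + z^α) :=
              mul_le_mul_of_nonneg_left habs he.le
          _ = M * (Real.exp (-(c*z)) * max 1 (z^(α+1))) + Real.exp (-(c*z)) * z^α := by ring
      · exact ((hz1int c hc).const_mul M).add (hzint c hc)
      · rw [ae_restrict_iff' measurableSet_Ioi]
        filter_upwards with z hz
        have hz0 : (0:ℝ) < z := hz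
        have h1 := (hreg z hz0).sub (tendsto_const_nhds (x := z^α))
        have h2 := (h1.abs).const_mul (Real.exp (-(c*z)))
        simp only [sub_self, abs_zero, mul_zero] at h2
        exact h2
    simpa using hmain
  -- key bound
  have hkey : ∀ c d : ℝ, 0 < c → c ≤ d → ∀ t : ℝ, max T 1 ≤ t → ∀ u : ℝ, u ∈ Icc c d →
      |ψ (u/t)/b t - Real.Gamma (1 + α) * u ^ (-α)|
        ≤ d * ∫ z in Ioi 0, Real.exp (-(c*z)) * |b (z*t)/b t - z^α| := by
    intro c d hc hcd t ht u hu
    have ht1 : (1:ℝ) ≤ t := le_trans (le_max_right _ _) ht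
    have ht0 : (0:ℝ) < t := by linarith
    have hu0 : 0 < u := lt_of_lt_of_le hc hu.1
    have hbt : 0 < b t := hpos t (by linarith)
    obtain ⟨h1, h2⟩ := hrep2 t u ht0 hu0
    obtain ⟨_, h2c⟩ := hrep2 t c ht0 hc
    have h3 : ψ (u/t)/b t = ∫ z in Ioi 0, u * Real.exp (-(u*z)) * b (z*t) / b t := by
      rw [h1, integral_div]
    have h4 : IntegrableOn (fun z => u * Real.exp (-(u*z)) * b (z*t) / b t) (Ioi 0) :=
      h2.div_const _
    have h5 := hgint u hu0
    have hdiff : ψ (u/t)/b t - Real.Gamma (1 + α) * u ^ (-α)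
        = ∫ z in Ioi 0, (u * Real.exp (-(u*z)) * b (z*t) / b t
            - u * Real.exp (-(u*z)) * z^α) := by
      rw [h3, hgam u hu0, ← integral_sub h4 h5]
    -- integrability of the majorant
    have hPint : IntegrableOn (fun z => Real.exp (-(c*z)) * |b (z*t)/b t - z^α|) (Ioi 0) := by
      have hmaj : IntegrableOn
          (fun z => c * Real.exp (-(c*z)) * b (z*t) / b t / c + Real.exp (-(c*z)) * z^α)
          (Ioi 0) := ((h2c.div_const _).div_const _).add (hzint c hc)
      refine Integrable.mono hmaj ?_ ?_
      · apply Measurable.aestronglyMeasurable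
        apply Measurable.mul (by fun_prop)
        apply Measurable.abs
        apply Measurable.sub _ (Real.continuous_rpow_const hα.le).measurable
        exact (hbmeas.comp (measurable_id.mul_const t)).div_const _
      · rw [ae_restrict_iff' measurableSet_Ioi]
        filter_upwards with z hz
        have hz0 : (0:ℝ) < z := hz
        have he : (0:ℝ) < Real.exp (-(c*z)) := Real.exp_pos _
        have hzα : (0:ℝ) ≤ z^α := Real.rpow_nonneg hz0.le _
        have hr0 : 0 ≤ b (z*t)/b t := div_nonneg (hb0 _) hbt.le
        have hq : c * Real.exp (-(c*z)) * b (z*t) / b t / c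
            = Real.exp (-(c*z)) * (b (z*t)/b t) := by
          field_simp
        rw [Real.norm_eq_abs, Real.norm_eq_abs, abs_of_nonneg (by positivity)]
        rw [hq]
        have habs : |b (z*t)/b t - z^α| ≤ b (z*t)/b t + z^α := by
          have := abs_sub (b (z*t)/b t) (z^α)
          rw [abs_of_nonneg hr0, abs_of_nonneg hzα] at this
          linarith
        have h7 : Real.exp (-(c*z)) * |b (z*t)/b t - z^α|
            ≤ Real.exp (-(c*z)) * (b (z*t)/b t) + Real.exp (-(c*z)) * z^α := by
          calc Real.exp (-(c*z)) * |b (z*t)/b t - z^α|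
              ≤ Real.exp (-(c*z)) * (b (z*t)/b t + z^α) :=
                mul_le_mul_of_nonneg_left habs he.le
            _ = Real.exp (-(c*z)) * (b (z*t)/b t) + Real.exp (-(c*z)) * z^α := by ring
        rw [hq] at *
        calc Real.exp (-(c*z)) * |b (z*t)/b t - z^α|
            ≤ Real.exp (-(c*z)) * (b (z*t)/b t) + Real.exp (-(c*z)) * z^α := h7
          _ ≤ |Real.exp (-(c*z)) * (b (z*t)/b t) + Real.exp (-(c*z)) * z^α| := le_abs_self _
    rw [hdiff]
    calc |∫ z in Ioi 0, (u * Real.exp (-(u*z)) * b (z*t) / b t - u * Real.exp (-(u*z)) * z^α)|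
        ≤ ∫ z in Ioi 0, |u * Real.exp (-(u*z)) * b (z*t) / b t - u * Real.exp (-(u*z)) * z^α| := by
          have := norm_integral_le_integral_norm
            (fun z => u * Real.exp (-(u*z)) * b (z*t) / b t - u * Real.exp (-(u*z)) * z^α)
            (μ := volume.restrict (Ioi 0))
          simpa [Real.norm_eq_abs] using this
      _ ≤ ∫ z in Ioi 0, d * (Real.exp (-(c*z)) * |b (z*t)/b t - z^α|) := by
          apply integral_mono_of_nonneg
          · filter_upwards with z using abs_nonneg _
          · exact (hPint.const_mul d)
          · rw [EventuallyLE, ae_restrict_iff' measurableSet_Ioi]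
            filter_upwards with z hz
            have hz0 : (0:ℝ) < z := hz
            have key : u * Real.exp (-(u*z)) * b (z*t) / b t - u * Real.exp (-(u*z)) * z^α
                = (u * Real.exp (-(u*z))) * (b (z*t)/b t - z^α) := by
              field_simp
            rw [key, abs_mul]
            have h8 : |u * Real.exp (-(u*z))| ≤ d * Real.exp (-(c*z)) := by
              rw [abs_of_nonneg (by positivity)]
              have he : Real.exp (-(u*z)) ≤ Real.exp (-(c*z)) := by
                apply Real.exp_le_exp.mpr
                nlinarith [hu.1]
              have := hu.2
              nlinarith [Real.exp_pos (-(u*z)), Real.exp_pos (-(c*z))]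
            calc |u * Real.exp (-(u*z))| * |b (z*t)/b t - z^α|
                ≤ (d * Real.exp (-(c*z))) * |b (z*t)/b t - z^α| :=
                  mul_le_mul_of_nonneg_right h8 (abs_nonneg _)
              _ = d * (Real.exp (-(c*z)) * |b (z*t)/b t - z^α|) := by ring
      _ = d * ∫ z in Ioi 0, Real.exp (-(c*z)) * |b (z*t)/b t - z^α| := integral_const_mul d _
  constructor
  · intro u hu
    rw [← tendsto_sub_nhds_zero_iff]
    apply squeeze_zero_norm' (a := fun t => u * ∫ z in Ioi 0,
      Real.exp (-(u*z)) * |b (z*t)/b t - z^α|)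
    · filter_upwards [eventually_ge_atTop (max T 1)] with t ht
      rw [Real.norm_eq_abs]
      exact hkey u u hu le_rfl t ht u ⟨le_rfl, le_rfl⟩
    · have := (hE u hu).const_mul u
      simpa using this
  · intro c d hc hcd
    rw [Metric.tendstoUniformlyOn_iff]
    intro ε hε
    have h1 : Tendsto (fun t => d * ∫ z in Ioi 0,
        Real.exp (-(c*z)) * |b (z*t)/b t - z^α|) atTop (𝓝 0) := by
      have := (hE c hc).const_mul d
      simpa using this
    have h2 : ∀ᶠ t in atTop, d * (∫ z in Ioi 0,
        Real.exp (-(c*z)) * |b (z*t)/b t - z^α|) < ε :=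
      h1.eventually_lt_const hε
    filter_upwards [h2, eventually_ge_atTop (max T 1)] with t ht1 ht2
    intro u hu
    rw [Real.dist_eq, abs_sub_comm]
    exact lt_of_le_of_lt (hkey c d hc hcd.le t ht2 u hu) ht1
end
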